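/- arXiv:1512.05565 — 15 statements merged into one kernel-verified Lean document; each statement's English description precedes it below -/
import Mathlib

section
/- For every integer n ≥ 1, every red/blue coloring of the Boolean lattice Q_{n²+2n} contains a monochromatic copy of Q_n. Consequently R(Q_n, Q_n) ≤ n² + 2n. -/
/-- `f` is an embedding of the Boolean lattice `Q_n` into `Q_N`:
`A ⊆ B` iff `f A ⊆ f B` (this forces injectivity). -/
def IsCubeEmb {n N : ℕ} (f : Finset (Fin n) → Finset (Fin N)) : Prop :=
  ∀ A B : Finset (Fin n), A ⊆ B ↔ f A ⊆ f B

/-- Every red/blue coloring of `Q_N` (red = `true`, blue = `false`) contains a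
red copy of `Q_n` or a blue copy of `Q_m`. -/
def CubeRamseyProp (n m N : ℕ) : Prop :=
  ∀ c : Finset (Fin N) → Bool,
    (∃ f : Finset (Fin n) → Finset (Fin N), IsCubeEmb f ∧ ∀ A, c (f A) = true) ∨
    (∃ g : Finset (Fin m) → Finset (Fin N), IsCubeEmb g ∧ ∀ A, c (g A) = false)

/-- The poset Ramsey number `R(Q_n, Q_m)`. -/
noncomputable def posetRamsey (n m : ℕ) : ℕ := sInf {N | CubeRamseyProp n m N}


namespace AW

def efun (n : ℕ) (x : Fin n) : Fin (n^2+2*n) :=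
  ⟨x.val, by have := x.isLt; nlinarith⟩

def emb (n : ℕ) (A : Finset (Fin n)) : Finset (Fin (n^2+2*n)) := A.image (efun n)

def yfun (n k : ℕ) (x : Fin n) : Fin (n^2+2*n) :=
  ⟨n + min k n * n + x.val, by
    have h1 := x.isLt; have h2 := Nat.min_le_right k n; nlinarith⟩

def ymap (n k : ℕ) (T : Finset (Fin n)) : Finset (Fin (n^2+2*n)) := T.image (yfun n k)

open Classical in
noncomputable def tail (n : ℕ) (c : Finset (Fin (n^2+2*n)) → Bool) (A : Finset (Fin n)) :
    Finset (Fin (n^2+2*n)) :=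
  (A.powerset.erase A).attach.sup (fun B => tail n c B.1) ∪
    (if h : ∃ t, t ⊆ ymap n A.card Finset.univ ∧
        c (emb n A ∪ (A.powerset.erase A).attach.sup (fun B => tail n c B.1) ∪ t) = true
     then h.choose else ∅)
termination_by A.card
decreasing_by
  all_goals
    have hB := B.2
    simp only [Finset.mem_erase, Finset.mem_powerset] at hB
    exact Finset.card_lt_card (hB.2.ssubset_of_ne hB.1)

noncomputable def Vtail (n : ℕ) (c : Finset (Fin (n^2+2*n)) → Bool) (A : Finset (Fin n)) :
    Finset (Fin (n^2+2*n)) :=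
  (A.powerset.erase A).attach.sup (fun B => tail n c B.1)

def P (n : ℕ) (c : Finset (Fin (n^2+2*n)) → Bool) (A : Finset (Fin n)) : Prop :=
  ∃ t, t ⊆ ymap n A.card Finset.univ ∧ c (emb n A ∪ Vtail n c A ∪ t) = true

open Classical in
lemma tail_eq (n : ℕ) (c : Finset (Fin (n^2+2*n)) → Bool) (A : Finset (Fin n)) :
    tail n c A = Vtail n c A ∪ (if h : P n c A then h.choose else ∅) := by
  rw [tail]; congr

variable {n : ℕ} {c : Finset (Fin (n^2+2*n)) → Bool}

lemma tail_bound : ∀ (A : Finset (Fin n)), ∀ x ∈ tail n c A,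
    n ≤ x.1 ∧ x.1 < n + (A.card+1)*n := by
  intro A
  induction A using Finset.strongInduction with
  | _ A ih =>
    intro x hx
    rw [tail_eq] at hx
    rcases Finset.mem_union.mp hx with h | h
    · rcases Finset.mem_sup.mp h with ⟨B, -, hxB⟩
      have hB := B.2
      simp only [Finset.mem_erase, Finset.mem_powerset] at hB
      have hss : B.1 ⊂ A := hB.2.ssubset_of_ne hB.1
      have hb := ih B.1 hss x hxB
      have hcard : B.1.card < A.card := Finset.card_lt_card hss
      refine ⟨hb.1, lt_of_lt_of_le hb.2 ?_⟩
      exact Nat.add_le_add_left (Nat.mul_le_mul_right _ (by omega)) _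
    · split at h
      · next hP =>
        have hx2 := hP.choose_spec.1 h
        simp only [ymap, Finset.mem_image] at hx2
        obtain ⟨y, -, rfl⟩ := hx2
        simp only [yfun]
        have h1 := y.isLt
        have h2 := Nat.min_le_left A.card n
        refine ⟨by omega, ?_⟩
        have h3 : min A.card n * n ≤ A.card * n := Nat.mul_le_mul_right _ h2
        show n + min A.card n * n + y.1 < n + (A.card + 1) * n
        nlinarith
      · simp at h

lemma Vtail_bound {A : Finset (Fin n)} : ∀ x ∈ Vtail n c A,
    n ≤ x.1 ∧ x.1 < n + A.card * n := by
  intro x hx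
  rcases Finset.mem_sup.mp hx with ⟨B, -, hxB⟩
  have hB := B.2
  simp only [Finset.mem_erase, Finset.mem_powerset] at hB
  have hss : B.1 ⊂ A := hB.2.ssubset_of_ne hB.1
  have hb := tail_bound B.1 x hxB
  have hcard : B.1.card < A.card := Finset.card_lt_card hss
  refine ⟨hb.1, lt_of_lt_of_le hb.2 ?_⟩
  exact Nat.add_le_add_left (Nat.mul_le_mul_right _ (by omega)) _

lemma le_Vtail {A B : Finset (Fin n)} (hss : B ⊂ A) : tail n c B ⊆ Vtail n c A := by
  have hmem : B ∈ A.powerset.erase A := by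
    simp [Finset.mem_erase, Finset.mem_powerset, hss.subset, hss.ne]
  exact Finset.le_sup (f := fun (B' : {x // x ∈ A.powerset.erase A}) => tail n c B'.1)
    (Finset.mem_attach _ ⟨B, hmem⟩)

lemma tail_mono {A B : Finset (Fin n)} (h : B ⊆ A) : tail n c B ⊆ tail n c A := by
  rcases eq_or_ne B A with rfl | hne
  · exact subset_rfl
  · refine (le_Vtail (h.ssubset_of_ne hne)).trans ?_
    rw [tail_eq]; exact Finset.subset_union_left

lemma efun_lt (x : Fin n) : (efun n x).1 < n := x.isLt

lemma red_case (hall : ∀ A : Finset (Fin n), P n c A) :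
    ∃ f : Finset (Fin n) → Finset (Fin (n^2+2*n)), IsCubeEmb f ∧ ∀ A, c (f A) = true := by
  classical
  refine ⟨fun A => emb n A ∪ tail n c A, ?_, ?_⟩
  · intro A B
    constructor
    · intro h
      exact Finset.union_subset_union (Finset.image_subset_image h) (tail_mono h)
    · intro h x hx
      have hm : efun n x ∈ emb n A := Finset.mem_image_of_mem _ hx
      have h2 := h (Finset.mem_union_left _ hm)
      rcases Finset.mem_union.mp h2 with h3 | h3
      · simp only [emb, Finset.mem_image] at h3
        obtain ⟨y, hy, hxy⟩ := h3
        have : y = x := by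
          have := congrArg Fin.val hxy
          simp only [efun] at this
          exact Fin.ext this
        rwa [this] at hy
      · have := (tail_bound B _ h3).1
        have := efun_lt x
        omega
  · intro A
    have hP := hall A
    show c (emb n A ∪ tail n c A) = true
    rw [tail_eq, dif_pos hP, ← Finset.union_assoc]
    exact hP.choose_spec.2

lemma blue_case {A : Finset (Fin n)} (hA : ¬ P n c A) :
    ∃ g : Finset (Fin n) → Finset (Fin (n^2+2*n)), IsCubeEmb g ∧ ∀ T, c (g T) = false := by
  have hk : A.card ≤ n := by
    have := Finset.card_le_univ A
    simpa using this
  have hmin : min A.card n = A.card := min_eq_left hk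
  refine ⟨fun T => emb n A ∪ Vtail n c A ∪ ymap n A.card T, ?_, ?_⟩
  · intro T T'
    constructor
    · intro h
      exact Finset.union_subset_union subset_rfl (Finset.image_subset_image h)
    · intro h x hx
      have hm : yfun n A.card x ∈ ymap n A.card T := Finset.mem_image_of_mem _ hx
      have h2 := h (Finset.mem_union_right _ hm)
      have hval : (yfun n A.card x).1 = n + A.card * n + x.1 := by
        simp [yfun, hmin]
      rcases Finset.mem_union.mp h2 with h3 | h3
      · rcases Finset.mem_union.mp h3 with h4 | h4
        · simp only [emb, Finset.mem_image] at h4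
          obtain ⟨y, -, hxy⟩ := h4
          have := congrArg Fin.val hxy
          simp only [efun] at this
          have := y.isLt
          omega
        · have := (Vtail_bound _ h4).2
          omega
      · simp only [ymap, Finset.mem_image] at h3
        obtain ⟨y, hy, hxy⟩ := h3
        have hv := congrArg Fin.val hxy
        simp only [yfun] at hv
        have : y = x := Fin.ext (by omega)
        rwa [this] at hy
  · intro T
    rw [P] at hA
    push_neg at hA
    have := hA (ymap n A.card T) (Finset.image_subset_image (Finset.subset_univ T))
    simpa using this

lemma ramsey (n : ℕ) : CubeRamseyProp n n (n^2+2*n) := by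
  intro c
  by_cases hall : ∀ A : Finset (Fin n), P n c A
  · exact Or.inl (red_case hall)
  · push_neg at hall
    obtain ⟨A, hA⟩ := hall
    exact Or.inr (blue_case hA)

end AW

/-- For every `n ≥ 1`, every red/blue coloring of `Q_{n²+2n}` has a
monochromatic copy of `Q_n`; consequently `R(Q_n, Q_n) ≤ n² + 2n`. -/
theorem upper_bound_RQnQn (n : ℕ) (hn : 1 ≤ n) :
    (∀ c : Finset (Fin (n ^ 2 + 2 * n)) → Bool,
      ∃ (col : Bool) (f : Finset (Fin n) → Finset (Fin (n ^ 2 + 2 * n))),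
        IsCubeEmb f ∧ ∀ A, c (f A) = col) ∧
    posetRamsey n n ≤ n ^ 2 + 2 * n := by
  constructor
  · intro c
    rcases AW.ramsey n c with ⟨f, hf, h⟩ | ⟨g, hg, h⟩
    · exact ⟨true, f, hf, h⟩
    · exact ⟨false, g, hg, h⟩
  · exact Nat.sInf_le (AW.ramsey n)
end

section
/- For every integer n ≥ 1: (a) every red/blue coloring of the Boolean lattice Q_{n+1} contains either a red copy of Q_1 (that is, two distinct red sets one contained in the other) or a blue copy of Q_n; (b) there exists a red/blue coloring of Q_n containing neither a red copy of Q_1 nor a blue copy of Q_n. Hence R(Q_1, Q_n) = n + 1. -/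
lemma fin1_cases (A : Finset (Fin 1)) : A = ∅ ∨ A = {0} := by
  rcases A.eq_empty_or_nonempty with h | ⟨x, hx⟩
  · exact Or.inl h
  · right
    have h0 : (0 : Fin 1) ∈ A := by simpa [Fin.eq_zero x] using hx
    ext y; simp [Fin.eq_zero y, h0]

/-- Two distinct nested sets give a copy of `Q_1`. -/
lemma pair_emb {N : ℕ} (X Y : Finset (Fin N)) (hXY : X ⊆ Y) (hne : X ≠ Y) :
    IsCubeEmb (fun A : Finset (Fin 1) => if A = ∅ then X else Y) := by
  intro A B
  have hYX : ¬ Y ⊆ X := fun h => hne (subset_antisymm hXY h)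
  have h01 : ({0} : Finset (Fin 1)) ≠ ∅ := by simp
  rcases fin1_cases A with rfl | rfl <;> rcases fin1_cases B with rfl | rfl <;>
      simp only [if_pos rfl, if_neg h01]
  · simp
  · simpa using hXY
  · constructor
    · intro h; simpa using h
    · intro h; exact absurd h hYX
  · simp

lemma comp_emb {n N M : ℕ} {f : Finset (Fin n) → Finset (Fin N)}
    {g : Finset (Fin N) → Finset (Fin M)} (hf : IsCubeEmb f) (hg : IsCubeEmb g) :
    IsCubeEmb (fun A => g (f A)) :=
  fun A B => (hf A B).trans (hg _ _)

lemma cast_emb {N N' : ℕ} (h : N ≤ N') :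
    IsCubeEmb (fun A : Finset (Fin N) => A.map (Fin.castLEEmb h)) :=
  fun A B => Finset.map_subset_map.symm

lemma cubeRamsey_mono {n m N N' : ℕ} (h : N ≤ N') (hr : CubeRamseyProp n m N) :
    CubeRamseyProp n m N' := by
  intro c
  rcases hr (fun A => c (A.map (Fin.castLEEmb h))) with ⟨f, hf, hc⟩ | ⟨g, hg, hc⟩
  · exact Or.inl ⟨_, comp_emb hf (cast_emb h), hc⟩
  · exact Or.inr ⟨_, comp_emb hg (cast_emb h), hc⟩

/-- Part (a): the Ramsey property at `N = n+1`. -/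
lemma part_a (n : ℕ) : CubeRamseyProp 1 n (n + 1) := by
  classical
  intro c
  by_cases hred : ∃ X Y : Finset (Fin (n + 1)), X ⊆ Y ∧ X ≠ Y ∧ c X = true ∧ c Y = true
  · obtain ⟨X, Y, hXY, hne, hX, hY⟩ := hred
    refine Or.inl ⟨fun A => if A = ∅ then X else Y, pair_emb X Y hXY hne, fun A => ?_⟩
    by_cases hA : A = ∅ <;> simp [hA, hX, hY]
  · push_neg at hred
    set ι : Finset (Fin n) → Finset (Fin (n + 1)) :=
      fun A => A.map (Fin.castLEEmb n.le_succ) with hι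
    have hlast : ∀ A : Finset (Fin n), Fin.last n ∉ ι A := by
      intro A hmem
      rw [hι, Finset.mem_map] at hmem
      obtain ⟨a, _, ha⟩ := hmem
      have : (a : ℕ) = n := by
        simpa [Fin.castLEEmb, Fin.castLE, Fin.ext_iff, Fin.last] using ha
      omega
    have hback : ∀ A B : Finset (Fin n), ι A ⊆ insert (Fin.last n) (ι B) → A ⊆ B := by
      intro A B hsub a ha
      have h1 : Fin.castLEEmb n.le_succ a ∈ insert (Fin.last n) (ι B) :=
        hsub (Finset.mem_map_of_mem _ ha)
      rcases Finset.mem_insert.mp h1 with h2 | h2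
      · exfalso
        apply hlast A
        rw [← h2]
        exact Finset.mem_map_of_mem _ ha
      · rw [hι] at h2
        exact (Finset.mem_map' _).mp h2
    set P : Finset (Fin n) → Prop := fun A => ∃ A' ⊆ A, c (ι A') = true with hP
    set g : Finset (Fin n) → Finset (Fin (n + 1)) :=
      fun A => if P A then insert (Fin.last n) (ι A) else ι A with hg
    have hιg : ∀ A, ι A ⊆ g A := by
      intro A; rw [hg]; dsimp only
      split
      · exact Finset.subset_insert _ _
      · exact subset_rfl
    have hgι : ∀ A, g A ⊆ insert (Fin.last n) (ι A) := by
      intro A; rw [hg]; dsimp only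
      split
      · exact subset_rfl
      · exact Finset.subset_insert _ _
    refine Or.inr ⟨g, ?_, ?_⟩
    · intro A B
      constructor
      · intro hAB
        have hmap : ι A ⊆ ι B := Finset.map_subset_map.mpr hAB
        rw [hg]; dsimp only
        by_cases hPA : P A
        · have hPB : P B := by
            obtain ⟨A', hA', hcA'⟩ := hPA
            exact ⟨A', hA'.trans hAB, hcA'⟩
          simp only [if_pos hPA, if_pos hPB]
          exact Finset.insert_subset_insert _ hmap
        · simp only [if_neg hPA]
          exact hmap.trans (hιg B)
      · intro hsub
        exact hback A B (((hιg A).trans hsub).trans (hgι B))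
    · intro A
      rw [hg]; dsimp only
      by_cases hPA : P A
      · rw [if_pos hPA]
        obtain ⟨A', hA', hcA'⟩ := hPA
        by_contra hc
        rw [Bool.not_eq_false] at hc
        refine hred (ι A') (insert (Fin.last n) (ι A)) ?_ ?_ hcA' hc
        · exact (Finset.map_subset_map.mpr hA').trans (Finset.subset_insert _ _)
        · intro heq
          exact hlast A' (heq ▸ Finset.mem_insert_self _ _)
      · rw [if_neg hPA]
        by_contra hc
        rw [Bool.not_eq_false] at hc
        exact hPA ⟨A, subset_rfl, hc⟩

/-- Part (b): a good coloring of `Q_n`. -/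
lemma part_b (n : ℕ) :
    ∃ c : Finset (Fin n) → Bool,
      (¬ ∃ f : Finset (Fin 1) → Finset (Fin n), IsCubeEmb f ∧ ∀ A, c (f A) = true) ∧
      (¬ ∃ g : Finset (Fin n) → Finset (Fin n), IsCubeEmb g ∧ ∀ A, c (g A) = false) := by
  classical
  refine ⟨fun X => decide (X = ∅), ?_, ?_⟩
  · rintro ⟨f, hf, hc⟩
    have h0 : f ∅ = ∅ := of_decide_eq_true (hc ∅)
    have h1 : f {0} = ∅ := of_decide_eq_true (hc {0})
    have : ({0} : Finset (Fin 1)) ⊆ ∅ := (hf {0} ∅).mpr (by rw [h0, h1])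
    simpa using this
  · rintro ⟨g, hg, hc⟩
    have hinj : Function.Injective g := by
      intro A B hAB
      exact subset_antisymm ((hg A B).mpr hAB.le) ((hg B A).mpr hAB.ge)
    have hsurj : Function.Surjective g := Finite.surjective_of_injective hinj
    obtain ⟨A, hA⟩ := hsurj ∅
    have := hc A
    simp [hA] at this

/-- (a) Every red/blue coloring of `Q_{n+1}` contains a red copy of `Q_1` or a
blue copy of `Q_n`; (b) some red/blue coloring of `Q_n` contains neither.
Hence `R(Q_1, Q_n) = n + 1`. -/
theorem RQ1Qn (n : ℕ) (hn : 1 ≤ n) :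
    (∀ c : Finset (Fin (n + 1)) → Bool,
      (∃ f : Finset (Fin 1) → Finset (Fin (n + 1)), IsCubeEmb f ∧ ∀ A, c (f A) = true) ∨
      (∃ g : Finset (Fin n) → Finset (Fin (n + 1)), IsCubeEmb g ∧ ∀ A, c (g A) = false)) ∧
    (∃ c : Finset (Fin n) → Bool,
      (¬ ∃ f : Finset (Fin 1) → Finset (Fin n), IsCubeEmb f ∧ ∀ A, c (f A) = true) ∧
      (¬ ∃ g : Finset (Fin n) → Finset (Fin n), IsCubeEmb g ∧ ∀ A, c (g A) = false)) ∧
    posetRamsey 1 n = n + 1 := by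
  refine ⟨part_a n, part_b n, ?_⟩
  have hmem : n + 1 ∈ {N | CubeRamseyProp 1 n N} := part_a n
  have hlb : ∀ N ∈ {N | CubeRamseyProp 1 n N}, n + 1 ≤ N := by
    intro N hN
    by_contra hlt
    push_neg at hlt
    have h' : CubeRamseyProp 1 n n := cubeRamsey_mono (by omega) hN
    obtain ⟨c, hc1, hc2⟩ := part_b n
    rcases h' c with h | h
    · exact hc1 h
    · exact hc2 h
  exact le_antisymm (Nat.sInf_le hmem) (le_csInf ⟨_, hmem⟩ hlb)
end

section
/- For every integer n ≥ 1, every red/blue coloring of the Boolean lattice Q_{2n+2} contains a red copy of Q_2 or a blue copy of Q_n. Consequently R(Q_2, Q_n) ≤ 2n + 2. -/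
lemma fin2_subset_iff (A B : Finset (Fin 2)) :
    A ⊆ B ↔ (((0:Fin 2) ∈ A → (0:Fin 2) ∈ B) ∧ ((1:Fin 2) ∈ A → (1:Fin 2) ∈ B)) := by
  constructor
  · exact fun h => ⟨fun h0 => h h0, fun h1 => h h1⟩
  · rintro ⟨h0, h1⟩ a ha
    fin_cases a
    · exact h0 ha
    · exact h1 ha

lemma mkQ2 {N : ℕ} (c : Finset (Fin N) → Bool) (p u v t : Finset (Fin N))
    (hpu : p ⊆ u) (hpv : p ⊆ v) (hut : u ⊆ t) (hvt : v ⊆ t)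
    (huv : ¬ u ⊆ v) (hvu : ¬ v ⊆ u)
    (hp : c p = true) (hu : c u = true) (hv : c v = true) (ht : c t = true) :
    ∃ f : Finset (Fin 2) → Finset (Fin N), IsCubeEmb f ∧ ∀ A, c (f A) = true := by
  have hpt : p ⊆ t := hpu.trans hut
  have hup : ¬ u ⊆ p := fun h => huv (h.trans hpv)
  have hvp : ¬ v ⊆ p := fun h => hvu (h.trans hpu)
  have htu : ¬ t ⊆ u := fun h => hvu (hvt.trans h)
  have htv : ¬ t ⊆ v := fun h => huv (hut.trans h)
  have htp : ¬ t ⊆ p := fun h => htu (h.trans hpu)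
  refine ⟨fun A => if (0:Fin 2) ∈ A then (if (1:Fin 2) ∈ A then t else u)
      else (if (1:Fin 2) ∈ A then v else p), ?_, ?_⟩
  · intro A B
    rw [fin2_subset_iff]
    by_cases h0A : (0:Fin 2) ∈ A <;> by_cases h1A : (1:Fin 2) ∈ A <;>
      by_cases h0B : (0:Fin 2) ∈ B <;> by_cases h1B : (1:Fin 2) ∈ B <;>
      simp [h0A, h1A, h0B, h1B, hpu, hpv, hut, hvt, hpt, huv, hvu, hup, hvp, htu, htv, htp]
  · intro A
    by_cases h0A : (0:Fin 2) ∈ A <;> by_cases h1A : (1:Fin 2) ∈ A <;>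
      simp [h0A, h1A, hp, hu, hv, ht]

lemma emb_of_selector {n N : ℕ} (e : Fin n → Fin N) (he : Function.Injective e)
    (φ : Finset (Fin n) → Finset (Fin N))
    (hmono : ∀ a b : Finset (Fin n), a ⊆ b → φ a ⊆ φ b)
    (hdisj : ∀ (b : Finset (Fin n)) (x : Fin n), e x ∉ φ b) :
    IsCubeEmb (fun a => a.image e ∪ φ a) := by
  intro A B
  constructor
  · intro h x hx
    rcases Finset.mem_union.mp hx with hx | hx
    · exact Finset.mem_union_left _ (Finset.image_subset_image h hx)
    · exact Finset.mem_union_right _ (hmono A B h hx)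
  · intro h a ha
    have h1 : e a ∈ A.image e ∪ φ A :=
      Finset.mem_union_left _ (Finset.mem_image_of_mem e ha)
    have h2 := h h1
    rcases Finset.mem_union.mp h2 with h2 | h2
    · rcases Finset.mem_image.mp h2 with ⟨b, hb, hba⟩
      rwa [← he hba]
    · exact absurd h2 (hdisj B a)

def Tpre (n i : ℕ) : Finset (Fin (2*n+2)) :=
  Finset.univ.filter (fun x => n ≤ (x:ℕ) ∧ (x:ℕ) < n + i)

lemma mem_Tpre (n i : ℕ) (x : Fin (2*n+2)) :
    x ∈ Tpre n i ↔ n ≤ (x:ℕ) ∧ (x:ℕ) < n + i := by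
  simp [Tpre]

lemma Tpre_mono (n : ℕ) {i j : ℕ} (h : i ≤ j) : Tpre n i ⊆ Tpre n j := by
  intro x hx
  rw [mem_Tpre] at *
  omega

def ChainCond (n : ℕ) (c : Finset (Fin (2*n+2)) → Bool) (a : Finset (Fin (2*n+2))) (k : ℕ) :
    Prop :=
  ∃ r : ℕ → Finset (Fin (2*n+2)),
    (∀ i, i < k → c (r i) = true) ∧ (∀ i, i + 1 < k → r i ⊂ r (i+1)) ∧
    (∀ i, i < k → r i ⊆ a ∪ Tpre n i)

lemma cc_zero (n : ℕ) (c : Finset (Fin (2*n+2)) → Bool) (a : Finset (Fin (2*n+2))) :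
    ChainCond n c a 0 :=
  ⟨fun _ => ∅, by intro i h; omega, by intro i h; omega, by intro i h; omega⟩

lemma cc_mono (n : ℕ) (c : Finset (Fin (2*n+2)) → Bool) (a b : Finset (Fin (2*n+2))) (k : ℕ)
    (hab : a ⊆ b) : ChainCond n c a k → ChainCond n c b k := by
  rintro ⟨r, h1, h2, h3⟩
  exact ⟨r, h1, h2, fun i hi => (h3 i hi).trans (Finset.union_subset_union_left hab)⟩

lemma cc_extend (n : ℕ) (c : Finset (Fin (2*n+2)) → Bool) (a : Finset (Fin (2*n+2)))
    (ha : ∀ x ∈ a, (x:ℕ) < n) (k : ℕ) (hk : k ≤ n + 2)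
    (hcc : ChainCond n c a k) (hred : c (a ∪ Tpre n k) = true) :
    ChainCond n c a (k+1) := by
  obtain ⟨r, h1, h2, h3⟩ := hcc
  refine ⟨fun i => if i < k then r i else a ∪ Tpre n k, ?_, ?_, ?_⟩
  · intro i hi
    by_cases hik : i < k
    · simpa [hik] using h1 i hik
    · simpa [hik] using hred
  · intro i hi
    have hik : i < k := by omega
    by_cases hik1 : i + 1 < k
    · simpa [hik, hik1] using h2 i hik1
    · have hie : i + 1 = k := by omega
      have hx : (n + i) < 2*n+2 := by omega
      have hval : ((⟨n+i, hx⟩ : Fin (2*n+2)) : ℕ) = n + i := rfl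
      have hxm : (⟨n+i, hx⟩ : Fin (2*n+2)) ∈ Tpre n k := by
        rw [mem_Tpre]
        refine ⟨by omega, by omega⟩
      have hsub : r i ⊆ a ∪ Tpre n i := h3 i hik
      have hgoal : r i ⊂ a ∪ Tpre n k := by
        rw [Finset.ssubset_def]
        constructor
        · exact hsub.trans (Finset.union_subset_union_right (Tpre_mono n (by omega)))
        · intro hcon
          have h5 : (⟨n+i, hx⟩ : Fin (2*n+2)) ∈ a ∪ Tpre n i :=
            hsub (hcon (Finset.mem_union_right _ hxm))
          rcases Finset.mem_union.mp h5 with h5 | h5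
          · have := ha _ h5
            omega
          · rw [mem_Tpre] at h5
            omega
      simpa [hik, hik1] using hgoal
  · intro i hi
    by_cases hik : i < k
    · simpa [hik] using h3 i hik
    · have hie : i = k := by omega
      subst hie
      simp [hik]


/-- Every red/blue coloring of `Q_{2n+2}` contains a red copy of `Q_2` or a
blue copy of `Q_n`; consequently `R(Q_2, Q_n) ≤ 2n + 2`. -/
theorem RQ2Qn_upper (n : ℕ) (hn : 1 ≤ n) :
    (∀ c : Finset (Fin (2 * n + 2)) → Bool,
      (∃ f : Finset (Fin 2) → Finset (Fin (2 * n + 2)), IsCubeEmb f ∧ ∀ A, c (f A) = true) ∨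
      (∃ g : Finset (Fin n) → Finset (Fin (2 * n + 2)), IsCubeEmb g ∧ ∀ A, c (g A) = false)) ∧
    posetRamsey 2 n ≤ 2 * n + 2 := by
  have main : ∀ c : Finset (Fin (2 * n + 2)) → Bool,
      (∃ f : Finset (Fin 2) → Finset (Fin (2 * n + 2)), IsCubeEmb f ∧ ∀ A, c (f A) = true) ∨
      (∃ g : Finset (Fin n) → Finset (Fin (2 * n + 2)), IsCubeEmb g ∧ ∀ A, c (g A) = false) := by
    intro c
    by_cases hch : ∃ r : ℕ → Finset (Fin (2 * n + 2)),
        (∀ i, i ≤ n + 2 → c (r i) = true) ∧ (∀ i, i < n + 2 → r i ⊂ r (i + 1))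
    · -- Case (ii): a long red chain exists
      obtain ⟨r, hr, hs⟩ := hch
      have hmono : ∀ j, j ≤ n + 2 → ∀ i, i ≤ j → r i ⊆ r j := by
        intro j
        induction j with
        | zero =>
          intro _ i hi
          have : i = 0 := by omega
          subst this
          exact Finset.Subset.refl _
        | succ j ih =>
          intro hj i hi
          rcases Nat.eq_or_lt_of_le hi with h | h
          · subst h; exact Finset.Subset.refl _
          · exact (ih (by omega) i (by omega)).trans (subset_of_ssubset (hs j (by omega)))
      have hcard : ∀ i, i ≤ n + 2 → (r 0).card + i ≤ (r i).card := by
        intro i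
        induction i with
        | zero => intro _; omega
        | succ i ih =>
          intro hi
          have h1 := ih (by omega)
          have h2 : (r i).card < (r (i+1)).card := Finset.card_lt_card (hs i (by omega))
          omega
      have hbt : r 0 ⊆ r (n+2) := hmono (n+2) le_rfl 0 (by omega)
      have hsd : n + 2 ≤ ((r (n+2)) \ (r 0)).card := by
        rw [Finset.card_sdiff_of_subset hbt]
        have := hcard (n+2) le_rfl
        omega
      obtain ⟨M, hMsub, hMcard⟩ := Finset.exists_subset_card_eq hsd
      obtain ⟨y, hy⟩ := Finset.card_pos.mp (show 0 < M.card by omega)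
      have h1 : (M.erase y).card = n + 1 := by rw [Finset.card_erase_of_mem hy, hMcard]; omega
      obtain ⟨z, hz⟩ := Finset.card_pos.mp (show 0 < (M.erase y).card by rw [h1]; omega)
      have hW : ((M.erase y).erase z).card = n := by rw [Finset.card_erase_of_mem hz, h1]; omega
      set W := (M.erase y).erase z with hWdef
      have hzy : z ≠ y := Finset.ne_of_mem_erase hz
      have hzM : z ∈ M := Finset.mem_of_mem_erase hz
      have hyW : y ∉ W := fun h => Finset.notMem_erase y M (Finset.mem_of_mem_erase h)
      have hzW : z ∉ W := Finset.notMem_erase z _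
      have hWM : W ⊆ M := (Finset.erase_subset _ _).trans (Finset.erase_subset _ _)
      have hMt : ∀ x, x ∈ M → x ∈ r (n+2) ∧ x ∉ r 0 := fun x hx => Finset.mem_sdiff.mp (hMsub hx)
      set e : Fin n → Fin (2*n+2) := fun i => ((W.orderIsoOfFin hW) i : Fin (2*n+2)) with hedef
      have he : Function.Injective e := fun i j hij =>
        (W.orderIsoOfFin hW).injective (Subtype.coe_injective hij)
      have heW : ∀ i, e i ∈ W := fun i => ((W.orderIsoOfFin hW) i).2
      have hg_top : ∀ (A : Finset (Fin n)) (w : Fin (2*n+2)), w ∈ M →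
          (A.image e ∪ (r 0 ∪ {w})) ⊆ r (n+2) := by
        intro A w hw x hx
        rcases Finset.mem_union.mp hx with hx | hx
        · obtain ⟨i, _, rfl⟩ := Finset.mem_image.mp hx
          exact (hMt _ (hWM (heW i))).1
        · rcases Finset.mem_union.mp hx with hx | hx
          · exact hbt hx
          · rw [Finset.mem_singleton.mp hx]; exact (hMt _ hw).1
      have hnotin : ∀ (A : Finset (Fin n)) (w v : Fin (2*n+2)), v ∈ M → v ∉ W → v ≠ w →
          v ∉ (A.image e ∪ (r 0 ∪ {w})) := by
        intro A w v hvM hvW hvw hmem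
        rcases Finset.mem_union.mp hmem with h | h
        · obtain ⟨i, _, hei⟩ := Finset.mem_image.mp h
          exact hvW (hei ▸ heW i)
        · rcases Finset.mem_union.mp h with h | h
          · exact (hMt v hvM).2 h
          · exact hvw (Finset.mem_singleton.mp h)
      have hdisj : ∀ (w : Fin (2*n+2)), w ∈ M → w ∉ W →
          ∀ (b : Finset (Fin n)) (x : Fin n), e x ∉ (r 0 ∪ {w}) := by
        intro w hwM hwW b x hx
        rcases Finset.mem_union.mp hx with h | h
        · exact (hMt _ (hWM (heW x))).2 h
        · exact hwW (Finset.mem_singleton.mp h ▸ heW x)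
      have hbot_sub : ∀ (A : Finset (Fin n)) (w : Fin (2*n+2)),
          r 0 ⊆ A.image e ∪ (r 0 ∪ {w}) :=
        fun A w x hx => Finset.mem_union_right _ (Finset.mem_union_left _ hx)
      by_cases hy0 : ∃ u, c u = true ∧ r 0 ⊆ u ∧ u ⊆ r (n + 2) ∧ y ∈ u ∧ z ∉ u
      · by_cases hred2 : ∃ A : Finset (Fin n), c (A.image e ∪ (r 0 ∪ {z})) = true
        · left
          obtain ⟨u0, hu0c, hu0b, hu0t, hyu0, hzu0⟩ := hy0
          obtain ⟨A, hA⟩ := hred2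
          refine mkQ2 c (r 0) u0 (A.image e ∪ (r 0 ∪ {z})) (r (n+2)) hu0b (hbot_sub A z)
            hu0t (hg_top A z hzM) ?_ ?_ (hr 0 (by omega)) hu0c hA (hr (n+2) le_rfl)
          · intro hcon
            exact hnotin A z y hy hyW (Ne.symm hzy) (hcon hyu0)
          · intro hcon
            exact hzu0 (hcon (Finset.mem_union_right _
              (Finset.mem_union_right _ (Finset.mem_singleton_self z))))
        · right
          refine ⟨fun A => A.image e ∪ (r 0 ∪ {z}),
            emb_of_selector e he _ (fun _ _ _ => Finset.Subset.refl _) (hdisj z hzM hzW), ?_⟩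
          intro A
          cases h : c (A.image e ∪ (r 0 ∪ {z})) with
          | false => rfl
          | true => exact absurd ⟨A, h⟩ hred2
      · right
        refine ⟨fun A => A.image e ∪ (r 0 ∪ {y}),
          emb_of_selector e he _ (fun _ _ _ => Finset.Subset.refl _) (hdisj y hy hyW), ?_⟩
        intro A
        cases h : c (A.image e ∪ (r 0 ∪ {y})) with
        | false => rfl
        | true =>
          exact absurd ⟨_, h, hbot_sub A y, hg_top A y hy,
            Finset.mem_union_right _ (Finset.mem_union_right _ (Finset.mem_singleton_self y)),
            hnotin A y z hzM hzW hzy⟩ hy0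
    · -- Case (i): no long red chain
      right
      classical
      set ι : Fin n → Fin (2*n+2) := fun i => ⟨(i : ℕ), by omega⟩ with hιdef
      have hι : Function.Injective ι := by
        intro i j h
        have h2 := congrArg Fin.val h
        exact Fin.ext h2
      have hιlt : ∀ (a : Finset (Fin n)) (x : Fin (2*n+2)), x ∈ a.image ι → (x : ℕ) < n := by
        intro a x hx
        obtain ⟨i, _, rfl⟩ := Finset.mem_image.mp hx
        exact i.isLt
      set K : Finset (Fin n) → ℕ :=
        fun a => Nat.findGreatest (ChainCond n c (a.image ι)) (n+2) with hKdef
      have hKspec : ∀ a, ChainCond n c (a.image ι) (K a) :=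
        fun a => Nat.findGreatest_spec (Nat.zero_le _) (cc_zero n c _)
      have hKle : ∀ a, K a ≤ n + 2 := fun a => Nat.findGreatest_le (n+2)
      have hKmono : ∀ a b : Finset (Fin n), a ⊆ b → K a ≤ K b := by
        intro a b hab
        exact Nat.le_findGreatest (hKle a)
          (cc_mono n c _ _ _ (Finset.image_subset_image hab) (hKspec a))
      have hφdisj : ∀ (b : Finset (Fin n)) (x : Fin n), ι x ∉ Tpre n (K b) := by
        intro b x hx
        rw [mem_Tpre] at hx
        have : (ι x : ℕ) = (x : ℕ) := rfl
        have := x.isLt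
        omega
      refine ⟨fun a => a.image ι ∪ Tpre n (K a),
        emb_of_selector ι hι _ (fun a b hab => Tpre_mono n (hKmono a b hab)) hφdisj, ?_⟩
      intro a
      cases h : c (a.image ι ∪ Tpre n (K a)) with
      | false => rfl
      | true =>
        exfalso
        have hext : ChainCond n c (a.image ι) (K a + 1) :=
          cc_extend n c _ (hιlt a) (K a) (hKle a) (hKspec a) h
        rcases Nat.lt_or_ge (K a) (n+2) with hlt | hge
        · have : K a + 1 ≤ K a := Nat.le_findGreatest (by omega) hext
          omega
        · have hKa : K a = n + 2 := le_antisymm (hKle a) hge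
          obtain ⟨r, hr1, hr2, _⟩ := hext
          exact hch ⟨r, fun i hi => hr1 i (by omega), fun i hi => hr2 i (by omega)⟩
  refine ⟨main, ?_⟩
  exact Nat.sInf_le main
end

section
/- For all integers n, m ≥ 1, every red/blue coloring of the Boolean lattice Q_{mn+n+m} contains a red copy of Q_n or a blue copy of Q_m. Consequently R(Q_n, Q_m) ≤ mn + n + m. -/
namespace RQnQmAux

open scoped Classical

/-- The "Y-part" of the ground set: `n+1` blocks, each of size `m`. -/
abbrev Yt (n m : ℕ) := Fin (n + 1) × Fin m

/-- The full ground set: `X` of size `n` plus the `Y`-part. -/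
abbrev Tt (n m : ℕ) := Fin n ⊕ Yt n m

/-- The `k`-th block of the `Y`-part. -/
def Yblk (n m k : ℕ) : Finset (Yt n m) :=
  Finset.univ.filter (fun p => (p.1 : ℕ) = k)

/-- Join an `X`-part and a `Y`-part into a subset of the ground set. -/
def J {n m : ℕ} (A : Finset (Fin n)) (S : Finset (Yt n m)) : Finset (Tt n m) :=
  A.map .inl ∪ S.map .inr

/-- The greedy success predicate at `A` with current union `U`: some set `S`
between `U` and `U ∪ Yblk |A|` makes `J A S` red. -/
def Pred {n m : ℕ} (c : Finset (Tt n m) → Bool) (A : Finset (Fin n))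
    (U : Finset (Yt n m)) : Prop :=
  ∃ S, U ⊆ S ∧ S ⊆ U ∪ Yblk n m A.card ∧ c (J A S) = true

/-- The greedy choice of `Y`-part for each `A ⊆ X`. -/
noncomputable def fAux {n m : ℕ} (c : Finset (Tt n m) → Bool) :
    Finset (Fin n) → Finset (Yt n m) :=
  Finset.strongInduction (fun A ih =>
    let U := A.ssubsets.attach.sup (fun B => ih B.1 (Finset.mem_ssubsets.mp B.2))
    if h : Pred c A U then h.choose else U ∪ Yblk n m A.card)

/-- Union of the greedy choices over all strict subsets of `A`. -/
noncomputable def Uof {n m : ℕ} (c : Finset (Tt n m) → Bool) (A : Finset (Fin n)) :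
    Finset (Yt n m) :=
  A.ssubsets.sup (fAux c)

lemma fAux_eq {n m : ℕ} (c : Finset (Tt n m) → Bool) (A : Finset (Fin n)) :
    fAux c A = if h : Pred c A (Uof c A) then h.choose
               else Uof c A ∪ Yblk n m A.card := by
  rw [fAux, Finset.strongInduction_eq]
  simp only [Finset.sup_attach]
  rfl

lemma fAux_subset {n m : ℕ} (c : Finset (Tt n m) → Bool) (A : Finset (Fin n)) :
    fAux c A ⊆ Uof c A ∪ Yblk n m A.card := by
  rw [fAux_eq]
  split
  · next h => exact h.choose_spec.2.1
  · exact subset_rfl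

lemma Uof_subset_fAux {n m : ℕ} (c : Finset (Tt n m) → Bool) (A : Finset (Fin n)) :
    Uof c A ⊆ fAux c A := by
  rw [fAux_eq]
  split
  · next h => exact h.choose_spec.1
  · exact Finset.subset_union_left

lemma fAux_mono {n m : ℕ} (c : Finset (Tt n m) → Bool) {A B : Finset (Fin n)}
    (h : A ⊂ B) : fAux c A ⊆ fAux c B :=
  (Finset.le_sup (Finset.mem_ssubsets.mpr h)).trans (Uof_subset_fAux c B)

lemma fst_le_of_mem_fAux {n m : ℕ} (c : Finset (Tt n m) → Bool) :
    ∀ A : Finset (Fin n), ∀ x ∈ fAux c A, (x.1 : ℕ) ≤ A.card := by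
  intro A
  induction A using Finset.strongInduction with
  | _ A ih =>
    intro x hx
    have hx' : x ∈ Uof c A ∪ Yblk n m A.card := fAux_subset c A hx
    rcases Finset.mem_union.mp hx' with h1 | h2
    · obtain ⟨B, hB, hxB⟩ := Finset.mem_sup.mp h1
      have hBA := Finset.mem_ssubsets.mp hB
      have h1 := ih B hBA x hxB
      have h2 : B.card < A.card := Finset.card_lt_card hBA
      omega
    · have : (x.1 : ℕ) = A.card := by
        simpa [Yblk] using h2
      omega

lemma fst_lt_of_mem_Uof {n m : ℕ} (c : Finset (Tt n m) → Bool) (A : Finset (Fin n))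
    {x : Yt n m} (hx : x ∈ Uof c A) : (x.1 : ℕ) < A.card := by
  obtain ⟨B, hB, hxB⟩ := Finset.mem_sup.mp hx
  have hBA := Finset.mem_ssubsets.mp hB
  have h1 := fst_le_of_mem_fAux c B x hxB
  have h2 : B.card < A.card := Finset.card_lt_card hBA
  omega

lemma inl_mem_J {n m : ℕ} {A : Finset (Fin n)} {S : Finset (Yt n m)} {a : Fin n} :
    (Sum.inl a : Tt n m) ∈ J A S ↔ a ∈ A := by
  simp [J]

lemma inr_mem_J {n m : ℕ} {A : Finset (Fin n)} {S : Finset (Yt n m)} {y : Yt n m} :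
    (Sum.inr y : Tt n m) ∈ J A S ↔ y ∈ S := by
  simp [J]

lemma J_subset_J {n m : ℕ} {A B : Finset (Fin n)} {S T : Finset (Yt n m)}
    (hAB : A ⊆ B) (hST : S ⊆ T) : (J A S : Finset (Tt n m)) ⊆ J B T :=
  Finset.union_subset_union (Finset.map_subset_map.mpr hAB) (Finset.map_subset_map.mpr hST)

/-- The main combinatorial lemma, on the structured ground type. -/
lemma main {n m : ℕ} (c : Finset (Tt n m) → Bool) :
    (∃ f : Finset (Fin n) → Finset (Tt n m),
        (∀ A B, A ⊆ B ↔ f A ⊆ f B) ∧ ∀ A, c (f A) = true) ∨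
    (∃ g : Finset (Fin m) → Finset (Tt n m),
        (∀ A B, A ⊆ B ↔ g A ⊆ g B) ∧ ∀ A, c (g A) = false) := by
  by_cases H : ∀ A : Finset (Fin n), Pred c A (Uof c A)
  · -- red copy of Q_n
    left
    refine ⟨fun A => J A (fAux c A), ?_, ?_⟩
    · intro A B
      constructor
      · intro hAB
        rcases hAB.ssubset_or_eq with h | h
        · exact J_subset_J hAB (fAux_mono c h)
        · subst h; exact subset_rfl
      · intro hJ a ha
        have : (Sum.inl a : Tt n m) ∈ J B (fAux c B) := hJ (inl_mem_J.mpr ha)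
        exact inl_mem_J.mp this
    · intro A
      show c (J A (fAux c A)) = true
      have hE := fAux_eq c A
      rw [dif_pos (H A)] at hE
      rw [hE]
      exact (H A).choose_spec.2.2
  · -- blue copy of Q_m
    right
    push_neg at H
    obtain ⟨A, hA⟩ := H
    rw [Pred] at hA
    push_neg at hA
    have hk : A.card < n + 1 := by
      have := Finset.card_le_univ A
      simp only [Finset.card_univ, Fintype.card_fin] at this
      omega
    let ι : Fin m ↪ Yt n m :=
      ⟨fun j => (⟨A.card, hk⟩, j), fun a b h => by simpa using congrArg Prod.snd h⟩
    have hιblk : ∀ S : Finset (Fin m), S.map ι ⊆ Yblk n m A.card := by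
      intro S y hy
      obtain ⟨j, _, rfl⟩ := Finset.mem_map.mp hy
      simp [Yblk, ι]
      exact rfl
    refine ⟨fun S => J A (Uof c A ∪ S.map ι), ?_, ?_⟩
    · intro S T
      constructor
      · intro hST
        exact J_subset_J subset_rfl
          (Finset.union_subset_union subset_rfl (Finset.map_subset_map.mpr hST))
      · intro hJ j hj
        have h1 : (Sum.inr (ι j) : Tt n m) ∈ J A (Uof c A ∪ S.map ι) :=
          inr_mem_J.mpr (Finset.mem_union_right _ (Finset.mem_map_of_mem ι hj))
        have h2 : ι j ∈ Uof c A ∪ T.map ι := inr_mem_J.mp (hJ h1)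
        rcases Finset.mem_union.mp h2 with h3 | h3
        · have := fst_lt_of_mem_Uof c A h3
          simp [ι] at this
          exact (lt_irrefl A.card this).elim
        · exact (Finset.mem_map' ι).mp h3
    · intro S
      have h1 : Uof c A ⊆ Uof c A ∪ S.map ι := Finset.subset_union_left
      have h2 : Uof c A ∪ S.map ι ⊆ Uof c A ∪ Yblk n m A.card :=
        Finset.union_subset_union subset_rfl (hιblk S)
      have := hA _ h1 h2
      simpa using this

end RQnQmAux

open RQnQmAux in
/-- Every red/blue coloring of `Q_{mn+n+m}` contains a red copy of `Q_n` or a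
blue copy of `Q_m`; consequently `R(Q_n, Q_m) ≤ mn + n + m`. -/
theorem RQnQm_upper (n m : ℕ) (hn : 1 ≤ n) (hm : 1 ≤ m) :
    (∀ c : Finset (Fin (m * n + n + m)) → Bool,
      (∃ f : Finset (Fin n) → Finset (Fin (m * n + n + m)), IsCubeEmb f ∧ ∀ A, c (f A) = true) ∨
      (∃ g : Finset (Fin m) → Finset (Fin (m * n + n + m)), IsCubeEmb g ∧ ∀ A, c (g A) = false)) ∧
    posetRamsey n m ≤ m * n + n + m := by
  have hcard : Fintype.card (Tt n m) = m * n + n + m := by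
    simp [Tt, Yt]
    ring
  have key : ∀ c : Finset (Fin (m * n + n + m)) → Bool,
      (∃ f : Finset (Fin n) → Finset (Fin (m * n + n + m)), IsCubeEmb f ∧ ∀ A, c (f A) = true) ∨
      (∃ g : Finset (Fin m) → Finset (Fin (m * n + n + m)), IsCubeEmb g ∧ ∀ A, c (g A) = false) := by
    intro c
    let e : Tt n m ≃ Fin (m * n + n + m) := Fintype.equivFinOfCardEq hcard
    let c' : Finset (Tt n m) → Bool := fun S => c (S.map e.toEmbedding)
    rcases RQnQmAux.main c' with ⟨f, hf, hfc⟩ | ⟨g, hg, hgc⟩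
    · left
      refine ⟨fun A => (f A).map e.toEmbedding, ?_, hfc⟩
      intro A B
      exact (hf A B).trans Finset.map_subset_map.symm
    · right
      refine ⟨fun A => (g A).map e.toEmbedding, ?_, hgc⟩
      intro A B
      exact (hg A B).trans Finset.map_subset_map.symm
  exact ⟨key, Nat.sInf_le key⟩
end

section
/- Every red/blue coloring of the Boolean lattice Q_4 contains a monochromatic copy of Q_2, and there exists a red/blue coloring of Q_3 with no monochromatic copy of Q_2. Hence R(Q_2, Q_2) = 4. -/
set_option linter.unusedSectionVars false
set_option linter.unusedVariables false

def Diamond (c : Finset (Fin 4) → Bool) (col : Bool) : Prop :=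
  ∃ W X Y Z : Finset (Fin 4), W ⊆ X ∧ W ⊆ Y ∧ X ⊆ Z ∧ Y ⊆ Z ∧ ¬ X ⊆ Y ∧ ¬ Y ⊆ X ∧
    c W = col ∧ c X = col ∧ c Y = col ∧ c Z = col

lemma not_ss {α : Type*} {S T : Finset α} {x : α} (h1 : x ∈ S) (h2 : x ∉ T) : ¬ S ⊆ T :=
  fun h => h2 (h h1)

lemma subset_fin2 (A B : Finset (Fin 2)) :
    A ⊆ B ↔ ((0 ∈ A → 0 ∈ B) ∧ (1 ∈ A → 1 ∈ B)) := by
  constructor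
  · intro h; exact ⟨fun h0 => h h0, fun h1 => h h1⟩
  · rintro ⟨h0, h1⟩ x hx
    fin_cases x
    · exact h0 hx
    · exact h1 hx

lemma diamond_emb {c : Finset (Fin 4) → Bool} {col : Bool} (h : Diamond c col) :
    ∃ f : Finset (Fin 2) → Finset (Fin 4), IsCubeEmb f ∧ ∀ A, c (f A) = col := by
  obtain ⟨W, X, Y, Z, hWX, hWY, hXZ, hYZ, hXY, hYX, cW, cX, cY, cZ⟩ := h
  have hXW : ¬ X ⊆ W := fun h => hXY (h.trans hWY)
  have hYW : ¬ Y ⊆ W := fun h => hYX (h.trans hWX)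
  have hZX : ¬ Z ⊆ X := fun h => hYX (hYZ.trans h)
  have hZY : ¬ Z ⊆ Y := fun h => hXY (hXZ.trans h)
  have hZW : ¬ Z ⊆ W := fun h => hZX (h.trans hWX)
  refine ⟨fun A => if 0 ∈ A then (if 1 ∈ A then Z else X) else (if 1 ∈ A then Y else W),
    ?_, ?_⟩
  · intro A B
    rw [subset_fin2 A B]
    by_cases h0A : (0 : Fin 2) ∈ A <;> by_cases h1A : (1 : Fin 2) ∈ A <;>
      by_cases h0B : (0 : Fin 2) ∈ B <;> by_cases h1B : (1 : Fin 2) ∈ B <;>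
      simp [h0A, h1A, h0B, h1B] <;>
      first
        | rfl
        | assumption
        | exact hWX.trans hXZ
  · intro A
    by_cases h0A : (0 : Fin 2) ∈ A <;> by_cases h1A : (1 : Fin 2) ∈ A <;>
      simp [h0A, h1A] <;> assumption

lemma max2 {A B : Finset (Fin 4)} (h : A ⊆ B ∨ B ⊆ A) :
    ∃ M, (M = A ∨ M = B) ∧ A ⊆ M ∧ B ⊆ M := by
  rcases h with h | h
  · exact ⟨B, Or.inr rfl, h, subset_rfl⟩
  · exact ⟨A, Or.inl rfl, subset_rfl, h⟩

lemma caseA (c : Finset (Fin 4) → Bool) (col : Bool)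
    (h0 : c ∅ = col) (h1 : c Finset.univ = col) : ∃ col', Diamond c col' := by
  by_cases hinc : ∃ X Y : Finset (Fin 4), c X = col ∧ c Y = col ∧ ¬ X ⊆ Y ∧ ¬ Y ⊆ X
  · obtain ⟨X, Y, cX, cY, hXY, hYX⟩ := hinc
    exact ⟨col, ∅, X, Y, Finset.univ, Finset.empty_subset _, Finset.empty_subset _,
      Finset.subset_univ _, Finset.subset_univ _, hXY, hYX, h0, cX, cY, h1⟩
  push_neg at hinc
  have Hcomp : ∀ X Y : Finset (Fin 4), c X = col → c Y = col → X ⊆ Y ∨ Y ⊆ X := by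
    intro X Y cX cY
    by_contra h
    push_neg at h
    exact h.2 (hinc X Y cX cY h.1)
  -- find a such that every set containing a, other than univ, has color ¬ col
  have key : ∃ a : Fin 4, ∀ S : Finset (Fin 4), a ∈ S → S ≠ Finset.univ → c S ≠ col := by
    by_contra h
    push_neg at h
    choose S hmem hne hcol using h
    obtain ⟨M1, hM1eq, h10, h11⟩ := max2 (Hcomp (S 0) (S 1) (hcol 0) (hcol 1))
    have cM1 : c M1 = col := by rcases hM1eq with h | h <;> subst h <;> apply hcol
    obtain ⟨M2, hM2eq, h20, h21⟩ := max2 (Hcomp M1 (S 2) cM1 (hcol 2))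
    have cM2 : c M2 = col := by rcases hM2eq with h | h; · subst h; exact cM1
                                subst h; apply hcol
    obtain ⟨M3, hM3eq, h30, h31⟩ := max2 (Hcomp M2 (S 3) cM2 (hcol 3))
    have hMuniv : M3 = Finset.univ := by
      apply Finset.eq_univ_iff_forall.2
      intro x
      fin_cases x
      · exact h30 (h20 (h10 (hmem 0)))
      · exact h30 (h20 (h11 (hmem 1)))
      · exact h30 (h21 (hmem 2))
      · exact h31 (hmem 3)
    have : M3 ≠ Finset.univ := by
      rcases hM3eq with h | h
      · subst h
        rcases hM2eq with h | h
        · subst h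
          rcases hM1eq with h | h <;> subst h <;> apply hne
        · subst h; apply hne
      · subst h; apply hne
    exact this hMuniv
  obtain ⟨a, ha⟩ := key
  -- pick b c distinct, different from a
  have hcard : 1 < ({a}ᶜ : Finset (Fin 4)).card := by
    rw [Finset.card_compl]
    simp
  obtain ⟨b, hb, d, hd, hbd⟩ := Finset.one_lt_card.1 hcard
  simp only [Finset.mem_compl, Finset.mem_singleton] at hb hd
  have hab : a ≠ b := fun h => hb h.symm
  have had : a ≠ d := fun h => hd h.symm
  have hne3 : ∀ S : Finset (Fin 4), S.card ≤ 3 → S ≠ Finset.univ := by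
    intro S hS h
    rw [h] at hS
    simp [Finset.card_univ] at hS
  have bool_ne : ∀ S : Finset (Fin 4), c S ≠ col → c S = !col := by
    intro S h
    cases hc : c S <;> cases col <;> simp_all
  refine ⟨!col, {a}, {a, b}, {a, d}, {a, b, d}, ?_, ?_, ?_, ?_, ?_, ?_, ?_, ?_, ?_, ?_⟩
  · intro x hx; simp at hx; simp [hx]
  · intro x hx; simp at hx; simp [hx]
  · intro x hx; simp at hx; rcases hx with h | h <;> simp [h]
  · intro x hx; simp at hx; rcases hx with h | h <;> simp [h]
  · exact not_ss (by simp : b ∈ ({a, b} : Finset (Fin 4))) (by simp [hb, hbd])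
  · exact not_ss (by simp : d ∈ ({a, d} : Finset (Fin 4))) (by simp [hd, hbd.symm])
  · exact bool_ne _ (ha _ (by simp) (hne3 _ (by simp)))
  · exact bool_ne _ (ha _ (by simp) (hne3 _ ((Finset.card_insert_le _ _).trans (by simp))))
  · exact bool_ne _ (ha _ (by simp) (hne3 _ ((Finset.card_insert_le _ _).trans (by simp))))
  · exact bool_ne _ (ha _ (by simp) (hne3 _ ((Finset.card_insert_le _ _).trans
      ((Nat.add_le_add_right (Finset.card_insert_le _ _) 1).trans (by simp)))))

section CaseB
variable {c : Finset (Fin 4) → Bool}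
variable (nd : ∀ col, ¬ Diamond c col) (hE : c ∅ = true) (hU : c Finset.univ = false)
include nd hE hU

-- two blue triples give a contradiction
lemma twoBlueTriples {T1 T2 : Finset (Fin 4)} (h1 : T1.card = 3) (h2 : T2.card = 3)
    (hne : T1 ≠ T2) (b1 : c T1 = false) (b2 : c T2 = false) : False := by
  have hsub1 : ¬ T1 ⊆ T2 := fun h => hne (Finset.eq_of_subset_of_card_le h (by omega))
  have hsub2 : ¬ T2 ⊆ T1 := fun h => (hne.symm) (Finset.eq_of_subset_of_card_le h (by omega))
  have hcap : 1 < (T1 ∩ T2).card := by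
    have hu : (T1 ∪ T2).card ≤ 4 := by
      have := Finset.card_le_univ (T1 ∪ T2)
      simpa using this
    have := Finset.card_union_add_card_inter T1 T2
    omega
  obtain ⟨x, hx, y, hy, hxy⟩ := Finset.one_lt_card.1 hcap
  simp only [Finset.mem_inter] at hx hy
  cases hsx : c {x} with
  | false => exact nd false ⟨{x}, T1, T2, Finset.univ, by simpa using hx.1, by simpa using hx.2,
      Finset.subset_univ _, Finset.subset_univ _, hsub1, hsub2, hsx, b1, b2, hU⟩
  | true =>
  cases hsy : c {y} with
  | false => exact nd false ⟨{y}, T1, T2, Finset.univ, by simpa using hy.1, by simpa using hy.2,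
      Finset.subset_univ _, Finset.subset_univ _, hsub1, hsub2, hsy, b1, b2, hU⟩
  | true =>
  cases hp : c {x, y} with
  | false => exact nd false ⟨{x, y}, T1, T2, Finset.univ,
      by intro t ht; simp at ht; rcases ht with h|h <;> simp [h, hx.1, hy.1],
      by intro t ht; simp at ht; rcases ht with h|h <;> simp [h, hx.2, hy.2],
      Finset.subset_univ _, Finset.subset_univ _, hsub1, hsub2, hp, b1, b2, hU⟩
  | true => exact nd true ⟨∅, {x}, {y}, {x, y}, Finset.empty_subset _, Finset.empty_subset _,
      by simp, by simp,
      not_ss (by simp : x ∈ ({x} : Finset (Fin 4))) (by simp [hxy]),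
      not_ss (by simp : y ∈ ({y} : Finset (Fin 4))) (by simp [hxy.symm]),
      hE, hsx, hsy, hp⟩

-- two red singletons give a contradiction
lemma twoRedSingles {x y : Fin 4} (hxy : x ≠ y) (r1 : c {x} = true) (r2 : c {y} = true) :
    False := by
  have hcard : 1 < ({x, y}ᶜ : Finset (Fin 4)).card := by
    rw [Finset.card_compl]
    have : ({x, y} : Finset (Fin 4)).card ≤ 2 := Finset.card_insert_le _ _ |>.trans (by simp)
    simp only [Fintype.card_fin]
    omega
  obtain ⟨u, hu, v, hv, huv⟩ := Finset.one_lt_card.1 hcard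
  simp only [Finset.mem_compl, Finset.mem_insert, Finset.mem_singleton, not_or] at hu hv
  have hxss : ∀ Z : Finset (Fin 4), {x, y} ⊆ Z → c Z = true → False := by
    intro Z hZ hcZ
    exact nd true ⟨∅, {x}, {y}, Z, Finset.empty_subset _, Finset.empty_subset _,
      (by intro t ht; simp at ht; exact hZ (by simp [ht])),
      (by intro t ht; simp at ht; exact hZ (by simp [ht])),
      not_ss (by simp : x ∈ ({x} : Finset (Fin 4))) (by simp [hxy]),
      not_ss (by simp : y ∈ ({y} : Finset (Fin 4))) (by simp [hxy.symm]),
      hE, r1, r2, hcZ⟩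
  cases h1 : c {x, y} with
  | true => exact hxss _ subset_rfl h1
  | false =>
  cases h2 : c (insert u {x, y}) with
  | true => exact hxss _ (Finset.subset_insert _ _) h2
  | false =>
  cases h3 : c (insert v {x, y}) with
  | true => exact hxss _ (Finset.subset_insert _ _) h3
  | false =>
    exact nd false ⟨{x, y}, insert u {x, y}, insert v {x, y}, Finset.univ,
      Finset.subset_insert _ _, Finset.subset_insert _ _,
      Finset.subset_univ _, Finset.subset_univ _,
      not_ss (Finset.mem_insert_self u _) (by simp [huv, hu.1, hu.2]),
      not_ss (Finset.mem_insert_self v _) (by simp [huv.symm, hv.1, hv.2]),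
      h1, h2, h3, hU⟩

-- two blue pairs sharing a blue singleton element give a contradiction
lemma twoBluePairs {a b d : Fin 4} (hab : a ≠ b) (had : a ≠ d) (hbd : b ≠ d)
    (sa : c {a} = false) (p1 : c {a, b} = false) (p2 : c {a, d} = false) : False := by
  exact nd false ⟨{a}, {a, b}, {a, d}, Finset.univ,
    by simp, by simp, Finset.subset_univ _, Finset.subset_univ _,
    not_ss (by simp : b ∈ ({a, b} : Finset (Fin 4))) (by simp [hab.symm, hbd]),
    not_ss (by simp : d ∈ ({a, d} : Finset (Fin 4))) (by simp [had.symm, hbd.symm]),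
    sa, p1, p2, hU⟩

-- the core: a,b,d,w distinct, singletons a,b,d blue, pairs {a,b},{a,d} red
lemma core2 {a b d w : Fin 4} (hab : a ≠ b) (had : a ≠ d) (hbd : b ≠ d)
    (haw : a ≠ w) (hbw : b ≠ w) (hdw : d ≠ w)
    (sa : c {a} = false) (sb : c {b} = false) (sd : c {d} = false)
    (p1 : c {a, b} = true) (p2 : c {a, d} = true) : False := by
  have cardT : ({a, b, d} : Finset (Fin 4)).card = 3 := by
    rw [Finset.card_insert_of_notMem (by simp [hab, had]),
        Finset.card_insert_of_notMem (by simp [hbd])]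
    simp
  -- {a,b,d} must be blue
  have hT : c {a, b, d} = false := by
    cases hT : c {a, b, d} with
    | false => rfl
    | true =>
      exact absurd (nd true ⟨∅, {a, b}, {a, d}, {a, b, d}, Finset.empty_subset _,
        Finset.empty_subset _,
        by intro t ht; simp at ht; rcases ht with h|h <;> simp [h],
        by intro t ht; simp at ht; rcases ht with h|h <;> simp [h],
        not_ss (by simp : b ∈ ({a, b} : Finset (Fin 4))) (by simp [hab.symm, hbd]),
        not_ss (by simp : d ∈ ({a, d} : Finset (Fin 4))) (by simp [had.symm, hbd.symm]),
        hE, p1, p2, hT⟩) (fun h => h)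
  -- every other triple is red; in particular {a,b,w}
  have hTw : ∀ T : Finset (Fin 4), T.card = 3 → w ∈ T → c T = true := by
    intro T hTcard hwT
    cases h : c T with
    | true => rfl
    | false =>
      exact absurd (twoBlueTriples nd hE hU cardT hTcard
        (fun he => by rw [← he] at hwT; simp [haw.symm, hbw.symm, hdw.symm] at hwT)
        hT h) (fun h => h)
  have cardabw : ({a, b, w} : Finset (Fin 4)).card = 3 := by
    rw [Finset.card_insert_of_notMem (by simp [hab, haw]),
        Finset.card_insert_of_notMem (by simp [hbw])]
    simp
  have habw : c {a, b, w} = true := hTw _ cardabw (by simp)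
  -- pairs {a,w},{b,w} must be red
  have hiw : ∀ i j : Fin 4, i ∈ ({a, b, d} : Finset (Fin 4)) → j ∈ ({a, b, d} : Finset (Fin 4)) →
      i ≠ j → c {i} = false → c {i, w} = false → False := by
    intro i j hi hj hij si piw
    have hwT : w ∉ ({a, b, d} : Finset (Fin 4)) := by simp [haw.symm, hbw.symm, hdw.symm]
    exact nd false ⟨{i}, {i, w}, {a, b, d}, Finset.univ,
      by simp, by simpa using hi, Finset.subset_univ _, Finset.subset_univ _,
      not_ss (by simp : w ∈ ({i, w} : Finset (Fin 4))) hwT,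
      not_ss hj (by simp only [Finset.mem_insert, Finset.mem_singleton]; push_neg; exact ⟨hij.symm, fun h => hwT (h ▸ hj)⟩),
      si, piw, hT, hU⟩
  have paw : c {a, w} = true := by
    cases h : c {a, w} with
    | true => rfl
    | false => exact absurd (hiw a b (by simp) (by simp) hab sa h) (fun h => h)
  have pbw : c {b, w} = true := by
    cases h : c {b, w} with
    | true => rfl
    | false => exact absurd (hiw b a (by simp) (by simp) hab.symm sb h) (fun h => h)
  -- final red diamond
  exact nd true ⟨∅, {a, w}, {b, w}, {a, b, w}, Finset.empty_subset _, Finset.empty_subset _,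
    by intro t ht; simp at ht; rcases ht with h|h <;> simp [h],
    by intro t ht; simp at ht; rcases ht with h|h <;> simp [h],
    not_ss (by simp : a ∈ ({a, w} : Finset (Fin 4))) (by simp [hab, haw]),
    not_ss (by simp : b ∈ ({b, w} : Finset (Fin 4))) (by simp [hab.symm, hbw]),
    hE, paw, pbw, habw⟩

lemma core {x y z w : Fin 4} (hxy : x ≠ y) (hxz : x ≠ z) (hyz : y ≠ z)
    (hxw : x ≠ w) (hyw : y ≠ w) (hzw : z ≠ w)
    (sx : c {x} = false) (sy : c {y} = false) (sz : c {z} = false) : False := by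
  cases pxy : c {x, y} with
  | true =>
    cases pxz : c {x, z} with
    | true => exact core2 nd hE hU hxy hxz hyz hxw hyw hzw sx sy sz pxy pxz
    | false =>
      cases pyz : c {y, z} with
      | true =>
        exact core2 nd hE hU hxy.symm hyz hxz hyw hxw hzw sy sx sz
          (by rwa [Finset.pair_comm]) pyz
      | false =>
        exact twoBluePairs nd hE hU hxz.symm hyz.symm hxy sz
          (by rwa [Finset.pair_comm]) (by rwa [Finset.pair_comm])
  | false =>
    cases pxz : c {x, z} with
    | false => exact twoBluePairs nd hE hU hxy hxz hyz sx pxy pxz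
    | true =>
      cases pyz : c {y, z} with
      | false =>
        exact twoBluePairs nd hE hU hxy.symm hyz hxz sy (by rwa [Finset.pair_comm]) pyz
      | true =>
        exact core2 nd hE hU hxz.symm hyz.symm hxy hzw hxw hyw sz sx sy
          (by rwa [Finset.pair_comm]) (by rwa [Finset.pair_comm])

lemma caseBfalse : False := by
  cases h0 : c {(0 : Fin 4)} with
  | true =>
    have h1 : c {(1 : Fin 4)} = false := by
      cases h : c {(1 : Fin 4)} with
      | false => rfl
      | true => exact absurd (twoRedSingles nd hE hU (by decide) h0 h) (fun h => h)
    have h2 : c {(2 : Fin 4)} = false := by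
      cases h : c {(2 : Fin 4)} with
      | false => rfl
      | true => exact absurd (twoRedSingles nd hE hU (by decide) h0 h) (fun h => h)
    have h3 : c {(3 : Fin 4)} = false := by
      cases h : c {(3 : Fin 4)} with
      | false => rfl
      | true => exact absurd (twoRedSingles nd hE hU (by decide) h0 h) (fun h => h)
    exact core nd hE hU (show (1 : Fin 4) ≠ 2 by decide) (by decide) (by decide)
      (show (1 : Fin 4) ≠ 0 by decide) (by decide) (by decide) h1 h2 h3
  | false =>
    cases h1 : c {(1 : Fin 4)} with
    | true =>
      have h2 : c {(2 : Fin 4)} = false := by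
        cases h : c {(2 : Fin 4)} with
        | false => rfl
        | true => exact absurd (twoRedSingles nd hE hU (by decide) h1 h) (fun h => h)
      have h3 : c {(3 : Fin 4)} = false := by
        cases h : c {(3 : Fin 4)} with
        | false => rfl
        | true => exact absurd (twoRedSingles nd hE hU (by decide) h1 h) (fun h => h)
      exact core nd hE hU (show (0 : Fin 4) ≠ 2 by decide) (by decide) (by decide)
        (show (0 : Fin 4) ≠ 1 by decide) (by decide) (by decide) h0 h2 h3
    | false =>
      cases h2 : c {(2 : Fin 4)} with
      | false =>
        exact core nd hE hU (show (0 : Fin 4) ≠ 1 by decide) (by decide) (by decide)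
          (show (0 : Fin 4) ≠ 3 by decide) (by decide) (by decide) h0 h1 h2
      | true =>
        have h3 : c {(3 : Fin 4)} = false := by
          cases h : c {(3 : Fin 4)} with
          | false => rfl
          | true => exact absurd (twoRedSingles nd hE hU (by decide) h2 h) (fun h => h)
        exact core nd hE hU (show (0 : Fin 4) ≠ 1 by decide) (by decide) (by decide)
          (show (0 : Fin 4) ≠ 2 by decide) (by decide) (by decide) h0 h1 h3

end CaseB

def cpar : Finset (Fin 3) → Bool := fun S => decide (Odd S.card)

lemma lowerQ3 : ¬ ∃ (col : Bool) (f : Finset (Fin 2) → Finset (Fin 3)),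
    IsCubeEmb f ∧ ∀ A, cpar (f A) = col := by
  rintro ⟨col, f, hf, hc⟩
  set W := f ∅ with hW
  set X := f {0} with hX
  set Z := f Finset.univ with hZ
  have hWX : W ⊆ X := (hf ∅ {0}).1 (Finset.empty_subset _)
  have hXZ : X ⊆ Z := (hf {0} Finset.univ).1 (Finset.subset_univ _)
  have hXW : ¬ X ⊆ W := fun h => by
    have := (hf {0} ∅).2 h
    simpa using this ((by simp) : (0 : Fin 2) ∈ ({0} : Finset (Fin 2)))
  have hZX : ¬ Z ⊆ X := fun h => by
    have := (hf Finset.univ {0}).2 h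
    have h1 := this ((Finset.mem_univ (1 : Fin 2)))
    simp at h1
  have c1 : W.card < X.card := Finset.card_lt_card (Finset.ssubset_def.2 ⟨hWX, hXW⟩)
  have c2 : X.card < Z.card := Finset.card_lt_card (Finset.ssubset_def.2 ⟨hXZ, hZX⟩)
  have c3 : Z.card ≤ 3 := by
    have := Finset.card_le_univ Z
    simpa using this
  have p1 : (decide (Odd W.card) : Bool) = decide (Odd X.card) := by
    have e1 := hc ∅
    have e2 := hc {0}
    rw [cpar] at e1 e2
    rw [← hW] at e1
    rw [← hX] at e2
    rw [e1, e2]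
  have p2 : (decide (Odd X.card) : Bool) = decide (Odd Z.card) := by
    have e1 := hc {0}
    have e2 := hc Finset.univ
    rw [cpar] at e1 e2
    rw [← hX] at e1
    rw [← hZ] at e2
    rw [e1, e2]
  simp only [decide_eq_decide, Nat.odd_iff] at p1 p2
  omega

lemma prop_mono {N N' : ℕ} (h : N ≤ N') (hp : CubeRamseyProp 2 2 N) :
    CubeRamseyProp 2 2 N' := by
  intro c'
  rcases hp (fun S => c' (S.map (Fin.castLEEmb h))) with ⟨f, hf, hcol⟩ | ⟨g, hg, hcol⟩
  · exact Or.inl ⟨fun A => (f A).map (Fin.castLEEmb h),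
      fun A B => (hf A B).trans Finset.map_subset_map.symm, hcol⟩
  · exact Or.inr ⟨fun A => (g A).map (Fin.castLEEmb h),
      fun A B => (hg A B).trans Finset.map_subset_map.symm, hcol⟩

lemma diamond_not {c : Finset (Fin 4) → Bool} {col : Bool}
    (h : Diamond (fun S => !(c S)) col) : Diamond c (!col) := by
  obtain ⟨W, X, Y, Z, h1, h2, h3, h4, h5, h6, cW, cX, cY, cZ⟩ := h
  have e : ∀ S : Finset (Fin 4), (!(c S)) = col → c S = !col := by
    intro S h; rw [← h]; simp
  exact ⟨W, X, Y, Z, h1, h2, h3, h4, h5, h6, e _ cW, e _ cX, e _ cY, e _ cZ⟩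

lemma mainUpper (c : Finset (Fin 4) → Bool) : ∃ col, Diamond c col := by
  by_contra h
  push_neg at h
  cases hE : c ∅ with
  | true =>
    cases hU : c Finset.univ with
    | true =>
      obtain ⟨col', hd⟩ := caseA c true hE hU
      exact h col' hd
    | false => exact caseBfalse h hE hU
  | false =>
    cases hU : c Finset.univ with
    | false =>
      obtain ⟨col', hd⟩ := caseA c false hE hU
      exact h col' hd
    | true =>
      have nd' : ∀ col, ¬ Diamond (fun S => !(c S)) col := by
        intro col hd
        exact h (!col) (diamond_not hd)
      exact caseBfalse nd' (by simp [hE]) (by simp [hU])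

/-- Every red/blue coloring of `Q_4` has a monochromatic copy of `Q_2`, and some
red/blue coloring of `Q_3` has none. Hence `R(Q_2, Q_2) = 4`. -/
theorem RQ2Q2_eq_four :
    (∀ c : Finset (Fin 4) → Bool,
      ∃ (col : Bool) (f : Finset (Fin 2) → Finset (Fin 4)),
        IsCubeEmb f ∧ ∀ A, c (f A) = col) ∧
    (∃ c : Finset (Fin 3) → Bool,
      ¬ ∃ (col : Bool) (f : Finset (Fin 2) → Finset (Fin 3)),
          IsCubeEmb f ∧ ∀ A, c (f A) = col) ∧
    posetRamsey 2 2 = 4 := by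
  have part1 : ∀ c : Finset (Fin 4) → Bool,
      ∃ (col : Bool) (f : Finset (Fin 2) → Finset (Fin 4)),
        IsCubeEmb f ∧ ∀ A, c (f A) = col := by
    intro c
    obtain ⟨col, hd⟩ := mainUpper c
    exact ⟨col, diamond_emb hd⟩
  refine ⟨part1, ⟨cpar, lowerQ3⟩, ?_⟩
  have prop4 : CubeRamseyProp 2 2 4 := by
    intro c
    obtain ⟨col, f, hf, hc⟩ := part1 c
    cases col with
    | true => exact Or.inl ⟨f, hf, hc⟩
    | false => exact Or.inr ⟨f, hf, hc⟩
  have notprop3 : ¬ CubeRamseyProp 2 2 3 := by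
    intro hp
    apply lowerQ3
    rcases hp cpar with ⟨f, hf, hc⟩ | ⟨f, hf, hc⟩
    · exact ⟨true, f, hf, hc⟩
    · exact ⟨false, f, hf, hc⟩
  have h4mem : (4 : ℕ) ∈ {N | CubeRamseyProp 2 2 N} := prop4
  have hle : posetRamsey 2 2 ≤ 4 := Nat.sInf_le h4mem
  have hmem : CubeRamseyProp 2 2 (posetRamsey 2 2) :=
    Nat.sInf_mem (⟨4, h4mem⟩ : {N | CubeRamseyProp 2 2 N}.Nonempty)
  rcases Nat.lt_or_ge (posetRamsey 2 2) 4 with hlt | hge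
  · exact absurd (prop_mono (by omega) hmem) notprop3
  · omega
end

section
/- Let N(n) = n + 2(n+1)⌈log₂ n⌉. Then the proportion, among all 2^{2^{N(n)}} red/blue colorings of the Boolean lattice Q_{N(n)}, of those colorings that contain a monochromatic copy of Q_n tends to 1 as n → ∞. (Equivalently, a uniformly random red/blue coloring of Q_{N(n)} contains a monochromatic copy of Q_n asymptotically almost surely.) -/
/-- Ground-set size `N(n) = n + 2(n+1)⌈log₂ n⌉`. -/
def blobDim (n : ℕ) : ℕ := n + 2 * (n + 1) * Nat.clog 2 n

namespace Blob

abbrev M (n : ℕ) : ℕ := 2 * Nat.clog 2 n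

def iotaEmb (n : ℕ) : Fin n ↪ Fin (blobDim n) :=
  (Fin.castLEEmb (Nat.le_add_right _ _) : Fin n ↪ Fin (blobDim n))

lemma iota_val (n : ℕ) (a : Fin n) : (iotaEmb n a).1 = a.1 := rfl

def blkEmb (n k : ℕ) : Fin (M n) ↪ Fin (blobDim n) :=
  ⟨fun j => ⟨n + k % (n+1) * M n + j.1, by
    have h1 : k % (n+1) ≤ n := Nat.lt_succ_iff.mp (Nat.mod_lt _ (Nat.succ_pos n))
    have h2 : j.1 < M n := j.2
    have h3 : k % (n+1) * M n ≤ n * M n := Nat.mul_le_mul_right _ h1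
    have : n + k % (n+1) * M n + j.1 < n + (n+1) * M n := by
      have : k % (n+1) * M n + j.1 < (n+1) * M n := by
        calc k % (n+1) * M n + j.1 < k % (n+1) * M n + M n := by omega
        _ ≤ n * M n + M n := by omega
        _ = (n+1) * M n := by ring
      omega
    have h4 : n + (n+1) * M n = blobDim n := by simp only [blobDim, M]; ring
    omega⟩,
   by intro a b h; apply Fin.ext; have := congrArg Fin.val h; simpa using this⟩

lemma blk_val (n k : ℕ) (j : Fin (M n)) : (blkEmb n k j).1 = n + k % (n+1) * M n + j.1 := rfl

lemma blk_ge (n k : ℕ) (j : Fin (M n)) : n ≤ (blkEmb n k j).1 := by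
  rw [blk_val]; omega

/-- blocks with distinct indices `≤ n` are disjoint -/
lemma blk_ne (n k k' : ℕ) (hk : k ≤ n) (hk' : k' ≤ n) (hne : k ≠ k')
    (j j' : Fin (M n)) : blkEmb n k j ≠ blkEmb n k' j' := by
  intro h
  have hv := congrArg Fin.val h
  rw [blk_val, blk_val, Nat.mod_eq_of_lt (Nat.lt_succ_of_le hk),
    Nat.mod_eq_of_lt (Nat.lt_succ_of_le hk')] at hv
  have hj : j.1 < M n := j.2
  have hj' : j'.1 < M n := j'.2
  rcases Nat.lt_or_ge k k' with h1 | h1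
  · have : k * M n + M n ≤ k' * M n := by
      calc k * M n + M n = (k+1) * M n := by ring
      _ ≤ k' * M n := Nat.mul_le_mul_right _ h1
    omega
  · have h1' : k' < k := lt_of_le_of_ne h1 (Ne.symm hne)
    have : k' * M n + M n ≤ k * M n := by
      calc k' * M n + M n = (k'+1) * M n := by ring
      _ ≤ k * M n := Nat.mul_le_mul_right _ h1'
    omega

def pt (n : ℕ) (A : Finset (Fin n)) (L : Finset (Fin (blobDim n)))
    (y : Finset (Fin (M n))) : Finset (Fin (blobDim n)) :=
  (A.map (iotaEmb n) ∪ L) ∪ y.map (blkEmb n A.card)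

/-- canonical selection of a `y` making `t` true, if any -/
noncomputable def Fsel (n : ℕ) (t : Finset (Fin (M n)) → Bool) : Finset (Fin (M n)) :=
  if h : ∃ y, t y = true then h.choose else ∅

lemma Fsel_spec (n : ℕ) (t : Finset (Fin (M n)) → Bool) (h : ∃ y, t y = true) :
    t (Fsel n t) = true := by
  rw [Fsel, dif_pos h]; exact h.choose_spec

end Blob

namespace Blob

noncomputable def pick (n : ℕ) (c : Finset (Fin (blobDim n)) → Bool) :
    Finset (Fin n) → Finset (Fin (M n))
  | A =>
    Fsel n (fun y => c (pt n A ((A.powerset.erase A).attach.biUnion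
        (fun B => (pick n c B.1).map (blkEmb n B.1.card))) y))
  termination_by A => A.card
  decreasing_by
    have hB := B.2
    simp only [Finset.mem_erase, Finset.mem_powerset] at hB
    exact Finset.card_lt_card (lt_of_le_of_ne hB.2 hB.1)

noncomputable def low (n : ℕ) (c : Finset (Fin (blobDim n)) → Bool) (A : Finset (Fin n)) :
    Finset (Fin (blobDim n)) :=
  (A.powerset.erase A).biUnion (fun B => (pick n c B).map (blkEmb n B.card))

lemma attach_biUnion {α β : Type*} [DecidableEq β] (s : Finset α) (f : α → Finset β) :
    s.attach.biUnion (fun x => f x.1) = s.biUnion f := by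
  ext x
  simp [Finset.mem_biUnion, Subtype.exists]

lemma pick_spec (n : ℕ) (c : Finset (Fin (blobDim n)) → Bool) (A : Finset (Fin n)) :
    pick n c A = Fsel n (fun y => c (pt n A (low n c A) y)) := by
  have h := attach_biUnion (A.powerset.erase A)
    (fun B => (pick n c B).map (blkEmb n B.card))
  rw [pick, low]
  exact congrArg (Fsel n) (funext fun y => congrArg c (congrArg (fun L => pt n A L y) h))

end Blob

namespace Blob

lemma low_ge (n : ℕ) (c : Finset (Fin (blobDim n)) → Bool) (A : Finset (Fin n)) :
    ∀ x ∈ low n c A, n ≤ x.1 := by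
  intro x hx
  simp only [low, Finset.mem_biUnion, Finset.mem_map] at hx
  obtain ⟨B, _, j, _, rfl⟩ := hx
  exact blk_ge n _ j

/-- the trace of a point on the first `n` coordinates -/
def tr (n : ℕ) (p : Finset (Fin (blobDim n))) : Finset (Fin n) :=
  Finset.univ.filter (fun a => iotaEmb n a ∈ p)

lemma trace_pt (n : ℕ) (A : Finset (Fin n)) (L : Finset (Fin (blobDim n)))
    (y : Finset (Fin (M n))) (hL : ∀ x ∈ L, n ≤ x.1) :
    tr n (pt n A L y) = A := by
  ext a
  have ha : (iotaEmb n a).1 < n := a.2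
  simp only [tr, pt, Finset.mem_filter, Finset.mem_univ, true_and, Finset.mem_union,
    Finset.mem_map]
  constructor
  · rintro ((⟨b, hb, hab⟩ | hL') | ⟨j, _, hj⟩)
    · rwa [← (iotaEmb n).injective hab]
    · exact absurd (hL _ hL') (by omega)
    · have := blk_ge n A.card j
      rw [hj] at this; omega
  · intro ha'
    exact Or.inl (Or.inl ⟨a, ha', rfl⟩)

noncomputable def gmap (n : ℕ) (c : Finset (Fin (blobDim n)) → Bool) (A : Finset (Fin n)) :
    Finset (Fin (blobDim n)) :=
  A.powerset.biUnion (fun B => (pick n c B).map (blkEmb n B.card))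

noncomputable def emb (n : ℕ) (c : Finset (Fin (blobDim n)) → Bool) (A : Finset (Fin n)) :
    Finset (Fin (blobDim n)) :=
  A.map (iotaEmb n) ∪ gmap n c A

lemma emb_eq (n : ℕ) (c : Finset (Fin (blobDim n)) → Bool) (A : Finset (Fin n)) :
    emb n c A = pt n A (low n c A) (pick n c A) := by
  have hA : A ∈ A.powerset := Finset.mem_powerset.mpr Finset.Subset.rfl
  rw [emb, gmap, ← Finset.insert_erase hA, Finset.biUnion_insert, pt, low]
  ext x
  simp only [Finset.mem_union]
  tauto

lemma gmap_ge (n : ℕ) (c : Finset (Fin (blobDim n)) → Bool) (A : Finset (Fin n)) :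
    ∀ x ∈ gmap n c A, n ≤ x.1 := by
  intro x hx
  simp only [gmap, Finset.mem_biUnion, Finset.mem_map] at hx
  obtain ⟨B, _, j, _, rfl⟩ := hx
  exact blk_ge n _ j

lemma emb_isCubeEmb (n : ℕ) (c : Finset (Fin (blobDim n)) → Bool) :
    ∀ A B : Finset (Fin n), A ⊆ B ↔ emb n c A ⊆ emb n c B := by
  intro A B
  constructor
  · intro hAB
    apply Finset.union_subset_union
    · exact Finset.map_subset_map.mpr hAB
    · exact Finset.biUnion_subset_biUnion_of_subset_left _
        (Finset.powerset_mono.mpr hAB)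
  · intro h a ha
    have : iotaEmb n a ∈ emb n c A := by
      rw [emb]; exact Finset.mem_union_left _ (Finset.mem_map_of_mem _ ha)
    have hmem := h this
    rw [emb, Finset.mem_union] at hmem
    rcases hmem with hm | hm
    · obtain ⟨b, hb, hab⟩ := Finset.mem_map.mp hm
      rwa [← (iotaEmb n).injective hab]
    · have h1 := gmap_ge n c B _ hm
      have h2 : (iotaEmb n a).1 < n := a.2
      omega

end Blob

namespace Blob

def Good (n : ℕ) (c : Finset (Fin (blobDim n)) → Bool) : Prop :=
  ∀ A : Finset (Fin n), ∃ y, c (pt n A (low n c A) y) = true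

lemma good_color (n : ℕ) (c : Finset (Fin (blobDim n)) → Bool) (hc : Good n c) :
    ∀ A, c (emb n c A) = true := by
  intro A
  rw [emb_eq, pick_spec]
  exact Fsel_spec n _ (hc A)

lemma blk_not_mem_low (n : ℕ) (c : Finset (Fin (blobDim n)) → Bool) (A : Finset (Fin n))
    (j : Fin (M n)) : blkEmb n A.card j ∉ low n c A := by
  intro h
  simp only [low, Finset.mem_biUnion, Finset.mem_map, Finset.mem_erase,
    Finset.mem_powerset] at h
  obtain ⟨B, ⟨hne, hsub⟩, j', _, hj⟩ := h
  have hBA : B ⊂ A := lt_of_le_of_ne hsub hne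
  have hcard : B.card < A.card := Finset.card_lt_card hBA
  have hAn : A.card ≤ n := by
    simpa using Finset.card_le_card (Finset.subset_univ A)
  exact blk_ne n B.card A.card (by omega) hAn (by omega) j' j hj

lemma pt_inj (n : ℕ) (c : Finset (Fin (blobDim n)) → Bool) (A : Finset (Fin n)) :
    Function.Injective (fun y => pt n A (low n c A) y) := by
  intro y y' h
  simp only at h
  have key : ∀ (z z' : Finset (Fin (M n))), pt n A (low n c A) z ⊆ pt n A (low n c A) z' →
      z ⊆ z' := by
    intro z z' hzz j hj
    have hmem : blkEmb n A.card j ∈ pt n A (low n c A) z :=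
      Finset.mem_union_right _ (Finset.mem_map_of_mem _ hj)
    have := hzz hmem
    simp only [pt, Finset.mem_union, Finset.mem_map] at this
    rcases this with (⟨a, _, hval⟩ | hlow) | ⟨j', hj', hval⟩
    · have h1 : (iotaEmb n a).1 < n := a.2
      have h2 := blk_ge n A.card j
      rw [hval] at h1; omega
    · exact absurd hlow (blk_not_mem_low n c A j)
    · rwa [← (blkEmb n A.card).injective hval]
  exact Finset.Subset.antisymm (key _ _ h.le) (key _ _ h.ge)

end Blob

namespace Blob

lemma pick_congr (n : ℕ) (A : Finset (Fin n)) (c c' : Finset (Fin (blobDim n)) → Bool)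
    (hcc : ∀ p, tr n p ≠ A → c p = c' p) :
    ∀ B : Finset (Fin n), B ⊂ A → pick n c B = pick n c' B := by
  intro B
  induction B using Finset.strongInductionOn with
  | _ B ih =>
    intro hBA
    have hlow : low n c B = low n c' B := by
      rw [low, low]
      apply Finset.biUnion_congr rfl
      intro B' hB'
      simp only [Finset.mem_erase, Finset.mem_powerset] at hB'
      rw [ih B' (lt_of_le_of_ne hB'.2 hB'.1) ((lt_of_le_of_ne hB'.2 hB'.1).trans hBA)]
    have hc : ∀ y, c (pt n B (low n c B) y) = c' (pt n B (low n c B) y) := by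
      intro y
      apply hcc
      rw [trace_pt n B _ y (low_ge n c B)]
      exact hBA.ne
    rw [pick_spec, pick_spec, ← hlow]
    exact congrArg (Fsel n) (funext hc)

lemma low_congr (n : ℕ) (A : Finset (Fin n)) (c c' : Finset (Fin (blobDim n)) → Bool)
    (hcc : ∀ p, tr n p ≠ A → c p = c' p) : low n c A = low n c' A := by
  rw [low, low]
  apply Finset.biUnion_congr rfl
  intro B hB
  simp only [Finset.mem_erase, Finset.mem_powerset] at hB
  rw [pick_congr n A c c' hcc B (lt_of_le_of_ne hB.2 hB.1)]

end Blob

namespace Blob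

lemma count_lemma {α : Type} [Fintype α] [DecidableEq α] (S : Finset α) (K : ℕ)
    (F : (α → Bool) → Finset α) (hK : ∀ c, (F c).card = K)
    (hS : ∀ c, F c ⊆ S)
    (hdep : ∀ c c', (∀ p ∉ S, c p = c' p) → F c = F c') :
    Nat.card {c : α → Bool // ∀ p ∈ F c, c p = false} * 2 ^ K ≤ 2 ^ Fintype.card α := by
  classical
  set Bad := {c : α → Bool // ∀ p ∈ F c, c p = false} with hBad
  -- the injection
  let e : (c : α → Bool) → (F c) ≃ Fin K := fun c => (F c).equivFin.trans (finCongr (hK c))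
  let Φ : Bad × (Fin K → Bool) → (α → Bool) := fun x p =>
    if h : p ∈ F x.1.1 then x.2 (e x.1.1 ⟨p, h⟩) else x.1.1 p
  have hinj : Function.Injective Φ := by
    rintro ⟨⟨c, hc⟩, v⟩ ⟨⟨c', hc'⟩, v'⟩ h
    have hoff : ∀ p ∉ S, c p = c' p := by
      intro p hp
      have h1 : p ∉ F c := fun hmem => hp (hS c hmem)
      have h2 : p ∉ F c' := fun hmem => hp (hS c' hmem)
      have := congrFun h p
      simpa only [Φ, dif_neg h1, dif_neg h2] using this
    have hF : F c = F c' := hdep c c' hoff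
    have hcc : c = c' := by
      funext p
      by_cases hp : p ∈ F c
      · rw [hc p hp, hc' p (hF ▸ hp)]
      · have := congrFun h p
        simpa only [Φ, dif_neg hp, dif_neg (hF ▸ hp : p ∉ F c')] using this
    subst hcc
    have hvv : v = v' := by
      funext i
      set q := (e c).symm i with hq
      have := congrFun h q.1
      simp only [Φ, dif_pos q.2] at this
      have hpe : e c ⟨q.1, q.2⟩ = i := by
        rw [show (⟨q.1, q.2⟩ : (F c : Finset α)) = q from rfl, hq, Equiv.apply_symm_apply]
      rwa [hpe] at this
    rw [hvv]
  have h1 : Nat.card (Bad × (Fin K → Bool)) ≤ Nat.card (α → Bool) :=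
    Nat.card_le_card_of_injective Φ hinj
  rw [Nat.card_prod, Nat.card_fun, Nat.card_fun] at h1
  simpa [Nat.card_eq_fintype_card] using h1

end Blob

namespace Blob

def BadA (n : ℕ) (A : Finset (Fin n)) (c : Finset (Fin (blobDim n)) → Bool) : Prop :=
  ∀ y, c (pt n A (low n c A) y) = false

lemma badA_bound (n : ℕ) (A : Finset (Fin n)) :
    Nat.card {c : Finset (Fin (blobDim n)) → Bool // BadA n A c} * 2 ^ (2 ^ M n)
      ≤ 2 ^ (2 ^ blobDim n) := by
  classical
  set F : (Finset (Fin (blobDim n)) → Bool) → Finset (Finset (Fin (blobDim n))) :=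
    fun c => Finset.image (fun y => pt n A (low n c A) y) Finset.univ with hF
  have hbound := count_lemma (α := Finset (Fin (blobDim n)))
    (Finset.univ.filter (fun p => tr n p = A)) (2 ^ M n) F
    (fun c => by
      rw [hF]
      rw [Finset.card_image_of_injective _ (pt_inj n c A), Finset.card_univ,
        Fintype.card_finset, Fintype.card_fin])
    (fun c => by
      intro p hp
      simp only [hF, Finset.mem_image] at hp
      obtain ⟨y, _, rfl⟩ := hp
      simp only [Finset.mem_filter, Finset.mem_univ, true_and]
      exact trace_pt n A _ y (low_ge n c A))
    (fun c c' hcc => by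
      have hcc' : ∀ p, tr n p ≠ A → c p = c' p := by
        intro p hp
        exact hcc p (by simp [hp])
      rw [hF]
      simp only
      rw [low_congr n A c c' hcc'])
  have hcard : Nat.card {c : Finset (Fin (blobDim n)) → Bool // BadA n A c}
      = Nat.card {c : Finset (Fin (blobDim n)) → Bool // ∀ p ∈ F c, c p = false} := by
    apply Nat.card_congr
    apply Equiv.subtypeEquivRight
    intro c
    simp only [hF, Finset.mem_image, BadA]
    constructor
    · rintro h p ⟨y, _, rfl⟩
      exact h y
    · intro h y
      exact h _ ⟨y, Finset.mem_univ y, rfl⟩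
  rw [hcard]
  calc Nat.card {c : Finset (Fin (blobDim n)) → Bool // ∀ p ∈ F c, c p = false} * 2 ^ (2 ^ M n)
      ≤ 2 ^ Fintype.card (Finset (Fin (blobDim n))) := hbound
    _ = 2 ^ (2 ^ blobDim n) := by rw [Fintype.card_finset, Fintype.card_fin]

end Blob

namespace Blob

lemma notGood_exists (n : ℕ) (c : Finset (Fin (blobDim n)) → Bool) (hc : ¬ Good n c) :
    ∃ A, BadA n A c := by
  rw [Good] at hc
  push_neg at hc
  obtain ⟨A, hA⟩ := hc
  exact ⟨A, fun y => by simpa using hA y⟩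

lemma notGood_bound (n : ℕ) :
    Nat.card {c : Finset (Fin (blobDim n)) → Bool // ¬ Good n c} * 2 ^ (2 ^ M n)
      ≤ 2 ^ n * 2 ^ (2 ^ blobDim n) := by
  classical
  let Φ : {c : Finset (Fin (blobDim n)) → Bool // ¬ Good n c} →
      Σ A : Finset (Fin n), {c : Finset (Fin (blobDim n)) → Bool // BadA n A c} :=
    fun x => ⟨(notGood_exists n x.1 x.2).choose, x.1, (notGood_exists n x.1 x.2).choose_spec⟩
  have hΦ : Function.Injective Φ := by
    intro x y h
    have := congrArg (fun z : (Σ A : Finset (Fin n),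
      {c : Finset (Fin (blobDim n)) → Bool // BadA n A c}) => (z.2.1 : _)) h
    exact Subtype.ext this
  have h1 : Nat.card {c : Finset (Fin (blobDim n)) → Bool // ¬ Good n c}
      ≤ ∑ A : Finset (Fin n), Nat.card {c : Finset (Fin (blobDim n)) → Bool // BadA n A c} := by
    have := Nat.card_le_card_of_injective Φ hΦ
    rwa [Nat.card_eq_fintype_card (α := Σ A : Finset (Fin n),
        {c : Finset (Fin (blobDim n)) → Bool // BadA n A c}), Fintype.card_sigma,
      Finset.sum_congr rfl (fun A _ => (Nat.card_eq_fintype_card (α :=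
        {c : Finset (Fin (blobDim n)) → Bool // BadA n A c})).symm)] at this
  calc Nat.card {c : Finset (Fin (blobDim n)) → Bool // ¬ Good n c} * 2 ^ (2 ^ M n)
      ≤ (∑ A : Finset (Fin n), Nat.card {c : Finset (Fin (blobDim n)) → Bool // BadA n A c})
          * 2 ^ (2 ^ M n) := Nat.mul_le_mul_right _ h1
    _ = ∑ A : Finset (Fin n),
          Nat.card {c : Finset (Fin (blobDim n)) → Bool // BadA n A c} * 2 ^ (2 ^ M n) := by
        rw [Finset.sum_mul]
    _ ≤ ∑ _A : Finset (Fin n), 2 ^ (2 ^ blobDim n) :=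
        Finset.sum_le_sum (fun A _ => badA_bound n A)
    _ = 2 ^ n * 2 ^ (2 ^ blobDim n) := by
        rw [Finset.sum_const, Finset.card_univ, Fintype.card_finset, Fintype.card_fin,
          smul_eq_mul]

end Blob

namespace Blob

def Target (n : ℕ) (c : Finset (Fin (blobDim n)) → Bool) : Prop :=
  ∃ (col : Bool) (f : Finset (Fin n) → Finset (Fin (blobDim n))),
    IsCubeEmb f ∧ ∀ A, c (f A) = col

lemma good_target (n : ℕ) (c : Finset (Fin (blobDim n)) → Bool) (hc : Good n c) :
    Target n c :=
  ⟨true, emb n c, emb_isCubeEmb n c, good_color n c hc⟩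

lemma card_target_ge (n : ℕ) :
    2 ^ (2 ^ blobDim n) ≤ Nat.card {c : Finset (Fin (blobDim n)) → Bool // Target n c}
      + Nat.card {c : Finset (Fin (blobDim n)) → Bool // ¬ Good n c} := by
  classical
  have h1 : Nat.card {c : Finset (Fin (blobDim n)) → Bool // Good n c}
      ≤ Nat.card {c : Finset (Fin (blobDim n)) → Bool // Target n c} := by
    apply Nat.card_le_card_of_injective
      (fun x => (⟨x.1, good_target n x.1 x.2⟩ : {c // Target n c}))
    intro x y h
    exact Subtype.ext (congrArg (fun z : {c // Target n c} => z.1) h)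
  have h2 : Nat.card {c : Finset (Fin (blobDim n)) → Bool // Good n c}
      + Nat.card {c : Finset (Fin (blobDim n)) → Bool // ¬ Good n c}
      = 2 ^ (2 ^ blobDim n) := by
    rw [Nat.card_eq_fintype_card, Nat.card_eq_fintype_card,
      Fintype.card_subtype_compl, ]
    have hle : Fintype.card {c : Finset (Fin (blobDim n)) → Bool // Good n c}
        ≤ Fintype.card (Finset (Fin (blobDim n)) → Bool) := Fintype.card_subtype_le _
    have : Fintype.card (Finset (Fin (blobDim n)) → Bool) = 2 ^ (2 ^ blobDim n) := by
      rw [Fintype.card_fun, Fintype.card_finset, Fintype.card_fin, Fintype.card_bool]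
    omega
  omega

end Blob

namespace Blob

lemma card_colorings (n : ℕ) :
    Nat.card (Finset (Fin (blobDim n)) → Bool) = 2 ^ (2 ^ blobDim n) := by
  rw [Nat.card_fun, Nat.card_eq_fintype_card, Nat.card_eq_fintype_card,
    Fintype.card_finset, Fintype.card_fin, Fintype.card_bool]

lemma card_target_le (n : ℕ) :
    Nat.card {c : Finset (Fin (blobDim n)) → Bool // Target n c} ≤ 2 ^ (2 ^ blobDim n) := by
  rw [← card_colorings n]
  exact Nat.card_le_card_of_injective Subtype.val Subtype.val_injective

lemma bad_small (n : ℕ) (hn : 2 ≤ n) :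
    Nat.card {c : Finset (Fin (blobDim n)) → Bool // ¬ Good n c} * 2 ^ n
      ≤ 2 ^ (2 ^ blobDim n) := by
  set b := Nat.card {c : Finset (Fin (blobDim n)) → Bool // ¬ Good n c}
  have h2M : 2 * n ≤ 2 ^ M n := by
    have h1 : n ≤ 2 ^ Nat.clog 2 n := Nat.le_pow_clog one_lt_two n
    have h2 : n * n ≤ 2 ^ Nat.clog 2 n * 2 ^ Nat.clog 2 n := Nat.mul_le_mul h1 h1
    have h3 : 2 ^ M n = 2 ^ Nat.clog 2 n * 2 ^ Nat.clog 2 n := by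
      rw [show M n = Nat.clog 2 n + Nat.clog 2 n from (two_mul _), pow_add]
    have h4 : 2 * n ≤ n * n := Nat.mul_le_mul_right n hn
    omega
  have hb2 : b * 2 ^ (2 * n) ≤ 2 ^ n * 2 ^ (2 ^ blobDim n) :=
    le_trans (Nat.mul_le_mul_left _ (Nat.pow_le_pow_right (by norm_num) h2M))
      (notGood_bound n)
  have key : 2 ^ n * (b * 2 ^ n) ≤ 2 ^ n * 2 ^ (2 ^ blobDim n) := by
    calc 2 ^ n * (b * 2 ^ n) = b * 2 ^ (2 * n) := by
          rw [two_mul, pow_add]; ring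
      _ ≤ 2 ^ n * 2 ^ (2 ^ blobDim n) := hb2
  exact Nat.le_of_mul_le_mul_left key (Nat.pow_pos (by norm_num))

end Blob


/-- The proportion, among all `2^(2^(N(n)))` red/blue colorings of `Q_{N(n)}`
with `N(n) = n + 2(n+1)⌈log₂ n⌉`, of those containing a monochromatic copy of
`Q_n` tends to `1` as `n → ∞`: a uniformly random red/blue coloring of
`Q_{N(n)}` contains a monochromatic copy of `Q_n` asymptotically almost surely. -/
theorem random_coloring_mono_cube_aas :
    Filter.Tendsto
      (fun n : ℕ =>
        (Nat.card {c : Finset (Fin (blobDim n)) → Bool //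
            ∃ (col : Bool) (f : Finset (Fin n) → Finset (Fin (blobDim n))),
              IsCubeEmb f ∧ ∀ A, c (f A) = col} : ℝ) / 2 ^ (2 ^ blobDim n))
      Filter.atTop (nhds 1) := by
  have hT : ∀ n : ℕ, (0:ℝ) < 2 ^ (2 ^ blobDim n) := fun n => by positivity
  apply tendsto_of_tendsto_of_tendsto_of_le_of_le'
    (g := fun n : ℕ => 1 - (1/2:ℝ)^n) (h := fun _ : ℕ => (1:ℝ))
  · have h0 : Filter.Tendsto (fun n : ℕ => (1/2:ℝ)^n) Filter.atTop (nhds 0) :=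
      tendsto_pow_atTop_nhds_zero_of_lt_one (by norm_num) (by norm_num)
    simpa using tendsto_const_nhds.sub h0
  · exact tendsto_const_nhds
  · filter_upwards [Filter.eventually_ge_atTop 2] with n hn
    set tgt := Nat.card {c : Finset (Fin (blobDim n)) → Bool // Blob.Target n c} with htgt
    set b := Nat.card {c : Finset (Fin (blobDim n)) → Bool // ¬ Blob.Good n c} with hb
    show 1 - (1/2:ℝ)^n ≤ (tgt : ℝ) / 2 ^ (2 ^ blobDim n)
    rw [le_div_iff₀ (hT n)]
    have h1 : (2:ℝ) ^ (2 ^ blobDim n) ≤ (tgt : ℝ) + b := by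
      have := Blob.card_target_ge n
      push_cast
      exact_mod_cast this
    have h2 : (b : ℝ) * 2 ^ n ≤ 2 ^ (2 ^ blobDim n) := by
      exact_mod_cast Blob.bad_small n hn
    have h3 : ((1:ℝ)/2)^n * 2^n = 1 := by
      rw [← mul_pow]; norm_num
    have h4 : (0:ℝ) < 2 ^ n := by positivity
    have h5 : (0:ℝ) ≤ (1/2:ℝ)^n := by positivity
    nlinarith [hT n]
  · filter_upwards with n
    set tgt := Nat.card {c : Finset (Fin (blobDim n)) → Bool // Blob.Target n c} with htgt
    show (tgt : ℝ) / 2 ^ (2 ^ blobDim n) ≤ 1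
    rw [div_le_one (hT n)]
    exact_mod_cast Blob.card_target_le n
end

section
/- (Layered Lemma) For every integer n ≥ 0 there exists an integer N such that for every red/blue coloring c of the subsets of [N] there is a set S ⊆ [N] with |S| = n on which c is layered, i.e., for each i with 0 ≤ i ≤ n, all i-element subsets of S receive the same color. -/
/-- Finite Ramsey theorem for `r`-uniform hypergraphs with two colors,
stated over finsets of naturals. -/
lemma ramsey_aux (r : ℕ) : ∀ p q : ℕ, ∃ N : ℕ, ∀ (c : Finset ℕ → Bool) (V : Finset ℕ),
    N ≤ V.card →
    (∃ S ⊆ V, S.card = p ∧ ∀ A ⊆ S, A.card = r → c A = true) ∨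
    (∃ S ⊆ V, S.card = q ∧ ∀ A ⊆ S, A.card = r → c A = false) := by
  induction r with
  | zero =>
    intro p q
    refine ⟨max p q, fun c V hV => ?_⟩
    cases h : c ∅ with
    | true =>
      left
      obtain ⟨S, hS, hcard⟩ := Finset.exists_subset_card_eq (le_trans (le_max_left p q) hV)
      exact ⟨S, hS, hcard, fun A _ hA => by rw [Finset.card_eq_zero.mp hA, h]⟩
    | false =>
      right
      obtain ⟨S, hS, hcard⟩ := Finset.exists_subset_card_eq (le_trans (le_max_right p q) hV)
      exact ⟨S, hS, hcard, fun A _ hA => by rw [Finset.card_eq_zero.mp hA, h]⟩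
  | succ r ih =>
    have key : ∀ m : ℕ, ∀ p q : ℕ, p + q ≤ m → ∃ N : ℕ, ∀ (c : Finset ℕ → Bool) (V : Finset ℕ),
        N ≤ V.card →
        (∃ S ⊆ V, S.card = p ∧ ∀ A ⊆ S, A.card = r + 1 → c A = true) ∨
        (∃ S ⊆ V, S.card = q ∧ ∀ A ⊆ S, A.card = r + 1 → c A = false) := by
      intro m
      induction m with
      | zero =>
        intro p q hpq
        have hp : p = 0 := by omega
        refine ⟨0, fun c V _ => Or.inl ⟨∅, Finset.empty_subset _, by simp [hp], ?_⟩⟩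
        intro A hA hAc
        rw [Finset.subset_empty] at hA
        subst hA
        simp at hAc
      | succ m ihm =>
        intro p q hpq
        by_cases hp : p ≤ r
        · refine ⟨p, fun c V hV => ?_⟩
          obtain ⟨S, hS, hcard⟩ := Finset.exists_subset_card_eq hV
          refine Or.inl ⟨S, hS, hcard, fun A hA hAc => ?_⟩
          have := Finset.card_le_card hA
          omega
        · by_cases hq : q ≤ r
          · refine ⟨q, fun c V hV => ?_⟩
            obtain ⟨S, hS, hcard⟩ := Finset.exists_subset_card_eq hV
            refine Or.inr ⟨S, hS, hcard, fun A hA hAc => ?_⟩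
            have := Finset.card_le_card hA
            omega
          · push_neg at hp hq
            obtain ⟨N1, hN1⟩ := ihm (p - 1) q (by omega)
            obtain ⟨N2, hN2⟩ := ihm p (q - 1) (by omega)
            obtain ⟨N0, hN0⟩ := ih N1 N2
            refine ⟨N0 + 1, fun c V hV => ?_⟩
            have hVne : V.Nonempty := Finset.card_pos.mp (by omega)
            obtain ⟨x, hx⟩ := hVne
            set W := V.erase x with hW
            have hWcard : N0 ≤ W.card := by
              rw [hW, Finset.card_erase_of_mem hx]
              omega
            have hWV : W ⊆ V := Finset.erase_subset _ _
            rcases hN0 (fun A => c (insert x A)) W hWcard with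
              ⟨S', hS'W, hS'card, hS'hom⟩ | ⟨S', hS'W, hS'card, hS'hom⟩
            · -- all r-subsets A of S' have c (insert x A) = true
              rcases hN1 c S' (le_of_eq hS'card.symm) with
                ⟨T, hTS', hTcard, hThom⟩ | ⟨T, hTS', hTcard, hThom⟩
              · -- build insert x T
                left
                have hxT : x ∉ T := fun h =>
                  (Finset.notMem_erase x V) (hS'W (hTS' h))
                refine ⟨insert x T, ?_, ?_, ?_⟩
                · intro y hy
                  rcases Finset.mem_insert.mp hy with h | h
                  · exact h ▸ hx
                  · exact hWV (hS'W (hTS' h))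
                · rw [Finset.card_insert_of_notMem hxT, hTcard]; omega
                · intro A hA hAc
                  by_cases hxA : x ∈ A
                  · have hAe : A.erase x ⊆ T := by
                      intro y hy
                      rcases Finset.mem_insert.mp (hA (Finset.mem_of_mem_erase hy)) with h | h
                      · exact absurd h (Finset.ne_of_mem_erase hy)
                      · exact h
                    have : c (insert x (A.erase x)) = true := by
                      refine hS'hom _ (hAe.trans hTS') ?_
                      rw [Finset.card_erase_of_mem hxA, hAc]
                      omega
                    rwa [Finset.insert_erase hxA] at this
                  · have hAT : A ⊆ T := fun y hy =>
                      (Finset.mem_insert.mp (hA hy)).resolve_left (fun h => hxA (h ▸ hy))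
                    exact hThom A hAT hAc
              · exact Or.inr ⟨T, (hTS'.trans hS'W).trans hWV, hTcard, hThom⟩
            · -- symmetric case: all r-subsets A of S' have c (insert x A) = false
              rcases hN2 c S' (le_of_eq hS'card.symm) with
                ⟨T, hTS', hTcard, hThom⟩ | ⟨T, hTS', hTcard, hThom⟩
              · exact Or.inl ⟨T, (hTS'.trans hS'W).trans hWV, hTcard, hThom⟩
              · right
                have hxT : x ∉ T := fun h =>
                  (Finset.notMem_erase x V) (hS'W (hTS' h))
                refine ⟨insert x T, ?_, ?_, ?_⟩
                · intro y hy
                  rcases Finset.mem_insert.mp hy with h | h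
                  · exact h ▸ hx
                  · exact hWV (hS'W (hTS' h))
                · rw [Finset.card_insert_of_notMem hxT, hTcard]; omega
                · intro A hA hAc
                  by_cases hxA : x ∈ A
                  · have hAe : A.erase x ⊆ T := by
                      intro y hy
                      rcases Finset.mem_insert.mp (hA (Finset.mem_of_mem_erase hy)) with h | h
                      · exact absurd h (Finset.ne_of_mem_erase hy)
                      · exact h
                    have : c (insert x (A.erase x)) = false := by
                      refine hS'hom _ (hAe.trans hTS') ?_
                      rw [Finset.card_erase_of_mem hxA, hAc]
                      omega
                    rwa [Finset.insert_erase hxA] at this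
                  · have hAT : A ⊆ T := fun y hy =>
                      (Finset.mem_insert.mp (hA hy)).resolve_left (fun h => hxA (h ▸ hy))
                    exact hThom A hAT hAc
    intro p q
    exact key (p + q) p q le_rfl

/-- Monochromatic version of Ramsey. -/
lemma ramsey_mono (r p : ℕ) : ∃ N : ℕ, ∀ (c : Finset ℕ → Bool) (V : Finset ℕ),
    N ≤ V.card → ∃ S ⊆ V, S.card = p ∧ ∀ A B, A ⊆ S → B ⊆ S → A.card = r → B.card = r →
      c A = c B := by
  obtain ⟨N, hN⟩ := ramsey_aux r p p
  refine ⟨N, fun c V hV => ?_⟩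
  rcases hN c V hV with ⟨S, hS, hcard, hhom⟩ | ⟨S, hS, hcard, hhom⟩ <;>
    exact ⟨S, hS, hcard, fun A B hA hB hAc hBc => by
      rw [hhom A hA hAc, hhom B hB hBc]⟩

/-- Layered lemma over `ℕ`, with layeredness up to level `k`. -/
lemma layered_nat (n : ℕ) : ∀ k : ℕ, ∃ N : ℕ, ∀ (c : Finset ℕ → Bool) (V : Finset ℕ),
    N ≤ V.card → ∃ S ⊆ V, S.card = n ∧ ∀ A B, A ⊆ S → B ⊆ S → A.card = B.card →
      A.card ≤ k → c A = c B := by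
  intro k
  induction k with
  | zero =>
    refine ⟨n, fun c V hV => ?_⟩
    obtain ⟨S, hS, hcard⟩ := Finset.exists_subset_card_eq hV
    refine ⟨S, hS, hcard, fun A B hA hB hcards hle => ?_⟩
    have hA0 : A = ∅ := Finset.card_eq_zero.mp (by omega)
    have hB0 : B = ∅ := Finset.card_eq_zero.mp (by omega)
    rw [hA0, hB0]
  | succ k ihk =>
    obtain ⟨Nk, hNk⟩ := ihk
    obtain ⟨N, hN⟩ := ramsey_mono (k + 1) Nk
    refine ⟨N, fun c V hV => ?_⟩
    obtain ⟨S', hS'V, hS'card, hS'hom⟩ := hN c V hV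
    obtain ⟨S, hSS', hScard, hShom⟩ := hNk c S' (le_of_eq hS'card.symm)
    refine ⟨S, hSS'.trans hS'V, hScard, fun A B hA hB hcards hle => ?_⟩
    rcases Nat.lt_or_ge A.card (k + 1) with h | h
    · exact hShom A B hA hB hcards (by omega)
    · exact hS'hom A B (hA.trans hSS') (hB.trans hSS') (by omega) (by omega)

/-- Layered Lemma: for every `n` there is `N` such that every red/blue coloring
`c` of the subsets of an `N`-element set admits an `n`-element set `S` on which
`c` is layered, i.e. subsets of `S` of equal size get equal colors. -/
theorem layered_lemma (n : ℕ) :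
    ∃ N : ℕ, ∀ c : Finset (Fin N) → Bool,
      ∃ S : Finset (Fin N), S.card = n ∧
        ∀ A B : Finset (Fin N), A ⊆ S → B ⊆ S → A.card = B.card → c A = c B := by
  obtain ⟨N, hN⟩ := layered_nat n n
  refine ⟨N, fun c => ?_⟩
  -- encode the coloring over `ℕ`
  set e : Fin N ↪ ℕ := Fin.valEmbedding with he
  have hd : ∀ (d : Finset ℕ → Bool), True := fun _ => trivial
  classical
  let d : Finset ℕ → Bool := fun A =>
    if h : ∀ m ∈ A, m < N then c (A.attachFin h) else true
  have hrange : N ≤ (Finset.range N).card := by simp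
  obtain ⟨S, hSV, hScard, hShom⟩ := hN d (Finset.range N) hrange
  have hSlt : ∀ m ∈ S, m < N := fun m hm => Finset.mem_range.mp (hSV hm)
  refine ⟨S.attachFin hSlt, by rw [Finset.card_attachFin, hScard], ?_⟩
  intro A B hA hB hcards
  have key : ∀ (A : Finset (Fin N)), A ⊆ S.attachFin hSlt →
      A.map e ⊆ S ∧ d (A.map e) = c A := by
    intro A hA
    have hsub : A.map e ⊆ S := by
      intro y hy
      obtain ⟨a, ha, rfl⟩ := Finset.mem_map.mp hy
      exact (Finset.mem_attachFin hSlt).mp (hA ha)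
    refine ⟨hsub, ?_⟩
    have hlt : ∀ m ∈ A.map e, m < N := fun m hm => hSlt m (hsub hm)
    have : (A.map e).attachFin hlt = A := by
      ext a
      rw [Finset.mem_attachFin]
      constructor
      · intro h
        obtain ⟨b, hb, hba⟩ := Finset.mem_map.mp h
        have : b = a := Fin.val_injective hba
        exact this ▸ hb
      · intro h
        exact Finset.mem_map.mpr ⟨a, h, rfl⟩
    simp only [d, dif_pos hlt, this]
  obtain ⟨hA1, hA2⟩ := key A hA
  obtain ⟨hB1, hB2⟩ := key B hB
  rw [← hA2, ← hB2]
  refine hShom _ _ hA1 hB1 (by rw [Finset.card_map, Finset.card_map, hcards]) ?_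
  rw [Finset.card_map]
  calc A.card ≤ (S.attachFin hSlt).card := Finset.card_le_card hA
    _ = n := by rw [Finset.card_attachFin, hScard]
end

section
/- (Blob Lemma, embedding part) Let P be a finite poset, let n be an integer such that P admits an embedding into the Boolean lattice Q_n, let h be the number of elements in a largest chain of P, and let m ≥ 1 be an integer. Then the Boolean lattice Q_{n + h·m} contains a copy of the lexicographic product P × Q_m. -/
section Aux

variable {P : Type*} [PartialOrder P] [Fintype P]

/-- Any `LTSeries` gives a chain, so heights are bounded by the chain bound. -/
private lemma height_le_of_chain_le {h : ℕ}
    (hchain_le : ∀ C : Finset P, IsChain (· ≤ ·) (C : Set P) → C.card ≤ h)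
    (p : P) : Order.height p ≤ (h - 1 : ℕ) := by
  classical
  apply Order.height_le
  intro q _
  have hinj : Function.Injective q.toFun := q.strictMono.injective
  have hchain : IsChain (· ≤ ·) ((Finset.univ.image q.toFun : Finset P) : Set P) := by
    intro x hx y hy hxy
    simp only [Finset.coe_image, Set.mem_image] at hx hy
    obtain ⟨i, -, rfl⟩ := hx
    obtain ⟨j, -, rfl⟩ := hy
    rcases le_total i j with hij | hij
    · exact Or.inl (q.monotone hij)
    · exact Or.inr (q.monotone hij)
  have hcard : (Finset.univ.image q.toFun).card = q.length + 1 := by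
    rw [Finset.card_image_of_injective _ hinj, Finset.card_univ, Fintype.card_fin]
  have := hchain_le _ hchain
  rw [hcard] at this
  exact_mod_cast Nat.le_sub_one_of_lt (by omega)

end Aux

/-- Blob Lemma (embedding part): if a finite poset `P` embeds into `Q_n` and
every chain in `P` has at most `h` elements, with some chain having exactly
`h` elements, then for every `m ≥ 1` the Boolean lattice `Q_{n + h·m}` contains
a copy of the lexicographic product `P × Q_m`, ordered by
`(p₁,q₁) ≤ (p₂,q₂)` iff `p₁ < p₂`, or `p₁ = p₂` and `q₁ ⊆ q₂`. -/
theorem blob_lemma_embedding {P : Type*} [PartialOrder P] [Fintype P]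
    (n h m : ℕ) (hm : 1 ≤ m)
    (hemb : ∃ e : P → Finset (Fin n), ∀ x y : P, x ≤ y ↔ e x ⊆ e y)
    (hchain_le : ∀ C : Finset P, IsChain (· ≤ ·) (C : Set P) → C.card ≤ h)
    (hchain_eq : ∃ C : Finset P, IsChain (· ≤ ·) (C : Set P) ∧ C.card = h) :
    ∃ g : P × Finset (Fin m) → Finset (Fin (n + h * m)),
      ∀ a b : P × Finset (Fin m),
        (a.1 < b.1 ∨ (a.1 = b.1 ∧ a.2 ⊆ b.2)) ↔ g a ⊆ g b := by
  classical
  obtain ⟨e, he⟩ := hemb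
  -- the rank function
  set r : P → ℕ := fun p => (Order.height p).toNat with hr
  have hne : ∀ p : P, h ≥ 1 := by
    intro p
    have := hchain_le {p} (by
      simp only [Finset.coe_singleton]
      exact Set.subsingleton_singleton.isChain)
    simpa using this
  have hfin : ∀ p : P, Order.height p < ⊤ :=
    fun p => lt_of_le_of_lt (height_le_of_chain_le hchain_le p) (by exact_mod_cast ENat.coe_lt_top _)
  have hlt : ∀ p : P, r p < h := by
    intro p
    have h1 := height_le_of_chain_le hchain_le p
    have h2 : r p ≤ h - 1 := by
      rw [hr]
      simpa using ENat.toNat_le_of_le_coe h1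
    have := hne p
    omega
  have hmono : ∀ {p q : P}, p < q → r p < r q := by
    intro p q hpq
    have h1 : Order.height p < Order.height q := Order.height_strictMono hpq (hfin p)
    have h2 := hfin p
    have h3 := hfin q
    rw [hr]
    simp only
    lift Order.height p to ℕ using h2.ne with a ha
    lift Order.height q to ℕ using h3.ne with b hb
    exact_mod_cast h1
  -- block sets
  set B : P → Finset (Fin m) → Finset (Fin h × Fin m) := fun p S =>
    Finset.univ.filter fun q => (q.1 : ℕ) < r p ∨ ((q.1 : ℕ) = r p ∧ q.2 ∈ S) with hB
  -- the final re-indexing equivalence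
  set ι : (Fin n ⊕ Fin h × Fin m) ≃ Fin (n + h * m) :=
    (Equiv.sumCongr (Equiv.refl _) finProdFinEquiv).trans finSumFinEquiv with hι
  set inlE : Fin n ↪ Fin n ⊕ Fin h × Fin m := ⟨Sum.inl, Sum.inl_injective⟩
  set inrE : (Fin h × Fin m) ↪ Fin n ⊕ Fin h × Fin m := ⟨Sum.inr, Sum.inr_injective⟩
  refine ⟨fun a => (((e a.1).map inlE ∪ (B a.1 a.2).map inrE).map ι.toEmbedding), ?_⟩
  rintro ⟨p, S⟩ ⟨q, T⟩
  simp only [Finset.map_subset_map]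
  have hsplit : ((e p).map inlE ∪ (B p S).map inrE ⊆ (e q).map inlE ∪ (B q T).map inrE) ↔
      (e p ⊆ e q ∧ B p S ⊆ B q T) := by
    constructor
    · intro H
      constructor
      · intro x hx
        have := H (Finset.mem_union_left _ (Finset.mem_map_of_mem inlE hx))
        rcases Finset.mem_union.1 this with h' | h'
        · obtain ⟨y, hy, hxy⟩ := Finset.mem_map.1 h'
          cases Sum.inl_injective hxy; exact hy
        · obtain ⟨y, hy, hxy⟩ := Finset.mem_map.1 h'
          exact absurd hxy (by simp [inlE, inrE])
      · intro x hx
        have := H (Finset.mem_union_right _ (Finset.mem_map_of_mem inrE hx))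
        rcases Finset.mem_union.1 this with h' | h'
        · obtain ⟨y, hy, hxy⟩ := Finset.mem_map.1 h'
          exact absurd hxy (by simp [inlE, inrE])
        · obtain ⟨y, hy, hxy⟩ := Finset.mem_map.1 h'
          cases Sum.inr_injective hxy; exact hy
    · rintro ⟨h1, h2⟩
      exact Finset.union_subset_union (Finset.map_subset_map.2 h1) (Finset.map_subset_map.2 h2)
  rw [hsplit]
  constructor
  · rintro (hpq | ⟨rfl, hST⟩)
    · refine ⟨(he p q).1 hpq.le, ?_⟩
      intro x hx
      simp only [hB, Finset.mem_filter, Finset.mem_univ, true_and] at hx ⊢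
      have hrr := hmono hpq
      rcases hx with h' | ⟨h', -⟩
      · exact Or.inl (by omega)
      · exact Or.inl (by omega)
    · exact ⟨subset_rfl, by
        intro x hx
        simp only [hB, Finset.mem_filter, Finset.mem_univ, true_and] at hx ⊢
        rcases hx with h' | ⟨h', hs⟩
        · exact Or.inl h'
        · exact Or.inr ⟨h', hST hs⟩⟩
  · rintro ⟨h1, h2⟩
    have hpq : p ≤ q := (he p q).2 h1
    rcases eq_or_lt_of_le hpq with rfl | hlt'
    · refine Or.inr ⟨rfl, ?_⟩
      intro s hs
      have hmem : (⟨⟨r p, hlt p⟩, s⟩ : Fin h × Fin m) ∈ B p S :=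
        Finset.mem_filter.2 ⟨Finset.mem_univ _, Or.inr ⟨rfl, hs⟩⟩
      have := (Finset.mem_filter.1 (h2 hmem)).2
      rcases this with h' | ⟨-, ht⟩
      · simp at h'
      · exact ht
    · exact Or.inl hlt'
end

section
/- (Blob Lemma, Ramsey part) Let P be a finite poset, let n be an integer such that P admits an embedding into the Boolean lattice Q_n, let h be the number of elements in a largest chain of P, and let m ≥ 1 be an integer. Then every red/blue coloring of Q_{n + h·m} contains a red copy of P or a blue copy of Q_m. In particular, R(P, Q_m) ≤ dim₂(P) + h(P)·m. -/
/-- The 2-dimension of a poset `P`: the smallest `n` such that `P` embeds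
into the Boolean lattice `Q_n`. -/
noncomputable def dimTwo (P : Type*) [PartialOrder P] : ℕ :=
  sInf {n | ∃ e : P → Finset (Fin n), ∀ x y : P, x ≤ y ↔ e x ⊆ e y}

/-- The poset Ramsey number `R(P, Q_m)`: the smallest `N` such that every
red/blue coloring of `Q_N` contains a red copy of `P` or a blue copy of `Q_m`. -/
noncomputable def posetRamseyCube (P : Type*) [PartialOrder P] (m : ℕ) : ℕ :=
  sInf {N | ∀ c : Finset (Fin N) → Bool,
    (∃ e : P → Finset (Fin N), (∀ x y : P, x ≤ y ↔ e x ⊆ e y) ∧ ∀ x, c (e x) = true) ∨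
    (∃ f : Finset (Fin m) → Finset (Fin N), IsCubeEmb f ∧ ∀ A, c (f A) = false)}

/-- The "blob" set: base coordinates from `E`, blocks strictly below level `L`
(1-indexed) full, block `L` given by `S`. -/
def blob (n h m : ℕ) (hm : 0 < m) (L : ℕ) (E : Finset (Fin n)) (S : Finset (Fin m)) :
    Finset (Fin (n + h * m)) :=
  Finset.univ.filter fun q : Fin (n + h * m) =>
    if hq : (q : ℕ) < n then (⟨(q : ℕ), hq⟩ : Fin n) ∈ E
    else ((q : ℕ) - n) / m + 1 < L ∨
      (((q : ℕ) - n) / m + 1 = L ∧ (⟨((q : ℕ) - n) % m, Nat.mod_lt _ hm⟩ : Fin m) ∈ S)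

lemma mem_blob {n h m : ℕ} {hm : 0 < m} {L : ℕ} {E : Finset (Fin n)} {S : Finset (Fin m)}
    {q : Fin (n + h * m)} :
    q ∈ blob n h m hm L E S ↔
      (if hq : (q : ℕ) < n then (⟨(q : ℕ), hq⟩ : Fin n) ∈ E
       else ((q : ℕ) - n) / m + 1 < L ∨
        (((q : ℕ) - n) / m + 1 = L ∧ (⟨((q : ℕ) - n) % m, Nat.mod_lt _ hm⟩ : Fin m) ∈ S)) := by
  simp [blob]

lemma blob_mono {n h m : ℕ} {hm : 0 < m} {L L' : ℕ} {E E' : Finset (Fin n)}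
    {S S' : Finset (Fin m)} (hE : E ⊆ E') (hL : L < L' ∨ (L = L' ∧ S ⊆ S')) :
    blob n h m hm L E S ⊆ blob n h m hm L' E' S' := by
  intro q hq
  rw [mem_blob] at hq ⊢
  split_ifs at hq ⊢ with h1
  · exact hE hq
  · rcases hq with h2 | ⟨h2, h3⟩
    · rcases hL with hL | ⟨hL, _⟩ <;> exact Or.inl (by omega)
    · rcases hL with hL | ⟨hL, hS⟩
      · exact Or.inl (by omega)
      · exact Or.inr ⟨by omega, hS h3⟩

lemma blob_sub_base {n h m : ℕ} {hm : 0 < m} {L L' : ℕ} {E E' : Finset (Fin n)}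
    {S S' : Finset (Fin m)}
    (hsub : blob n h m hm L E S ⊆ blob n h m hm L' E' S') : E ⊆ E' := by
  intro p hp
  have hplt : ((Fin.castAdd (h * m) p : Fin (n + h * m)) : ℕ) < n := by
    simpa using p.isLt
  have hq : (Fin.castAdd (h * m) p) ∈ blob n h m hm L E S := by
    rw [mem_blob, dif_pos hplt]
    simpa using hp
  have hq' := hsub hq
  rw [mem_blob, dif_pos hplt] at hq'
  simpa using hq'

lemma blob_sub_cube {n h m : ℕ} {hm : 0 < m} {L : ℕ} {E E' : Finset (Fin n)}
    {S S' : Finset (Fin m)} (hL1 : 1 ≤ L) (hLh : L ≤ h)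
    (hsub : blob n h m hm L E S ⊆ blob n h m hm L E' S') : S ⊆ S' := by
  intro j hj
  have hjm : (j : ℕ) < m := j.isLt
  have hlt : n + (m * (L - 1) + (j : ℕ)) < n + h * m := by
    have h1 : m * (L - 1) + m = m * L := by
      calc m * (L - 1) + m = m * (L - 1 + 1) := (Nat.mul_succ _ _).symm
        _ = m * L := by rw [Nat.sub_add_cancel hL1]
    have h2 : m * L ≤ h * m := by
      rw [Nat.mul_comm]; exact Nat.mul_le_mul_right m hLh
    omega
  set q : Fin (n + h * m) := ⟨n + (m * (L - 1) + (j : ℕ)), hlt⟩ with hqdef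
  have hnn : ¬ ((q : ℕ) < n) := by simp [hqdef]
  have hsubl : (q : ℕ) - n = m * (L - 1) + (j : ℕ) := by simp [hqdef]
  have hdiv : ((q : ℕ) - n) / m + 1 = L := by
    rw [hsubl, Nat.mul_add_div hm, Nat.div_eq_of_lt hjm]
    omega
  have hmod : ((q : ℕ) - n) % m = (j : ℕ) := by
    rw [hsubl, Nat.mul_add_mod, Nat.mod_eq_of_lt hjm]
  have hjq : (⟨((q : ℕ) - n) % m, Nat.mod_lt _ hm⟩ : Fin m) = j := Fin.ext hmod
  have hq : q ∈ blob n h m hm L E S := by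
    rw [mem_blob, dif_neg hnn]
    exact Or.inr ⟨hdiv, hjq ▸ hj⟩
  have hq' := hsub hq
  rw [mem_blob, dif_neg hnn] at hq'
  rcases hq' with h2 | ⟨_, h3⟩
  · omega
  · exact hjq ▸ h3

/-- The height of `x`: largest size of a chain all of whose elements are `≤ x`. -/
noncomputable def heightTo {P : Type*} [PartialOrder P] (x : P) : ℕ :=
  sSup {k | ∃ C : Finset P, IsChain (· ≤ ·) (C : Set P) ∧ (∀ z ∈ C, z ≤ x) ∧ C.card = k}

lemma blob_key {P : Type*} [PartialOrder P] [Fintype P] (n h m : ℕ) (hm : 1 ≤ m)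
    (hemb : ∃ e : P → Finset (Fin n), ∀ x y : P, x ≤ y ↔ e x ⊆ e y)
    (hchain_le : ∀ C : Finset P, IsChain (· ≤ ·) (C : Set P) → C.card ≤ h)
    (c : Finset (Fin (n + h * m)) → Bool) :
    (∃ e : P → Finset (Fin (n + h * m)),
        (∀ x y : P, x ≤ y ↔ e x ⊆ e y) ∧ ∀ x, c (e x) = true) ∨
    (∃ f : Finset (Fin m) → Finset (Fin (n + h * m)),
        IsCubeEmb f ∧ ∀ A, c (f A) = false) := by
  classical
  cases isEmpty_or_nonempty P with
  | inl hP =>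
    exact Or.inl ⟨fun x => isEmptyElim x, fun x => isEmptyElim x, fun x => isEmptyElim x⟩
  | inr hP =>
    obtain ⟨e, he⟩ := hemb
    have hbdd : ∀ x : P, BddAbove
        {k | ∃ C : Finset P, IsChain (· ≤ ·) (C : Set P) ∧ (∀ z ∈ C, z ≤ x) ∧ C.card = k} := by
      intro x
      refine ⟨h, ?_⟩
      rintro k ⟨C, hC, _, hcard⟩
      exact hcard ▸ hchain_le C hC
    have h1mem : ∀ x : P, 1 ∈
        {k | ∃ C : Finset P, IsChain (· ≤ ·) (C : Set P) ∧ (∀ z ∈ C, z ≤ x) ∧ C.card = k} := by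
      intro x
      exact ⟨{x}, by simp [Set.subsingleton_singleton.isChain], by simp, by simp⟩
    have hone : ∀ x : P, 1 ≤ heightTo x := fun x => le_csSup (hbdd x) (h1mem x)
    have hleh : ∀ x : P, heightTo x ≤ h := by
      intro x
      refine csSup_le ⟨1, h1mem x⟩ ?_
      rintro k ⟨C, hC, _, hcard⟩
      exact hcard ▸ hchain_le C hC
    have hstrict : ∀ x y : P, x < y → heightTo x + 1 ≤ heightTo y := by
      intro x y hxy
      obtain ⟨C, hC, hCle, hCcard⟩ := Nat.sSup_mem ⟨1, h1mem x⟩ (hbdd x)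
      have hyC : y ∉ C := fun hy => absurd (hCle y hy) hxy.not_ge
      have hins : IsChain (· ≤ ·) ((insert y C : Finset P) : Set P) := by
        rw [Finset.coe_insert]
        exact hC.insert (fun b hb _ => Or.inr ((hCle b hb).trans hxy.le))
      have hinsle : ∀ z ∈ insert y C, z ≤ y := by
        intro z hz
        rcases Finset.mem_insert.mp hz with rfl | hz
        · exact le_refl z
        · exact (hCle z hz).trans hxy.le
      have : heightTo x + 1 ∈
          {k | ∃ C : Finset P, IsChain (· ≤ ·) (C : Set P) ∧ (∀ z ∈ C, z ≤ y) ∧ C.card = k} := by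
        exact ⟨insert y C, hins, hinsle, by rw [Finset.card_insert_of_notMem hyC, hCcard]; rfl⟩
      exact le_csSup (hbdd y) this
    have hm0 : 0 < m := hm
    by_cases hblue :
        ∃ x : P, ∀ S : Finset (Fin m), c (blob n h m hm0 (heightTo x) (e x) S) = false
    · obtain ⟨x₀, hx₀⟩ := hblue
      refine Or.inr ⟨fun A => blob n h m hm0 (heightTo x₀) (e x₀) A, ?_, fun A => hx₀ A⟩
      intro A B
      constructor
      · intro hAB
        exact blob_mono (Finset.Subset.refl _) (Or.inr ⟨rfl, hAB⟩)
      · intro hAB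
        exact blob_sub_cube (hone x₀) (hleh x₀) hAB
    · push_neg at hblue
      choose S hS using hblue
      refine Or.inl ⟨fun x => blob n h m hm0 (heightTo x) (e x) (S x), ?_, ?_⟩
      · intro x y
        constructor
        · intro hxy
          rcases eq_or_lt_of_le hxy with rfl | hlt
          · exact Finset.Subset.refl _
          · exact blob_mono ((he x y).mp hxy) (Or.inl (hstrict x y hlt))
        · intro hsub
          exact (he x y).mpr (blob_sub_base hsub)
      · intro x
        simpa using hS x

/-- Blob Lemma (Ramsey part): if the finite poset `P` embeds into `Q_n`, every
chain of `P` has at most `h` elements and some chain has exactly `h` elements,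
then for `m ≥ 1` every red/blue coloring of `Q_{n + h·m}` contains a red copy
of `P` or a blue copy of `Q_m`; in particular `R(P, Q_m) ≤ dim₂(P) + h·m`. -/
theorem blob_lemma_ramsey {P : Type*} [PartialOrder P] [Fintype P]
    (n h m : ℕ) (hm : 1 ≤ m)
    (hemb : ∃ e : P → Finset (Fin n), ∀ x y : P, x ≤ y ↔ e x ⊆ e y)
    (hchain_le : ∀ C : Finset P, IsChain (· ≤ ·) (C : Set P) → C.card ≤ h)
    (hchain_eq : ∃ C : Finset P, IsChain (· ≤ ·) (C : Set P) ∧ C.card = h) :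
    (∀ c : Finset (Fin (n + h * m)) → Bool,
      (∃ e : P → Finset (Fin (n + h * m)),
          (∀ x y : P, x ≤ y ↔ e x ⊆ e y) ∧ ∀ x, c (e x) = true) ∨
      (∃ f : Finset (Fin m) → Finset (Fin (n + h * m)),
          IsCubeEmb f ∧ ∀ A, c (f A) = false)) ∧
    posetRamseyCube P m ≤ dimTwo P + h * m := by
  constructor
  · exact fun c => blob_key n h m hm hemb hchain_le c
  · have hne : {n' | ∃ e : P → Finset (Fin n'), ∀ x y : P, x ≤ y ↔ e x ⊆ e y}.Nonempty :=
      ⟨n, hemb⟩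
    have hdim : ∃ e : P → Finset (Fin (dimTwo P)), ∀ x y : P, x ≤ y ↔ e x ⊆ e y :=
      Nat.sInf_mem hne
    have hmem : (dimTwo P + h * m) ∈ {N | ∀ c : Finset (Fin N) → Bool,
        (∃ e : P → Finset (Fin N), (∀ x y : P, x ≤ y ↔ e x ⊆ e y) ∧ ∀ x, c (e x) = true) ∨
        (∃ f : Finset (Fin m) → Finset (Fin N), IsCubeEmb f ∧ ∀ A, c (f A) = false)} :=
      fun c => blob_key (dimTwo P) h m hm hdim hchain_le c
    exact Nat.sInf_le hmem
end

section
/- (Antichain Lemma) Let ℓ < N and suppose the red elements of a red/blue coloring of the power set 2^{[N]} form antichains 𝒜₁, …, 𝒜_ℓ such that for each i = 1, …, ℓ, the family 𝒜ᵢ is the set of minimal elements of 𝒜ᵢ ∪ 𝒜_{i+1} ∪ ⋯ ∪ 𝒜_ℓ. Then 2^{[N]} contains a blue copy of the Boolean lattice Q_{N−ℓ}, that is, a copy of Q_{N−ℓ} all of whose elements avoid 𝒜₁ ∪ ⋯ ∪ 𝒜_ℓ. -/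
/-- Antichain Lemma: if in a red/blue coloring of `2^[N]` (red = `true`) the
red elements form antichains `𝒜₁, …, 𝒜_ℓ` with `ℓ < N`, where each `𝒜ᵢ` is the
set of minimal elements of `𝒜ᵢ ∪ ⋯ ∪ 𝒜_ℓ`, then there is a blue copy of
`Q_{N-ℓ}`. -/
theorem antichain_lemma (N l : ℕ) (hl : l < N)
    (c : Finset (Fin N) → Bool)
    (A : Fin l → Set (Finset (Fin N)))
    (hred : ∀ S : Finset (Fin N), c S = true ↔ ∃ i, S ∈ A i)
    (hanti : ∀ i, IsAntichain (· ⊆ ·) (A i))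
    (hmin : ∀ i : Fin l,
      A i = {S | (∃ j, i ≤ j ∧ S ∈ A j) ∧
        ∀ T : Finset (Fin N), (∃ j, i ≤ j ∧ T ∈ A j) → T ⊆ S → T = S}) :
    ∃ f : Finset (Fin (N - l)) → Finset (Fin N),
      IsCubeEmb f ∧ ∀ S, c (f S) = false := by
  classical
  have hNl : N - l ≤ N := Nat.sub_le _ _
  set e : Fin (N - l) ↪ Fin N := Fin.castLEEmb hNl with he
  have he_lt : ∀ x : Fin (N - l), ((e x : Fin N) : ℕ) < N - l := by
    intro x; rw [he]; exact x.isLt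
  set Tk : ℕ → Finset (Fin N) :=
    fun k => Finset.univ.filter (fun x : Fin N => N - l ≤ (x : ℕ) ∧ (x : ℕ) < N - l + k)
    with hTkdef
  have hTk_mem : ∀ (k : ℕ) (x : Fin N),
      x ∈ Tk k ↔ N - l ≤ (x : ℕ) ∧ (x : ℕ) < N - l + k := by
    intro k x; simp [hTkdef]
  have hTk_mono : ∀ {k k' : ℕ}, k ≤ k' → Tk k ⊆ Tk k' := by
    intro k k' h x hx
    rw [hTk_mem] at hx ⊢; omega
  set g : Finset (Fin (N - l)) → ℕ → Finset (Fin N) := fun S k => S.map e ∪ Tk k with hg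
  set good : Finset (Fin N) → ℕ → Prop := fun X k =>
    ¬ ∃ (j : Fin l) (a : Finset (Fin N)), (j : ℕ) = k ∧ a ∈ A j ∧ a ⊆ X with hgood
  have hgood_l : ∀ X, good X l := by
    rintro X ⟨j, a, hj, -, -⟩
    exact absurd hj (Nat.ne_of_lt j.isLt)
  have hex : ∀ S, ∃ k, good (g S k) k := fun S => ⟨l, hgood_l _⟩
  have hKspec : ∀ S, good (g S (Nat.find (hex S))) (Nat.find (hex S)) :=
    fun S => Nat.find_spec (hex S)
  -- the index set of antichains having a member below X is downward closed
  have hdown : ∀ (X : Finset (Fin N)) (i j : Fin l), i ≤ j →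
      (∃ a ∈ A j, a ⊆ X) → ∃ a ∈ A i, a ⊆ X := by
    rintro X i j hij ⟨a, ha, haX⟩
    have hP : (Finset.univ.filter fun T : Finset (Fin N) =>
        T ⊆ a ∧ ∃ k, i ≤ k ∧ T ∈ A k).Nonempty := by
      refine ⟨a, ?_⟩
      simp only [Finset.mem_filter, Finset.mem_univ, true_and]
      exact ⟨subset_rfl, j, hij, ha⟩
    obtain ⟨T, hT, hTmin⟩ := Finset.exists_min_image _ Finset.card hP
    simp only [Finset.mem_filter, Finset.mem_univ, true_and] at hT
    refine ⟨T, ?_, hT.1.trans haX⟩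
    rw [hmin i]
    refine ⟨hT.2, ?_⟩
    intro T' hT' hsub
    have hle : T.card ≤ T'.card := by
      refine hTmin T' ?_
      simp only [Finset.mem_filter, Finset.mem_univ, true_and]
      exact ⟨hsub.trans hT.1, hT'⟩
    exact Finset.eq_of_subset_of_card_le hsub hle
  -- monotonicity of K
  have hKmono : ∀ S S', S ⊆ S' → Nat.find (hex S) ≤ Nat.find (hex S') := by
    intro S S' hss
    refine Nat.find_le ?_
    rintro ⟨j, a, hj, ha, haX⟩
    exact hKspec S' ⟨j, a, hj, ha, haX.trans
      (Finset.union_subset_union (Finset.map_subset_map.mpr hss) subset_rfl)⟩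
  -- blueness
  have hblue : ∀ S, c (g S (Nat.find (hex S))) = false := by
    intro S
    by_contra h
    set K : Finset (Fin (N - l)) → ℕ := fun S => Nat.find (hex S) with hKdef
    have hredS : ∃ j, g S (K S) ∈ A j := (hred _).mp (by
      cases hc : c (g S (K S)) with
      | false => exact absurd hc h
      | true => rfl)
    obtain ⟨j, hj⟩ := hredS
    by_cases hkj : K S ≤ (j : ℕ)
    · have hkl : K S < l := lt_of_le_of_lt hkj j.isLt
      obtain ⟨a, ha, haX⟩ := hdown (g S (K S)) ⟨K S, hkl⟩ j
        (by simpa [Fin.le_def] using hkj) ⟨_, hj, subset_rfl⟩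
      exact hKspec S ⟨⟨K S, hkl⟩, a, rfl, ha, haX⟩
    · push_neg at hkj
      obtain ⟨k', hk'⟩ : ∃ k', K S = k' + 1 := ⟨K S - 1, by omega⟩
      have hnot : ¬ good (g S k') k' := Nat.find_min (hex S) (by
        show k' < Nat.find (hex S)
        have : Nat.find (hex S) = K S := by rw [hKdef]
        omega)
      obtain ⟨jk, a, hjk, ha, haX⟩ := not_not.mp hnot
      rw [hmin j] at hj
      obtain ⟨-, hminS⟩ := hj
      have hjjk : j ≤ jk := by
        rw [Fin.le_def]; omega
      have haeq : a = g S (K S) :=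
        hminS a ⟨jk, hjjk, ha⟩ (haX.trans
          (Finset.union_subset_union subset_rfl (hTk_mono (by omega))))
      have hk'l : k' < l := hjk ▸ jk.isLt
      set d : Fin N := ⟨N - l + k', by omega⟩ with hd
      have hd_mem : d ∈ g S (K S) := by
        refine Finset.mem_union_right _ ?_
        rw [hTk_mem]
        simp only [hd]
        omega
      have hd_a : d ∈ a := haeq ▸ hd_mem
      have := haX hd_a
      rcases Finset.mem_union.mp this with hmap | htk
      · obtain ⟨x, -, hx⟩ := Finset.mem_map.mp hmap
        have := he_lt x
        rw [hx] at this
        simp only [hd] at this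
        omega
      · rw [hTk_mem] at htk
        simp only [hd] at htk
        omega
  refine ⟨fun S => g S (Nat.find (hex S)), ?_, hblue⟩
  intro S S'
  constructor
  · intro hss
    exact Finset.union_subset_union (Finset.map_subset_map.mpr hss)
      (hTk_mono (hKmono _ _ hss))
  · intro hss x hx
    have hmem : e x ∈ g S (Nat.find (hex S)) :=
      Finset.mem_union_left _ (Finset.mem_map_of_mem e hx)
    rcases Finset.mem_union.mp (hss hmem) with hmap | htk
    · obtain ⟨y, hy, hxy⟩ := Finset.mem_map.mp hmap
      rwa [← e.injective hxy]
    · rw [hTk_mem] at htk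
      have := he_lt x
      omega
end

section
/- Let n ≤ N, let e(n, N) denote the number of embeddings of the Boolean lattice Q_n into Q_N, and let a(n) denote the number of distinct antichains in 2^{[n]}. Then (N!/(N−n)!) · (a(n) − n)^{N−n} ≤ e(n, N) ≤ (N!/(N−n)!) · a(n)^{N−n}. -/
/-- `e(n, N)`: the number of embeddings of `Q_n` into `Q_N`. -/
noncomputable def cubeEmbCount (n N : ℕ) : ℕ :=
  Nat.card {f : Finset (Fin n) → Finset (Fin N) // IsCubeEmb f}

/-- `a(n)`: the number of antichains in `2^[n]`. -/
noncomputable def antichainCount (n : ℕ) : ℕ :=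
  Nat.card {A : Finset (Finset (Fin n)) // IsAntichain (· ⊆ ·) (A : Set (Finset (Fin n)))}

variable {n N : ℕ}

/-- Upward-closed family in `Q_n`. -/
def IsUpset (U : Finset (Finset (Fin n))) : Prop :=
  ∀ ⦃A⦄, A ∈ U → ∀ ⦃B⦄, A ⊆ B → B ∈ U

instance (U : Finset (Finset (Fin n))) : Decidable (IsUpset U) := by
  unfold IsUpset; infer_instance

def minSet (U : Finset (Finset (Fin n))) : Finset (Finset (Fin n)) :=
  U.filter (fun A => ∀ B ∈ U, B ⊆ A → B = A)

def upClos (S : Finset (Finset (Fin n))) : Finset (Finset (Fin n)) :=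
  Finset.univ.filter (fun B => ∃ A ∈ S, A ⊆ B)

lemma upClos_isUpset (S : Finset (Finset (Fin n))) : IsUpset (upClos S) := by
  intro A hA B hAB
  simp only [upClos, Finset.mem_filter, Finset.mem_univ, true_and] at *
  obtain ⟨C, hC, hCA⟩ := hA
  exact ⟨C, hC, hCA.trans hAB⟩

lemma minSet_isAntichain (U : Finset (Finset (Fin n))) :
    IsAntichain (· ⊆ ·) ((minSet U : Finset (Finset (Fin n))) : Set (Finset (Fin n))) := by
  intro A hA B hB hne hAB
  simp only [minSet, Finset.coe_filter, Set.mem_setOf_eq] at hA hB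
  exact hne (hB.2 A hA.1 hAB)

lemma upClos_minSet (U : Finset (Finset (Fin n))) (hU : IsUpset U) : upClos (minSet U) = U := by
  ext B
  simp only [upClos, minSet, Finset.mem_filter, Finset.mem_univ, true_and]
  constructor
  · rintro ⟨A, hA, hAB⟩
    exact hU hA.1 hAB
  · intro hB
    obtain ⟨m, hm, hmin⟩ : ∃ m ∈ U.filter (· ⊆ B), ∀ x ∈ U.filter (· ⊆ B), ¬ x < m := by
      obtain ⟨m, hm, hmin⟩ := Finset.exists_minimal (s := U.filter (· ⊆ B))
        ⟨B, Finset.mem_filter.2 ⟨hB, subset_rfl⟩⟩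
      exact ⟨m, hm, fun x hx hlt => hlt.not_ge (hmin hx hlt.le)⟩
    simp only [Finset.mem_filter] at hm
    refine ⟨m, ⟨hm.1, fun C hC hCm => ?_⟩, hm.2⟩
    by_contra hne
    exact hmin C (Finset.mem_filter.2 ⟨hC, hCm.trans hm.2⟩) (lt_of_le_of_ne hCm hne)

lemma minSet_upClos (S : Finset (Finset (Fin n)))
    (hS : IsAntichain (· ⊆ ·) ((S : Finset (Finset (Fin n))) : Set (Finset (Fin n)))) :
    minSet (upClos S) = S := by
  ext A
  simp only [minSet, upClos, Finset.mem_filter, Finset.mem_univ, true_and]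
  constructor
  · rintro ⟨⟨C, hC, hCA⟩, hmin⟩
    have : C = A := hmin C ⟨C, hC, subset_rfl⟩ hCA
    exact this ▸ hC
  · intro hA
    refine ⟨⟨A, hA, subset_rfl⟩, fun B hB hBA => ?_⟩
    obtain ⟨C, hC, hCB⟩ := hB
    have hCA : C ⊆ A := hCB.trans hBA
    have hCeq : C = A := by
      by_contra hne
      exact hS hC hA hne hCA
    subst hCeq
    exact hBA.antisymm hCB

/-- Upsets are in bijection with antichains. -/
def upsetEquivAntichain (n : ℕ) :
    {U : Finset (Finset (Fin n)) // IsUpset U} ≃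
    {A : Finset (Finset (Fin n)) // IsAntichain (· ⊆ ·) (A : Set (Finset (Fin n)))} where
  toFun U := ⟨minSet U.1, minSet_isAntichain U.1⟩
  invFun S := ⟨upClos S.1, upClos_isUpset S.1⟩
  left_inv U := Subtype.ext (upClos_minSet U.1 U.2)
  right_inv S := Subtype.ext (minSet_upClos S.1 S.2)

lemma card_upsets (n : ℕ) :
    Nat.card {U : Finset (Finset (Fin n)) // IsUpset U} = antichainCount n :=
  Nat.card_congr (upsetEquivAntichain n)

/-- The principal upset generated by `{j}`. -/
def prin (j : Fin n) : Finset (Finset (Fin n)) :=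
  Finset.univ.filter (fun A => j ∈ A)

lemma mem_prin {j : Fin n} {A : Finset (Fin n)} : A ∈ prin j ↔ j ∈ A := by
  simp [prin]

lemma prin_isUpset (j : Fin n) : IsUpset (prin j) := by
  intro A hA B hAB
  exact mem_prin.2 (hAB (mem_prin.1 hA))

lemma prin_injective : Function.Injective (prin (n := n)) := by
  intro j j' hjj
  have h1 : ({j} : Finset (Fin n)) ∈ prin j := mem_prin.2 (Finset.mem_singleton_self j)
  rw [hjj] at h1
  exact (Finset.mem_singleton.1 (mem_prin.1 h1)).symm

/-- The upset of coordinate `i` associated with a map `f`. -/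
def ups (f : Finset (Fin n) → Finset (Fin N)) (i : Fin N) : Finset (Finset (Fin n)) :=
  Finset.univ.filter (fun A => i ∈ f A)

lemma mem_ups {f : Finset (Fin n) → Finset (Fin N)} {i : Fin N} {A : Finset (Fin n)} :
    A ∈ ups f i ↔ i ∈ f A := by simp [ups]

lemma f_eq_of_ups_eq {f g : Finset (Fin n) → Finset (Fin N)} (h : ups f = ups g) : f = g := by
  funext A
  ext i
  rw [← mem_ups, ← mem_ups, h]

lemma ups_isUpset {f : Finset (Fin n) → Finset (Fin N)} (hf : IsCubeEmb f) (i : Fin N) :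
    IsUpset (ups f i) := by
  intro A hA B hAB
  exact mem_ups.2 (((hf A B).1 hAB) (mem_ups.1 hA))

/-- For an embedding, each `j` forces some coordinate to carry the principal upset. -/
lemma exists_prin_coord {f : Finset (Fin n) → Finset (Fin N)} (hf : IsCubeEmb f) (j : Fin n) :
    ∃ i : Fin N, ups f i = prin j := by
  have hns : ¬ ({j} : Finset (Fin n)) ⊆ ({j} : Finset (Fin n))ᶜ := by
    intro hsub
    have := hsub (Finset.mem_singleton_self j)
    simp at this
  have hnsf : ¬ f {j} ⊆ f ({j}ᶜ) := fun hc => hns ((hf _ _).2 hc)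
  obtain ⟨i, hi1, hi2⟩ := Finset.not_subset.1 hnsf
  refine ⟨i, ?_⟩
  ext A
  rw [mem_ups, mem_prin]
  constructor
  · intro hiA
    by_contra hjA
    have hsub : A ⊆ ({j} : Finset (Fin n))ᶜ := by
      intro x hx
      simp only [Finset.mem_compl, Finset.mem_singleton]
      rintro rfl; exact hjA hx
    exact hi2 (((hf _ _).1 hsub) hiA)
  · intro hjA
    have hsub : ({j} : Finset (Fin n)) ⊆ A := Finset.singleton_subset_iff.2 hjA
    exact ((hf _ _).1 hsub) hi1

lemma card_comp (σ : Fin n ↪ Fin N) :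
    Nat.card {i : Fin N // i ∉ Set.range ⇑σ} = N - n := by
  classical
  have h1 : Nat.card {i : Fin N // i ∈ Set.range ⇑σ} = n := by
    rw [show {i : Fin N // i ∈ Set.range ⇑σ} = ↥(Set.range ⇑σ) from rfl,
      Nat.card_range_of_injective σ.injective, Nat.card_eq_fintype_card, Fintype.card_fin]
  rw [Nat.card_eq_fintype_card, Fintype.card_subtype_compl, Fintype.card_fin]
  rw [Nat.card_eq_fintype_card] at h1
  rw [h1]

noncomputable def compEquiv (σ : Fin n ↪ Fin N) :
    {i : Fin N // i ∉ Set.range ⇑σ} ≃ Fin (N - n) :=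
  (Finite.equivFin _).trans (finCongr (card_comp σ))

lemma card_sigma_arrows (β : Type) [Finite β] :
    Nat.card (Σ σ : Fin n ↪ Fin N, ({i : Fin N // i ∉ Set.range ⇑σ} → β)) =
      N.descFactorial n * Nat.card β ^ (N - n) := by
  have e : (Σ σ : Fin n ↪ Fin N, ({i : Fin N // i ∉ Set.range ⇑σ} → β)) ≃
      (Fin n ↪ Fin N) × (Fin (N - n) → β) :=
    Equiv.sigmaEquivProdOfEquiv (fun σ => Equiv.arrowCongr (compEquiv σ) (Equiv.refl β))
  rw [Nat.card_congr e, Nat.card_prod, Nat.card_fun]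
  simp [Nat.card_eq_fintype_card, Fintype.card_embedding_eq]

def coordSet (f : Finset (Fin n) → Finset (Fin N)) (j : Fin n) : Finset (Fin N) :=
  Finset.univ.filter (fun i => ups f i = prin j)

lemma coordSet_nonempty {f : Finset (Fin n) → Finset (Fin N)} (hf : IsCubeEmb f) (j : Fin n) :
    (coordSet f j).Nonempty := by
  obtain ⟨i, hi⟩ := exists_prin_coord hf j
  exact ⟨i, by simp [coordSet, hi]⟩

lemma ups_coordSet {f : Finset (Fin n) → Finset (Fin N)} {j : Fin n} {i : Fin N}
    (hi : i ∈ coordSet f j) : ups f i = prin j := by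
  simpa [coordSet] using hi

noncomputable def sigmaF {f : Finset (Fin n) → Finset (Fin N)} (hf : IsCubeEmb f) :
    Fin n ↪ Fin N :=
  ⟨fun j => (coordSet f j).min' (coordSet_nonempty hf j), by
    intro j j' hjj
    apply prin_injective
    have e1 := ups_coordSet (Finset.min'_mem _ (coordSet_nonempty hf j))
    have e2 := ups_coordSet (Finset.min'_mem _ (coordSet_nonempty hf j'))
    dsimp only at hjj
    rw [← e1, hjj, e2]⟩

lemma ups_sigmaF {f : Finset (Fin n) → Finset (Fin N)} (hf : IsCubeEmb f) (j : Fin n) :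
    ups f (sigmaF hf j) = prin j :=
  ups_coordSet (Finset.min'_mem _ (coordSet_nonempty hf j))

/-- Assemble a family of upsets from an injection and values off its range. -/
noncomputable def buildV (σ : Fin n ↪ Fin N)
    (g : {i : Fin N // i ∉ Set.range ⇑σ} → Finset (Finset (Fin n))) (i : Fin N) :
    Finset (Finset (Fin n)) :=
  if h : ∃ j, σ j = i then prin (Classical.choose h)
  else g ⟨i, by simpa [Set.mem_range] using h⟩

lemma buildV_mem (σ : Fin n ↪ Fin N)
    (g : {i : Fin N // i ∉ Set.range ⇑σ} → Finset (Finset (Fin n))) (j : Fin n) :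
    buildV σ g (σ j) = prin j := by
  have h : ∃ j', σ j' = σ j := ⟨j, rfl⟩
  rw [buildV, dif_pos h]
  exact congrArg prin (σ.injective (Classical.choose_spec h))

lemma buildV_not_mem (σ : Fin n ↪ Fin N)
    (g : {i : Fin N // i ∉ Set.range ⇑σ} → Finset (Finset (Fin n))) (i : Fin N)
    (h : i ∉ Set.range ⇑σ) : buildV σ g i = g ⟨i, h⟩ := by
  rw [buildV, dif_neg (by simpa [Set.mem_range] using h)]

noncomputable def buildF (σ : Fin n ↪ Fin N)
    (g : {i : Fin N // i ∉ Set.range ⇑σ} → Finset (Finset (Fin n))) :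
    Finset (Fin n) → Finset (Fin N) :=
  fun A => Finset.univ.filter (fun i => A ∈ buildV σ g i)

lemma mem_buildF {σ : Fin n ↪ Fin N}
    {g : {i : Fin N // i ∉ Set.range ⇑σ} → Finset (Finset (Fin n))} {A : Finset (Fin n)}
    {i : Fin N} : i ∈ buildF σ g A ↔ A ∈ buildV σ g i := by
  simp [buildF]

lemma ups_buildF (σ : Fin n ↪ Fin N)
    (g : {i : Fin N // i ∉ Set.range ⇑σ} → Finset (Finset (Fin n))) (i : Fin N) :
    ups (buildF σ g) i = buildV σ g i := by
  ext A
  rw [mem_ups, mem_buildF]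

lemma buildF_recover {f : Finset (Fin n) → Finset (Fin N)} (hf : IsCubeEmb f) :
    buildF (sigmaF hf) (fun i => ups f i.1) = f := by
  apply f_eq_of_ups_eq
  funext i
  rw [ups_buildF]
  by_cases hi : i ∈ Set.range ⇑(sigmaF hf)
  · obtain ⟨j, rfl⟩ := hi
    rw [buildV_mem, ups_sigmaF hf j]
  · rw [buildV_not_mem _ _ _ hi]

/-- The injection used for the upper bound. -/
noncomputable def Phi (n N : ℕ) :
    {f : Finset (Fin n) → Finset (Fin N) // IsCubeEmb f} →
    Σ σ : Fin n ↪ Fin N,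
      ({i : Fin N // i ∉ Set.range ⇑σ} → {U : Finset (Finset (Fin n)) // IsUpset U}) :=
  fun f => ⟨sigmaF f.2, fun i => ⟨ups f.1 i.1, ups_isUpset f.2 i.1⟩⟩

lemma Phi_injective : Function.Injective (Phi n N) := by
  have key : ∀ f : {f : Finset (Fin n) → Finset (Fin N) // IsCubeEmb f},
      buildF (Phi n N f).1 (fun i => ((Phi n N f).2 i).1) = f.1 := by
    intro f
    exact buildF_recover f.2
  intro f f' h
  apply Subtype.ext
  rw [← key f, ← key f', h]

lemma upper_bound (n N : ℕ) :
    Nat.card {f : Finset (Fin n) → Finset (Fin N) // IsCubeEmb f} ≤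
      N.descFactorial n * antichainCount n ^ (N - n) := by
  have := Nat.card_le_card_of_injective _ (Phi_injective (n := n) (N := N))
  rwa [card_sigma_arrows, card_upsets] at this

noncomputable def prinUp (j : Fin n) : {U : Finset (Finset (Fin n)) // IsUpset U} :=
  ⟨prin j, prin_isUpset j⟩

lemma prinUp_injective : Function.Injective (prinUp (n := n)) := fun j j' h =>
  prin_injective (congrArg Subtype.val h)

lemma card_np (n : ℕ) :
    Nat.card {U : {U : Finset (Finset (Fin n)) // IsUpset U} // U ∉ Set.range prinUp} =
      antichainCount n - n := by
  classical
  have h1 : Nat.card {U : {U : Finset (Finset (Fin n)) // IsUpset U} //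
      U ∈ Set.range prinUp} = n := by
    rw [show {U : {U : Finset (Finset (Fin n)) // IsUpset U} // U ∈ Set.range prinUp} =
      ↥(Set.range (prinUp (n := n))) from rfl,
      Nat.card_range_of_injective prinUp_injective, Nat.card_eq_fintype_card, Fintype.card_fin]
  rw [Nat.card_eq_fintype_card, Fintype.card_subtype_compl]
  rw [Nat.card_eq_fintype_card] at h1
  rw [h1, ← card_upsets n, Nat.card_eq_fintype_card]

/-- The embedding built for the lower bound. -/
lemma buildF_isCubeEmb (σ : Fin n ↪ Fin N)
    (g : {i : Fin N // i ∉ Set.range ⇑σ} →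
      {U : {U : Finset (Finset (Fin n)) // IsUpset U} // U ∉ Set.range prinUp}) :
    IsCubeEmb (buildF σ (fun i => ((g i).1 : Finset (Finset (Fin n))))) := by
  intro A B
  constructor
  · intro hAB i hi
    rw [mem_buildF] at hi ⊢
    by_cases hr : i ∈ Set.range ⇑σ
    · obtain ⟨j, rfl⟩ := hr
      rw [buildV_mem] at hi ⊢
      exact prin_isUpset j hi hAB
    · rw [buildV_not_mem _ _ _ hr] at hi ⊢
      exact ((g ⟨i, hr⟩).1.2) hi hAB
  · intro hsub j hj
    have hA : σ j ∈ buildF σ (fun i => ((g i).1 : Finset (Finset (Fin n)))) A := by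
      rw [mem_buildF, buildV_mem]
      exact mem_prin.2 hj
    have hB := hsub hA
    rw [mem_buildF, buildV_mem] at hB
    exact mem_prin.1 hB

noncomputable def Psi (n N : ℕ) :
    (Σ σ : Fin n ↪ Fin N, ({i : Fin N // i ∉ Set.range ⇑σ} →
      {U : {U : Finset (Finset (Fin n)) // IsUpset U} // U ∉ Set.range prinUp})) →
    {f : Finset (Fin n) → Finset (Fin N) // IsCubeEmb f} :=
  fun p => ⟨buildF p.1 (fun i => ((p.2 i).1 : Finset (Finset (Fin n)))),
    buildF_isCubeEmb p.1 p.2⟩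

lemma Psi_injective : Function.Injective (Psi n N) := by
  rintro ⟨σ, g⟩ ⟨σ', g'⟩ h
  have hV : buildV σ (fun i => ((g i).1 : Finset (Finset (Fin n)))) =
      buildV σ' (fun i => ((g' i).1 : Finset (Finset (Fin n)))) := by
    funext i
    rw [← ups_buildF, ← ups_buildF]
    exact congrFun (congrArg ups (congrArg Subtype.val h)) i
  have hσ : σ = σ' := by
    apply Function.Embedding.ext
    intro j
    by_contra hne
    by_cases hr : σ j ∈ Set.range ⇑σ'
    · obtain ⟨j', hj'⟩ := hr
      have e1 : prin j = prin j' := by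
        have := congrFun hV (σ j)
        rw [buildV_mem, ← hj', buildV_mem] at this
        exact this
      have : j = j' := prin_injective e1
      subst this
      exact hne hj'.symm
    · have := congrFun hV (σ j)
      rw [buildV_mem, buildV_not_mem _ _ _ hr] at this
      exact (g' ⟨σ j, hr⟩).2 ⟨j, Subtype.ext this⟩
  subst hσ
  have hg : g = g' := by
    funext i
    have := congrFun hV i.1
    rw [buildV_not_mem _ _ _ i.2, buildV_not_mem _ _ _ i.2] at this
    exact Subtype.ext (Subtype.ext (by simpa using this))
  rw [hg]

lemma lower_bound (n N : ℕ) :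
    N.descFactorial n * (antichainCount n - n) ^ (N - n) ≤
      Nat.card {f : Finset (Fin n) → Finset (Fin N) // IsCubeEmb f} := by
  have := Nat.card_le_card_of_injective _ (Psi_injective (n := n) (N := N))
  rwa [card_sigma_arrows, card_np] at this

/-- For `n ≤ N`, the number `e(n,N)` of embeddings of `Q_n` into `Q_N` satisfies
`N!/(N−n)! · (a(n) − n)^{N−n} ≤ e(n,N) ≤ N!/(N−n)! · a(n)^{N−n}`, where `a(n)`
is the number of antichains in `2^[n]` and `N!/(N-n)!` is the descending
factorial. -/
theorem cube_embedding_count (n N : ℕ) (h : n ≤ N) :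
    N.descFactorial n * (antichainCount n - n) ^ (N - n) ≤ cubeEmbCount n N ∧
    cubeEmbCount n N ≤ N.descFactorial n * antichainCount n ^ (N - n) := by
  exact ⟨lower_bound n N, upper_bound n N⟩
end

section
/- The map assigning to each embedding f of 2^{[n]} into 2^{[N]} its characteristic vector (U₁(f), …, U_N(f)), where U_j(f) = {S ⊆ [n] : j ∈ f(S)}, is a bijection between the set of all embeddings of 2^{[n]} into 2^{[N]} and the set of all good sequences of N upper-closed subsets of 2^{[n]}. -/
/-- A family of subsets of `[n]` is upper closed. -/
def UpperClosed {n : ℕ} (U : Set (Finset (Fin n))) : Prop :=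
  ∀ ⦃S T : Finset (Fin n)⦄, S ∈ U → S ⊆ T → T ∈ U

/-- A sequence `(U₁, …, U_N)` of subsets of `2^[n]` is good if every `U_j` is
upper closed and for every `i ∈ [n]` the upset `{i}⁺ = {S : i ∈ S}` occurs in
the sequence. -/
def GoodSeq {n N : ℕ} (U : Fin N → Set (Finset (Fin n))) : Prop :=
  (∀ j, UpperClosed (U j)) ∧
  ∀ i : Fin n, ∃ j : Fin N, U j = {S : Finset (Fin n) | i ∈ S}

/-- The map assigning to an embedding `f` of `2^[n]` into `2^[N]` its
characteristic vector `(U₁(f), …, U_N(f))`, `U_j(f) = {S ⊆ [n] : j ∈ f S}`,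
is a bijection between the embeddings of `2^[n]` into `2^[N]` and the good
sequences of `N` upper-closed subsets of `2^[n]`. -/
theorem characteristic_vector_bijection (n N : ℕ) :
    Set.BijOn
      (fun (f : Finset (Fin n) → Finset (Fin N)) (j : Fin N) =>
        {S : Finset (Fin n) | j ∈ f S})
      {f | IsCubeEmb f} {U | GoodSeq U} := by
  refine ⟨?_, ?_, ?_⟩
  · -- MapsTo
    intro f hf
    constructor
    · intro j S T hS hST
      exact ((hf S T).1 hST) hS
    · intro i
      -- pick j ∈ f {i} \ f ({i}ᶜ)
      have hns : ¬ ({i} : Finset (Fin n)) ⊆ {i}ᶜ := by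
        simp
      have : ¬ f {i} ⊆ f ({i}ᶜ) := fun h => hns ((hf _ _).2 h)
      obtain ⟨j, hj1, hj2⟩ := Finset.not_subset.1 this
      refine ⟨j, ?_⟩
      ext S
      simp only [Set.mem_setOf_eq]
      constructor
      · intro hjS
        by_contra hiS
        have : S ⊆ {i}ᶜ := fun x hx => by
          simp only [Finset.mem_compl, Finset.mem_singleton]
          rintro rfl; exact hiS hx
        exact hj2 (((hf S _).1 this) hjS)
      · intro hiS
        have : ({i} : Finset (Fin n)) ⊆ S := Finset.singleton_subset_iff.2 hiS
        exact ((hf _ S).1 this) hj1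
  · -- InjOn
    intro f _ g _ h
    funext S
    ext j
    have := congrFun h j
    have h2 : (j ∈ f S) = (j ∈ g S) := by
      simpa using congrArg (S ∈ ·) this
    simp [h2]
  · -- SurjOn
    intro U hU
    obtain ⟨hup, hgood⟩ := hU
    classical
    refine ⟨fun S => Finset.univ.filter (fun j => S ∈ U j), ?_, ?_⟩
    · -- is a cube embedding
      intro A B
      constructor
      · intro hAB j hj
        simp only [Finset.mem_filter, Finset.mem_univ, true_and] at hj ⊢
        exact hup j hj hAB
      · intro h i hiA
        obtain ⟨j, hj⟩ := hgood i
        have hjA : j ∈ Finset.univ.filter (fun j => A ∈ U j) := by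
          simp [hj, hiA]
        have := h hjA
        simpa [hj] using this
    · funext j
      ext S
      simp
end

section
/- A family 𝒮 ⊆ 2^{[N]} forms a copy of the Boolean lattice 2^{[n]} if and only if there exist a set I ⊆ [N] with |I| = n and an inclusion preserving map φ from subsets of I to subsets of [N] ∖ I such that 𝒮 = {Y ∪ φ(Y) : Y ⊆ I}. -/
/-- A family `𝒮 ⊆ 2^[N]` is a copy of `2^[n]` (the image of an embedding of
`Q_n` into `Q_N`) iff there are an `n`-element set `I ⊆ [N]` and a map `φ`
from subsets of `I` to subsets of `[N] \ I` preserving inclusion such that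
`𝒮 = {Y ∪ φ(Y) : Y ⊆ I}`. -/
theorem copy_iff_inclusion_preserving_map (n N : ℕ) (S : Set (Finset (Fin N))) :
    (∃ f : Finset (Fin n) → Finset (Fin N), IsCubeEmb f ∧ Set.range f = S) ↔
    (∃ (I : Finset (Fin N)) (φ : Finset (Fin N) → Finset (Fin N)),
      I.card = n ∧
      (∀ Y : Finset (Fin N), Y ⊆ I → Disjoint (φ Y) I) ∧
      (∀ Y Y' : Finset (Fin N), Y ⊆ I → Y' ⊆ I → Y ⊆ Y' → φ Y ⊆ φ Y') ∧
      S = {Z : Finset (Fin N) | ∃ Y : Finset (Fin N), Y ⊆ I ∧ Z = Y ∪ φ Y}) := by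
  constructor
  · rintro ⟨f, hf, rfl⟩
    have hx : ∀ i : Fin n, ∃ t, t ∈ f {i} ∧ t ∉ f (Finset.univ.erase i) := by
      intro i
      by_contra h
      push_neg at h
      have hsub : f {i} ⊆ f (Finset.univ.erase i) := fun t ht => h t ht
      have h2 : ({i} : Finset (Fin n)) ⊆ Finset.univ.erase i := (hf _ _).2 hsub
      have := h2 (Finset.mem_singleton_self i)
      simp at this
    choose x hx1 hx2 using hx
    have key : ∀ (A : Finset (Fin n)) (i : Fin n), x i ∈ f A ↔ i ∈ A := by
      intro A i
      constructor
      · intro h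
        by_contra hi
        have hA : A ⊆ Finset.univ.erase i := by
          intro j hj
          exact Finset.mem_erase.2 ⟨fun e => hi (e ▸ hj), Finset.mem_univ _⟩
        exact hx2 i ((hf _ _).1 hA h)
      · intro hi
        exact (hf _ _).1 (Finset.singleton_subset_iff.2 hi) (hx1 i)
    have xinj : Function.Injective x := by
      intro i j hij
      have h1 : x j ∈ f {j} := hx1 j
      rw [← hij, key] at h1
      exact Finset.mem_singleton.1 h1
    set I : Finset (Fin N) := Finset.univ.image x with hI
    set φ : Finset (Fin N) → Finset (Fin N) :=
      fun Y => f (Finset.univ.filter (fun i => x i ∈ Y)) \ I with hφ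
    have hIA : ∀ A : Finset (Fin n), f A ∩ I = A.image x := by
      intro A
      ext t
      simp only [Finset.mem_inter, hI, Finset.mem_image, Finset.mem_univ, true_and]
      constructor
      · rintro ⟨ht, i, rfl⟩
        exact ⟨i, (key A i).1 ht, rfl⟩
      · rintro ⟨i, hi, rfl⟩
        exact ⟨(key A i).2 hi, i, rfl⟩
    have hfA : ∀ A : Finset (Fin n), f A = A.image x ∪ (f A \ I) := by
      intro A
      rw [← hIA]
      ext t
      by_cases ht : t ∈ I <;> simp [Finset.mem_union, Finset.mem_inter, Finset.mem_sdiff, ht]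
    have hfilt : ∀ A : Finset (Fin n),
        (Finset.univ.filter (fun i => x i ∈ A.image x)) = A := by
      intro A; ext i
      simp [Finset.mem_filter, Finset.mem_image, xinj.eq_iff]
    refine ⟨I, φ, ?_, ?_, ?_, ?_⟩
    · rw [hI, Finset.card_image_of_injective _ xinj, Finset.card_univ, Fintype.card_fin]
    · intro Y _; exact Finset.sdiff_disjoint
    · intro Y Y' hY hY' hYY'
      apply Finset.sdiff_subset_sdiff _ (subset_refl I)
      apply (hf _ _).1
      intro i hi
      simp only [Finset.mem_filter, Finset.mem_univ, true_and] at hi ⊢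
      exact hYY' hi
    · ext Z
      simp only [Set.mem_range, Set.mem_setOf_eq]
      constructor
      · rintro ⟨A, rfl⟩
        refine ⟨A.image x, ?_, ?_⟩
        · intro t ht
          rcases Finset.mem_image.1 ht with ⟨i, _, rfl⟩
          exact Finset.mem_image.2 ⟨i, Finset.mem_univ i, rfl⟩
        · show f A = A.image x ∪ (f (Finset.univ.filter (fun i => x i ∈ A.image x)) \ I)
          rw [hfilt]
          exact hfA A
      · rintro ⟨Y, hY, rfl⟩
        refine ⟨Finset.univ.filter (fun i => x i ∈ Y), ?_⟩
        have himg : (Finset.univ.filter (fun i => x i ∈ Y)).image x = Y := by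
          ext t
          simp only [Finset.mem_image, Finset.mem_filter, Finset.mem_univ, true_and]
          constructor
          · rintro ⟨i, hi, rfl⟩; exact hi
          · intro ht
            rcases Finset.mem_image.1 (hY ht) with ⟨i, _, rfl⟩
            exact ⟨i, ht, rfl⟩
        show f (Finset.univ.filter (fun i => x i ∈ Y))
            = Y ∪ (f (Finset.univ.filter (fun i => x i ∈ Y)) \ I)
        conv_lhs => rw [hfA (Finset.univ.filter (fun i => x i ∈ Y))]
        rw [himg]
  · rintro ⟨I, φ, hcard, hdisj, hmono, rfl⟩
    have e : Fin n ≃ {x // x ∈ I} := (Finset.equivFinOfCardEq hcard).symm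
    set g : Finset (Fin n) → Finset (Fin N) :=
      fun A => A.image (fun i => ((e i : {x // x ∈ I}) : Fin N)) with hg
    have hginj : Function.Injective (fun i : Fin n => ((e i : {x // x ∈ I}) : Fin N)) :=
      Subtype.val_injective.comp e.injective
    have hgI : ∀ A, g A ⊆ I := by
      intro A t ht
      rcases Finset.mem_image.1 ht with ⟨i, _, rfl⟩
      exact (e i).2
    have hgmono : ∀ A B : Finset (Fin n), A ⊆ B ↔ g A ⊆ g B := by
      intro A B
      constructor
      · intro h; exact Finset.image_subset_image h
      · intro h i hi
        have h1 := h (Finset.mem_image.2 ⟨i, hi, rfl⟩)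
        rcases Finset.mem_image.1 h1 with ⟨j, hj, hji⟩
        have : j = i := hginj hji
        exact this ▸ hj
    refine ⟨fun A => g A ∪ φ (g A), ?_, ?_⟩
    · intro A B
      constructor
      · intro h
        exact Finset.union_subset_union ((hgmono A B).1 h)
          (hmono _ _ (hgI A) (hgI B) ((hgmono A B).1 h))
      · intro h
        apply (hgmono A B).2
        intro t ht
        have htI : t ∈ I := hgI A ht
        have h1 : t ∈ g B ∪ φ (g B) := h (Finset.mem_union_left _ ht)
        rcases Finset.mem_union.1 h1 with h' | h'
        · exact h'
        · exact absurd htI (Finset.disjoint_left.1 (hdisj (g B) (hgI B)) h')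
    · ext Z
      simp only [Set.mem_range, Set.mem_setOf_eq]
      constructor
      · rintro ⟨A, rfl⟩; exact ⟨g A, hgI A, rfl⟩
      · rintro ⟨Y, hY, rfl⟩
        refine ⟨Finset.univ.filter (fun i => ((e i : {x // x ∈ I}) : Fin N) ∈ Y), ?_⟩
        have hgY : g (Finset.univ.filter
            (fun i => ((e i : {x // x ∈ I}) : Fin N) ∈ Y)) = Y := by
          ext t
          simp only [hg, Finset.mem_image, Finset.mem_filter, Finset.mem_univ, true_and]
          constructor
          · rintro ⟨i, hi, rfl⟩; exact hi
          · intro ht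
            refine ⟨e.symm ⟨t, hY ht⟩, ?_, ?_⟩ <;> simp [ht]
        show g _ ∪ φ (g _) = Y ∪ φ Y
        rw [hgY]
end

section
/- Let P be a finite poset and let λ be a real number such that for every N, every family ℱ ⊆ 2^{[N]} containing no copy of P has Lubell mass ℓ(ℱ) ≤ λ. Then for all positive integers k and N with N + 1 > k·λ, every coloring of 2^{[N]} with k colors contains a monochromatic copy of P. In particular, R_k(P) ≤ k·λ, so R_k(P) = O(k). -/
/-- Multicolor poset Ramsey number `R_k(P)`: the smallest `N` such that every
`k`-coloring of the Boolean lattice `Q_N` contains a monochromatic copy of `P`. -/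
noncomputable def multicolorPosetRamsey (P : Type*) [PartialOrder P] (k : ℕ) : ℕ :=
  sInf {N | ∀ c : Finset (Fin N) → Fin k,
    ∃ (col : Fin k) (f : P → Finset (Fin N)),
      (∀ x y : P, x ≤ y ↔ f x ⊆ f y) ∧ ∀ x, c (f x) = col}

/-- Total Lubell mass of the Boolean lattice is `N + 1`. -/
lemma total_lubell (N : ℕ) :
    ∑ S : Finset (Fin N), (1 : ℝ) / (N.choose S.card) = N + 1 := by
  have huniv : (Finset.univ : Finset (Finset (Fin N))) =
      (Finset.univ : Finset (Fin N)).powerset := by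
    ext S; simp
  rw [huniv, Finset.sum_powerset]
  have : ∀ j ∈ Finset.range ((Finset.univ : Finset (Fin N)).card + 1),
      ∑ S ∈ Finset.powersetCard j (Finset.univ : Finset (Fin N)),
        (1 : ℝ) / (N.choose S.card) = 1 := by
    intro j hj
    simp only [Finset.mem_range, Finset.card_univ, Fintype.card_fin] at hj
    have hjN : j ≤ N := Nat.lt_succ_iff.mp hj
    have hcard : ∀ S ∈ Finset.powersetCard j (Finset.univ : Finset (Fin N)),
        (1 : ℝ) / (N.choose S.card) = 1 / (N.choose j) := by
      intro S hS
      rw [(Finset.mem_powersetCard.mp hS).2]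
    rw [Finset.sum_congr rfl hcard, Finset.sum_const, Finset.card_powersetCard,
      Finset.card_univ, Fintype.card_fin]
    have hpos : (0 : ℝ) < N.choose j := by
      exact_mod_cast Nat.choose_pos hjN
    rw [nsmul_eq_mul, mul_one_div_cancel hpos.ne']
  rw [Finset.sum_congr rfl this, Finset.sum_const, Finset.card_range,
    Finset.card_univ, Fintype.card_fin]
  ring

/-- If every `P`-free family `ℱ ⊆ 2^[N]` has Lubell mass
`ℓ(ℱ) = Σ_{S ∈ ℱ} 1/binom(N,|S|)` at most `λ`, then whenever `N + 1 > k·λ`,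
every `k`-coloring of `2^[N]` has a monochromatic copy of `P`; in particular
`R_k(P) ≤ k·λ`, so `R_k(P) = O(k)`. -/
theorem multicolor_ramsey_upper {P : Type*} [PartialOrder P] [Fintype P] [Nonempty P]
    (lam : ℝ)
    (hlam : ∀ (N : ℕ) (F : Finset (Finset (Fin N))),
      (¬ ∃ f : P → Finset (Fin N),
          (∀ x y : P, x ≤ y ↔ f x ⊆ f y) ∧ ∀ x, f x ∈ F) →
      ∑ S ∈ F, (1 : ℝ) / (N.choose S.card) ≤ lam) :
    (∀ k N : ℕ, 0 < k → (k : ℝ) * lam < N + 1 →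
      ∀ c : Finset (Fin N) → Fin k,
        ∃ (col : Fin k) (f : P → Finset (Fin N)),
          (∀ x y : P, x ≤ y ↔ f x ⊆ f y) ∧ ∀ x, c (f x) = col) ∧
    ∀ k : ℕ, 0 < k → (multicolorPosetRamsey P k : ℝ) ≤ k * lam := by
  have hlam0 : 0 ≤ lam := by
    have := hlam 0 ∅ (by
      rintro ⟨f, hf, hmem⟩
      exact absurd (hmem (Classical.arbitrary P)) (by simp))
    simpa using this
  have main : ∀ k N : ℕ, 0 < k → (k : ℝ) * lam < N + 1 →
      ∀ c : Finset (Fin N) → Fin k,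
        ∃ (col : Fin k) (f : P → Finset (Fin N)),
          (∀ x y : P, x ≤ y ↔ f x ⊆ f y) ∧ ∀ x, c (f x) = col := by
    intro k N hk hN c
    by_contra h
    push_neg at h
    have hfree : ∀ j : Fin k,
        ¬ ∃ f : P → Finset (Fin N),
          (∀ x y : P, x ≤ y ↔ f x ⊆ f y) ∧
          ∀ x, f x ∈ Finset.univ.filter (fun S => c S = j) := by
      rintro j ⟨f, hf, hmem⟩
      obtain ⟨x, hx⟩ := h j f hf
      exact hx (Finset.mem_filter.mp (hmem x)).2
    have hsplit : ∑ j : Fin k, ∑ S ∈ Finset.univ.filter (fun S => c S = j),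
        (1 : ℝ) / (N.choose S.card) = ∑ S : Finset (Fin N), (1 : ℝ) / (N.choose S.card) := by
      exact Finset.sum_fiberwise _ _ _
    have hbound : ∑ S : Finset (Fin N), (1 : ℝ) / (N.choose S.card) ≤ k * lam := by
      rw [← hsplit]
      calc ∑ j : Fin k, ∑ S ∈ Finset.univ.filter (fun S => c S = j),
            (1 : ℝ) / (N.choose S.card)
          ≤ ∑ _j : Fin k, lam :=
            Finset.sum_le_sum (fun j _ => hlam N _ (hfree j))
        _ = k * lam := by
            rw [Finset.sum_const, Finset.card_univ, Fintype.card_fin, nsmul_eq_mul]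
    rw [total_lubell N] at hbound
    linarith
  refine ⟨main, fun k hk => ?_⟩
  have h0 : (0 : ℝ) ≤ (k : ℝ) * lam := mul_nonneg (by positivity) hlam0
  have hmem : ⌊(k : ℝ) * lam⌋₊ ∈ {N | ∀ c : Finset (Fin N) → Fin k,
      ∃ (col : Fin k) (f : P → Finset (Fin N)),
        (∀ x y : P, x ≤ y ↔ f x ⊆ f y) ∧ ∀ x, c (f x) = col} := by
    intro c
    exact main k _ hk (Nat.lt_floor_add_one _) c
  have hle : multicolorPosetRamsey P k ≤ ⌊(k : ℝ) * lam⌋₊ := Nat.sInf_le hmem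
  calc (multicolorPosetRamsey P k : ℝ) ≤ (⌊(k : ℝ) * lam⌋₊ : ℝ) := by exact_mod_cast hle
    _ ≤ (k : ℝ) * lam := Nat.floor_le h0
end

section
/- For every integer n ≥ 1: (a) if 2n − 1 ≤ binom(N, ⌊N/2⌋), then every red/blue coloring of 2^{[N]} contains n pairwise incomparable subsets of [N] all of the same color (a monochromatic copy of the antichain A_n); (b) if binom(N, ⌊N/2⌋) ≤ 2n − 2, then there exists a red/blue coloring of 2^{[N]} with no monochromatic antichain of n subsets. Hence R(A_n, A_n) = min{N : 2n − 1 ≤ binom(N, ⌊N/2⌋)}. -/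
def SCDstep (N : ℕ) (C : List (Finset ℕ)) : List (List (Finset ℕ)) :=
  (C ++ [insert N (C.getLast?.getD ∅)]) ::
    (if 2 ≤ C.length then [(C.dropLast).map (insert N)] else [])

theorem mem_SCDstep {N : ℕ} {C C' : List (Finset ℕ)} (hC : C ≠ []) (h : C' ∈ SCDstep N C) :
    C' = C ++ [insert N (C.getLast hC)] ∨
      (2 ≤ C.length ∧ C' = (C.dropLast).map (insert N)) := by
  simp only [SCDstep, List.getLast?_eq_getLast hC, Option.getD_some, List.mem_cons] at h
  rcases h with h | h
  · exact Or.inl h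
  · by_cases h2 : 2 ≤ C.length
    · simp only [if_pos h2, List.mem_singleton] at h
      exact Or.inr ⟨h2, h⟩
    · simp [if_neg h2] at h

theorem mem_of_mem_SCDstep {N : ℕ} {C C' : List (Finset ℕ)} (hC : C ≠ [])
    (hsub : ∀ S ∈ C, S ⊆ Finset.range N) (hC' : C' ∈ SCDstep N C) {S : Finset ℕ}
    (hS : S ∈ C') : (N ∉ S ∧ S ∈ C) ∨ ∃ t ∈ C, N ∉ t ∧ S = insert N t := by
  have notmem : ∀ t ∈ C, N ∉ t := fun t ht hNt => by
    have := hsub t ht hNt; simp at this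
  rcases mem_SCDstep hC hC' with rfl | ⟨h2, rfl⟩
  · rcases List.mem_append.1 hS with h | h
    · exact Or.inl ⟨notmem S h, h⟩
    · have hl := List.getLast_mem hC
      exact Or.inr ⟨_, hl, notmem _ hl, by simpa using h⟩
  · rcases List.mem_map.1 hS with ⟨t, ht, rfl⟩
    have ht' : t ∈ C := List.mem_of_mem_dropLast ht
    exact Or.inr ⟨t, ht', notmem t ht', rfl⟩

def SCD : ℕ → List (List (Finset ℕ))
  | 0 => [[∅]]
  | (N+1) => ((SCD N).map (SCDstep N)).flatten

theorem mem_SCD_succ {N : ℕ} {C' : List (Finset ℕ)} :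
    C' ∈ SCD (N+1) ↔ ∃ C ∈ SCD N, C' ∈ SCDstep N C := by
  simp [SCD, List.mem_flatten]

structure SCDInv (N : ℕ) (L : List (List (Finset ℕ))) : Prop where
  nonempty : ∀ C ∈ L, C ≠ []
  subrange : ∀ C ∈ L, ∀ S ∈ C, S ⊆ Finset.range N
  sizes : ∀ C ∈ L, ∃ j, 2*j + C.length = N + 1 ∧
      ∀ (i : ℕ) (h : i < C.length), (C[i]).card = j + i
  chain : ∀ C ∈ L, C.Chain' (· ⊆ ·)
  disj : L.Pairwise (fun C D => ∀ S ∈ C, S ∉ D)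
  cover : ∀ S : Finset ℕ, S ⊆ Finset.range N → ∃ C ∈ L, S ∈ C

theorem chain_nodup {C : List (Finset ℕ)} {j : ℕ}
    (hcard : ∀ (i : ℕ) (h : i < C.length), (C[i]).card = j + i) : C.Nodup := by
  rw [List.nodup_iff_injective_get]
  intro a b hab
  have h1 := hcard a a.isLt
  have h2 := hcard b b.isLt
  apply Fin.ext
  have : (C.get a).card = (C.get b).card := by rw [hab]
  simp only [List.get_eq_getElem] at this
  omega

theorem mem_iff_dropLast {C : List (Finset ℕ)} (h : C ≠ []) (S : Finset ℕ) :
    S ∈ C ↔ S ∈ C.dropLast ∨ S = C.getLast h := by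
  conv_lhs => rw [← List.dropLast_append_getLast h]
  simp

theorem getLast_not_mem_dropLast {C : List (Finset ℕ)} (h : C ≠ []) (hnd : C.Nodup) :
    C.getLast h ∉ C.dropLast := by
  have := hnd
  rw [← List.dropLast_append_getLast h, List.nodup_append] at this
  intro hm
  exact this.2.2 _ hm _ (by simp) rfl

theorem chain_comparable {C : List (Finset ℕ)} (hc : C.Chain' (· ⊆ ·))
    {S T : Finset ℕ} (hS : S ∈ C) (hT : T ∈ C) : S ⊆ T ∨ T ⊆ S := by
  rw [show List.Chain' (· ⊆ ·) C ↔ List.Pairwise (· ⊆ ·) C from List.isChain_iff_pairwise] at hc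
  rcases eq_or_ne S T with rfl | hne
  · exact Or.inl subset_rfl
  · have : Std.Symm (fun a b : Finset ℕ => a ⊆ b ∨ b ⊆ a) := ⟨fun a b h => h.symm⟩
    have := (hc.imp (fun h => Or.inl h : ∀ {a b : Finset ℕ}, a ⊆ b → (a ⊆ b ∨ b ⊆ a))).forall
    exact this hS hT hne

theorem scdInv : ∀ N, SCDInv N (SCD N)
  | 0 => by
    constructor
    · simp [SCD]
    · simp [SCD]
    · intro C hC
      simp [SCD] at hC
      subst hC
      exact ⟨0, by simp, by simp⟩
    · simp [SCD]; exact List.isChain_singleton _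
    · simp [SCD]
    · intro S hS
      have : S = ∅ := by simpa using hS
      simp [SCD, this]
  | (N+1) => by
    have ih := scdInv N
    have hNot : ∀ C ∈ SCD N, ∀ t ∈ C, N ∉ t := fun C hC t ht hNt => by
      have := ih.subrange C hC t ht hNt; simp at this
    constructor
    · -- nonempty
      intro C' hC'
      obtain ⟨C, hC, hstep⟩ := mem_SCD_succ.1 hC'
      rcases mem_SCDstep (ih.nonempty C hC) hstep with rfl | ⟨h2, rfl⟩
      · simp
      · intro hnil
        have := congrArg List.length hnil
        simp at this
        omega
    · -- subrange
      intro C' hC' S hS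
      obtain ⟨C, hC, hstep⟩ := mem_SCD_succ.1 hC'
      rcases mem_of_mem_SCDstep (ih.nonempty C hC) (ih.subrange C hC) hstep hS with
        ⟨-, hSC⟩ | ⟨t, ht, -, rfl⟩
      · exact (ih.subrange C hC S hSC).trans (Finset.range_subset_range.2 (Nat.le_succ N))
      · exact Finset.insert_subset (Finset.self_mem_range_succ N)
          ((ih.subrange C hC t ht).trans (Finset.range_subset_range.2 (Nat.le_succ N)))
    · -- sizes
      intro C' hC'
      obtain ⟨C, hC, hstep⟩ := mem_SCD_succ.1 hC'
      obtain ⟨j, hj, hcard⟩ := ih.sizes C hC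
      have hCne := ih.nonempty C hC
      have hlen : 1 ≤ C.length := List.length_pos_iff.2 hCne
      rcases mem_SCDstep hCne hstep with rfl | ⟨h2, rfl⟩
      · refine ⟨j, by simp; omega, ?_⟩
        intro i hi
        simp only [List.length_append, List.length_singleton] at hi
        rw [List.getElem_append]
        split
        · exact hcard i ‹_›
        · have hi' : i = C.length := by omega
          subst hi'
          simp only [Nat.sub_self, List.getElem_singleton]
          have hlast : C.getLast hCne ∈ C := List.getLast_mem hCne
          rw [Finset.card_insert_of_notMem (hNot C hC _ hlast)]
          rw [List.getLast_eq_getElem]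
          rw [hcard (C.length - 1) (by omega)]
          omega
      · refine ⟨j + 1, by simp [List.length_dropLast]; omega, ?_⟩
        intro i hi
        simp only [List.length_map, List.length_dropLast] at hi
        rw [List.getElem_map, List.getElem_dropLast]
        rw [Finset.card_insert_of_notMem (hNot C hC _ (List.getElem_mem _))]
        rw [hcard i (by omega)]
        omega
    · -- chain
      intro C' hC'
      obtain ⟨C, hC, hstep⟩ := mem_SCD_succ.1 hC'
      have hCne := ih.nonempty C hC
      rcases mem_SCDstep hCne hstep with rfl | ⟨h2, rfl⟩
      · show List.IsChain _ _
        rw [List.isChain_append]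
        refine ⟨ih.chain C hC, List.isChain_singleton _, ?_⟩
        intro x hx y hy
        rw [List.getLast?_eq_getLast hCne, Option.mem_some_iff] at hx
        simp only [List.head?_cons, Option.mem_some_iff] at hy
        subst hx; subst hy
        exact Finset.subset_insert _ _
      · show List.IsChain _ _
        rw [List.isChain_map]
        exact ((show List.IsChain _ C from ih.chain C hC).prefix (List.dropLast_prefix C)).imp
          (fun _ _ h => Finset.insert_subset_insert _ h)
    · -- disj
      show ((SCD N).map (SCDstep N)).flatten.Pairwise _
      rw [List.pairwise_flatten]
      constructor
      · -- within one step
        intro l hl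
        obtain ⟨C, hC, rfl⟩ := List.mem_map.1 hl
        have hCne := ih.nonempty C hC
        obtain ⟨j, hj, hcard⟩ := ih.sizes C hC
        have hnd : C.Nodup := chain_nodup hcard
        unfold SCDstep
        rw [List.pairwise_cons]
        constructor
        · intro D hD S hS hSD
          by_cases h2 : 2 ≤ C.length
          · rw [if_pos h2, List.mem_singleton] at hD
            subst hD
            obtain ⟨t, htd, rfl⟩ := List.mem_map.1 hSD
            have ht : t ∈ C := List.mem_of_mem_dropLast htd
            rcases List.mem_append.1 hS with h | h
            · exact hNot C hC _ h (Finset.mem_insert_self _ _)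
            · rw [List.mem_singleton, List.getLast?_eq_getLast hCne, Option.getD_some] at h
              have heq : t = C.getLast hCne := by
                have := congrArg (fun s => Finset.erase s N) h
                simpa [Finset.erase_insert (hNot C hC _ (List.getLast_mem hCne)),
                  Finset.erase_insert (hNot C hC _ ht)] using this
              exact getLast_not_mem_dropLast hCne hnd (heq ▸ htd)
          · rw [if_neg h2] at hD
            simp at hD
        · by_cases h2 : 2 ≤ C.length
          · rw [if_pos h2]
            simp
          · rw [if_neg h2]
            simp
      · -- across steps
        rw [List.pairwise_map]
        refine ih.disj.imp_of_mem ?_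
        intro C D hC hD hPCD C' hC' D' hD' S hSC' hSD'
        rcases mem_of_mem_SCDstep (ih.nonempty C hC) (ih.subrange C hC) hC' hSC' with
          ⟨hN1, hSC⟩ | ⟨s, hs, hNs, rfl⟩
        · rcases mem_of_mem_SCDstep (ih.nonempty D hD) (ih.subrange D hD) hD' hSD' with
            ⟨-, hSD⟩ | ⟨t, ht, hNt, heq⟩
          · exact hPCD S hSC hSD
          · exact hN1 (heq ▸ Finset.mem_insert_self _ _)
        · rcases mem_of_mem_SCDstep (ih.nonempty D hD) (ih.subrange D hD) hD' hSD' with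
            ⟨hN2, -⟩ | ⟨t, ht, hNt, heq⟩
          · exact hN2 (Finset.mem_insert_self _ _)
          · have : s = t := by
              have := congrArg (fun u => Finset.erase u N) heq
              simpa [Finset.erase_insert hNs, Finset.erase_insert hNt] using this
            exact hPCD s hs (this ▸ ht)
    · -- cover
      intro S hS
      by_cases hN : N ∈ S
      · have hS' : S.erase N ⊆ Finset.range N := by
          intro x hx
          have hx1 := Finset.ne_of_mem_erase hx
          have hx2 := hS (Finset.mem_of_mem_erase hx)
          rw [Finset.mem_range] at hx2 ⊢
          omega
        obtain ⟨C, hC, hSC⟩ := ih.cover _ hS'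
        have hCne := ih.nonempty C hC
        have hins : S = insert N (S.erase N) := (Finset.insert_erase hN).symm
        by_cases hlast : S.erase N = C.getLast hCne
        · refine ⟨C ++ [insert N (C.getLast?.getD ∅)], ?_, ?_⟩
          · exact mem_SCD_succ.2 ⟨C, hC, List.mem_cons_self⟩
          · rw [List.getLast?_eq_getLast hCne, Option.getD_some]
            rw [List.mem_append, List.mem_singleton]
            exact Or.inr (by rw [hins, hlast])
        · have hdrop : S.erase N ∈ C.dropLast := by
            rcases (mem_iff_dropLast hCne _).1 hSC with h | h
            · exact h
            · exact absurd h hlast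
          have h2 : 2 ≤ C.length := by
            have : 0 < C.dropLast.length := List.length_pos_iff.2 (List.ne_nil_of_mem hdrop)
            rw [List.length_dropLast] at this
            have : 1 ≤ C.length := List.length_pos_iff.2 hCne
            omega
          refine ⟨(C.dropLast).map (insert N), ?_, ?_⟩
          · refine mem_SCD_succ.2 ⟨C, hC, ?_⟩
            unfold SCDstep
            rw [if_pos h2]
            simp
          · exact List.mem_map.2 ⟨_, hdrop, hins.symm⟩
      · have hS' : S ⊆ Finset.range N := by
          intro x hx
          have hx2 := hS hx
          rw [Finset.mem_range] at hx2 ⊢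
          have : x ≠ N := fun h => hN (h ▸ hx)
          omega
        obtain ⟨C, hC, hSC⟩ := ih.cover _ hS'
        refine ⟨C ++ [insert N (C.getLast?.getD ∅)], ?_, ?_⟩
        · exact mem_SCD_succ.2 ⟨C, hC, List.mem_cons_self⟩
        · exact List.mem_append.2 (Or.inl hSC)

noncomputable def midOf (N : ℕ) (C : List (Finset ℕ)) : Finset ℕ :=
  if h : ∃ S ∈ C, S.card = N / 2 then h.choose else ∅

theorem midOf_spec {N : ℕ} {C : List (Finset ℕ)} (hC : C ∈ SCD N) :
    midOf N C ∈ C ∧ (midOf N C).card = N / 2 := by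
  obtain ⟨j, hj, hcard⟩ := (scdInv N).sizes C hC
  have hlen : 1 ≤ C.length := List.length_pos_iff.2 ((scdInv N).nonempty C hC)
  have hidx : N / 2 - j < C.length := by omega
  have hex : ∃ S ∈ C, S.card = N / 2 :=
    ⟨C[N/2 - j], List.getElem_mem _, by rw [hcard _ hidx]; omega⟩
  rw [midOf, dif_pos hex]
  obtain ⟨h1, h2⟩ := hex.choose_spec
  exact ⟨h1, h2⟩

theorem SCD_length_le (N : ℕ) : (SCD N).length ≤ N.choose (N / 2) := by
  classical
  have hnd : ((SCD N).map (midOf N)).Nodup := by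
    rw [List.Nodup, List.pairwise_map]
    refine (scdInv N).disj.imp_of_mem ?_
    intro C D hC hD h hEq
    exact h _ (midOf_spec hC).1 (hEq ▸ (midOf_spec hD).1)
  calc (SCD N).length = ((SCD N).map (midOf N)).toFinset.card := by
        rw [List.toFinset_card_of_nodup hnd, List.length_map]
    _ ≤ (Finset.powersetCard (N / 2) (Finset.range N)).card := by
        apply Finset.card_le_card
        intro S hS
        rw [List.mem_toFinset, List.mem_map] at hS
        obtain ⟨C, hC, rfl⟩ := hS
        rw [Finset.mem_powersetCard]
        exact ⟨(scdInv N).subrange C hC _ (midOf_spec hC).1, (midOf_spec hC).2⟩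
    _ = N.choose (N / 2) := by rw [Finset.card_powersetCard, Finset.card_range]

def chainIdx (N : ℕ) (S : Finset ℕ) : ℕ := (SCD N).findIdx (fun C => decide (S ∈ C))

theorem chainIdx_lt {N : ℕ} {S : Finset ℕ} (h : S ⊆ Finset.range N) :
    chainIdx N S < (SCD N).length := by
  rw [chainIdx, List.findIdx_lt_length]
  obtain ⟨C, hC, hSC⟩ := (scdInv N).cover S h
  exact ⟨C, hC, by simpa using hSC⟩

theorem mem_chainIdx {N : ℕ} {S : Finset ℕ} (h : S ⊆ Finset.range N) :
    S ∈ (SCD N)[chainIdx N S]'(chainIdx_lt h) := by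
  have := List.findIdx_getElem (w := chainIdx_lt h)
  exact of_decide_eq_true this

theorem chainIdx_comparable {N : ℕ} {S T : Finset ℕ} (hS : S ⊆ Finset.range N)
    (hT : T ⊆ Finset.range N) (h : chainIdx N S = chainIdx N T) : S ⊆ T ∨ T ⊆ S := by
  have h1 := mem_chainIdx hS
  have h2 := mem_chainIdx hT
  have heq : (SCD N)[chainIdx N S]'(chainIdx_lt hS) = (SCD N)[chainIdx N T]'(chainIdx_lt hT) := by
    congr 1
  rw [heq] at h1
  exact chain_comparable ((scdInv N).chain _ (List.getElem_mem _)) h1 h2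

theorem exists_inj_into {α : Type*} {T : Finset α} {n : ℕ} (h : n ≤ T.card) :
    ∃ f : Fin n → α, Function.Injective f ∧ ∀ i, f i ∈ T := by
  obtain ⟨T', hT'sub, hT'⟩ := Finset.exists_subset_card_eq h
  refine ⟨fun i => (T'.equivFin.symm (Fin.cast hT'.symm i) : α), ?_, ?_⟩
  · intro i j hij
    have := T'.equivFin.symm.injective (Subtype.ext hij)
    simpa [Fin.ext_iff] using this
  · intro i
    exact hT'sub (T'.equivFin.symm (Fin.cast hT'.symm i)).2

def AntichainRamseyProp' (n N : ℕ) : Prop :=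
  ∀ c : Finset (Fin N) → Bool,
    ∃ (col : Bool) (f : Fin n → Finset (Fin N)),
      (∀ i j : Fin n, i ≠ j → ¬ f i ⊆ f j) ∧ ∀ i, c (f i) = col

theorem part_a_s19 (n N : ℕ) (hn : 1 ≤ n) (h : 2 * n - 1 ≤ N.choose (N / 2)) :
    AntichainRamseyProp' n N := by
  classical
  intro c
  set M := Finset.powersetCard (N / 2) (Finset.univ : Finset (Fin N)) with hM
  have hMcard : M.card = N.choose (N / 2) := by
    rw [hM, Finset.card_powersetCard, Finset.card_univ, Fintype.card_fin]
  have hsplit := Finset.card_filter_add_card_filter_not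
    (s := M) (p := fun S => c S = true)
  have hiff : ∀ S : Finset (Fin N), (¬ c S = true) ↔ c S = false := by
    intro S; cases hc : c S <;> simp
  have hneg : (M.filter (fun S => ¬ c S = true)).card = (M.filter (fun S => c S = false)).card := by
    congr 1
    apply Finset.filter_congr
    intro S _
    simpa using hiff S
  have hkey : n ≤ (M.filter (fun S => c S = true)).card ∨
      n ≤ (M.filter (fun S => c S = false)).card := by omega
  have main : ∀ col : Bool, n ≤ (M.filter (fun S => c S = col)).card →
      ∃ (col : Bool) (f : Fin n → Finset (Fin N)),
        (∀ i j : Fin n, i ≠ j → ¬ f i ⊆ f j) ∧ ∀ i, c (f i) = col := by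
    intro col hcol
    obtain ⟨f, hfinj, hfmem⟩ := exists_inj_into hcol
    refine ⟨col, f, ?_, ?_⟩
    · intro i j hij hss
      have hi := Finset.mem_filter.1 (hfmem i)
      have hj := Finset.mem_filter.1 (hfmem j)
      have hci := (Finset.mem_powersetCard_univ.1 hi.1)
      have hcj := (Finset.mem_powersetCard_univ.1 hj.1)
      exact hij (hfinj (Finset.eq_of_subset_of_card_le hss (by rw [hci, hcj])))
    · intro i
      exact (Finset.mem_filter.1 (hfmem i)).2
  rcases hkey with hk | hk
  · exact main true hk
  · exact main false hk

theorem part_b_s19 (n N : ℕ) (hn : 1 ≤ n) (h : N.choose (N / 2) ≤ 2 * n - 2) :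
    ∃ c : Finset (Fin N) → Bool,
      ¬ ∃ (col : Bool) (f : Fin n → Finset (Fin N)),
          (∀ i j : Fin n, i ≠ j → ¬ f i ⊆ f j) ∧ ∀ i, c (f i) = col := by
  classical
  refine ⟨fun S => decide (chainIdx N (S.image Fin.val) < n - 1), ?_⟩
  rintro ⟨col, f, hinc, hcol⟩
  set F : Fin n → Finset ℕ := fun i => (f i).image Fin.val with hF
  have hsub : ∀ i, F i ⊆ Finset.range N := by
    intro i x hx
    simp only [hF, Finset.mem_image] at hx
    obtain ⟨y, _, rfl⟩ := hx
    simpa [Finset.mem_range] using y.isLt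
  have hginj : Function.Injective (fun i => chainIdx N (F i)) := by
    intro i j hij
    by_contra hne
    rcases chainIdx_comparable (hsub i) (hsub j) hij with hss | hss
    · exact hinc i j hne ((Finset.image_subset_image_iff Fin.val_injective).1 hss)
    · exact hinc j i (Ne.symm hne) ((Finset.image_subset_image_iff Fin.val_injective).1 hss)
  have hlt : ∀ i, chainIdx N (F i) < (SCD N).length := fun i => chainIdx_lt (hsub i)
  have hlen := SCD_length_le N
  cases col with
  | true =>
    have hb : ∀ i, chainIdx N (F i) < n - 1 := by
      intro i
      have := hcol i
      simpa [hF] using this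
    have hcard : n ≤ n - 1 := by
      have := Fintype.card_le_of_injective
        (fun i : Fin n => (⟨chainIdx N (F i), hb i⟩ : Fin (n - 1)))
        (fun i j hij => hginj (congrArg Fin.val hij))
      simpa using this
    omega
  | false =>
    have hb : ∀ i, ¬ chainIdx N (F i) < n - 1 := by
      intro i
      have := hcol i
      simpa [hF] using this
    have hcard : n ≤ 2 * n - 2 - (n - 1) := by
      have := Fintype.card_le_of_injective
        (fun i : Fin n => (⟨chainIdx N (F i) - (n - 1),
          by have h1 := hlt i; have h2 := hb i; omega⟩ : Fin (2 * n - 2 - (n - 1))))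
        (fun i j hij => by
          have h1 := hb i
          have h2 := hb j
          have h3 := congrArg Fin.val hij
          simp only at h3
          exact hginj (by simp only; omega))
      simpa using this
    omega

/-- Every red/blue coloring of `2^[N]` contains `n` same-colored pairwise
incomparable subsets of `[N]` (a monochromatic copy of the antichain `A_n`). -/
def AntichainRamseyProp (n N : ℕ) : Prop :=
  ∀ c : Finset (Fin N) → Bool,
    ∃ (col : Bool) (f : Fin n → Finset (Fin N)),
      (∀ i j : Fin n, i ≠ j → ¬ f i ⊆ f j) ∧ ∀ i, c (f i) = col

/-- For `n ≥ 1`: (a) if `2n - 1 ≤ binom(N, ⌊N/2⌋)` then every red/blue coloring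
of `2^[N]` has a monochromatic antichain of `n` subsets; (b) if
`binom(N, ⌊N/2⌋) ≤ 2n - 2` then some red/blue coloring of `2^[N]` has none.
Hence `R(A_n, A_n) = min {N : 2n - 1 ≤ binom(N, ⌊N/2⌋)}`. -/
theorem antichain_ramsey (n : ℕ) (hn : 1 ≤ n) :
    (∀ N : ℕ, 2 * n - 1 ≤ N.choose (N / 2) → AntichainRamseyProp n N) ∧
    (∀ N : ℕ, N.choose (N / 2) ≤ 2 * n - 2 →
      ∃ c : Finset (Fin N) → Bool,
        ¬ ∃ (col : Bool) (f : Fin n → Finset (Fin N)),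
            (∀ i j : Fin n, i ≠ j → ¬ f i ⊆ f j) ∧ ∀ i, c (f i) = col) ∧
    sInf {N | AntichainRamseyProp n N} = sInf {N | 2 * n - 1 ≤ N.choose (N / 2)} := by
  have hset : {N | AntichainRamseyProp n N} = {N | 2 * n - 1 ≤ N.choose (N / 2)} := by
    ext N
    simp only [Set.mem_setOf_eq]
    constructor
    · intro hprop
      by_contra hlt
      push_neg at hlt
      have h2 : N.choose (N / 2) ≤ 2 * n - 2 := by omega
      obtain ⟨c, hc⟩ := part_b_s19 n N hn h2
      exact hc (hprop c)
    · exact fun h => part_a_s19 n N hn h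
  exact ⟨fun N h => part_a_s19 n N hn h, fun N h => part_b_s19 n N hn h, by rw [hset]⟩
end
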